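/- arXiv:1005.3970 — 12 statements merged into one kernel-verified Lean document; each statement's English description precedes it below -/
import Mathlib

section
/- Every non-Abelian quadratic Lie algebra (g,B) satisfies dim [g,g] ≥ 3, where [g,g] denotes the derived ideal of g. -/
open Module

/-- If the quotient by `Z` has dimension at most `n`, then there are `n` vectors that
together with `Z` generate everything. -/
lemma aux_gen_of_finrank_quotient_le {g : Type*} [AddCommGroup g] [Module ℂ g]
    [Module.Finite ℂ g] (Z : Submodule ℂ g) {n : ℕ} (h : finrank ℂ (g ⧸ Z) ≤ n) :
    ∃ v : Fin n → g, ∀ x : g, ∃ z ∈ Z, ∃ c : Fin n → ℂ, x = z + ∑ i, c i • v i := by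
  classical
  set Q := g ⧸ Z
  let b := Module.finBasis ℂ Q
  let v' : Fin n → Q := fun i => if h' : (i : ℕ) < finrank ℂ Q then b ⟨i, h'⟩ else 0
  have hspan : Submodule.span ℂ (Set.range v') = ⊤ := by
    rw [← top_le_iff, ← b.span_eq, Submodule.span_le]
    rintro _ ⟨j, rfl⟩
    apply Submodule.subset_span
    exact ⟨⟨(j : ℕ), lt_of_lt_of_le j.2 h⟩, by simp [v', j.2]⟩
  choose e he using fun i => Submodule.Quotient.mk_surjective Z (v' i)
  refine ⟨e, fun x => ?_⟩
  have hx : (Submodule.Quotient.mk x : Q) ∈ Submodule.span ℂ (Set.range v') := by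
    rw [hspan]; trivial
  rw [Submodule.mem_span_range_iff_exists_fun] at hx
  obtain ⟨c, hc⟩ := hx
  refine ⟨x - ∑ i, c i • e i, ?_, c, by abel⟩
  rw [← Submodule.Quotient.mk_eq_zero]
  have : (Submodule.Quotient.mk (∑ i, c i • e i) : Q) = ∑ i, c i • v' i := by
    rw [← Submodule.mkQ_apply, map_sum]
    simp [Submodule.mkQ_apply, he]
  rw [Submodule.Quotient.mk_sub, this, hc, sub_self]

/-- Every non-Abelian quadratic Lie algebra `(g,B)` satisfies
`dim [g,g] ≥ 3`, where `[g,g]` is the derived ideal of `g`. -/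
theorem derived_ideal_dim_ge_three
    {g : Type*} [LieRing g] [LieAlgebra ℂ g] [Module.Finite ℂ g]
    (B : LinearMap.BilinForm ℂ g)
    (hsymm : ∀ x y : g, B x y = B y x)
    (hnondeg : B.Nondegenerate)
    (hinv : ∀ x y z : g, B ⁅x, y⁆ z = B x ⁅y, z⁆)
    (hnonabelian : ¬ ∀ x y : g, ⁅x, y⁆ = 0) :
    3 ≤ Module.finrank ℂ ↥(LieAlgebra.derivedSeries ℂ g 1) := by
  classical
  by_contra hlt
  push_neg at hlt
  have hrefl : B.IsRefl := fun x y hxy => (hsymm y x).trans hxy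
  -- the derived ideal, as a submodule
  set D : LieIdeal ℂ g := LieAlgebra.derivedSeries ℂ g 1 with hDdef
  have hD1 : D = ⁅(⊤ : LieIdeal ℂ g), (⊤ : LieIdeal ℂ g)⁆ := by
    rw [hDdef, LieAlgebra.derivedSeries_def, LieAlgebra.derivedSeriesOfIdeal_succ,
      LieAlgebra.derivedSeriesOfIdeal_zero]
  set DS : Submodule ℂ g := D.toSubmodule with hDS
  have hDfr : finrank ℂ ↥D = finrank ℂ DS := rfl
  have hbr : ∀ x y : g, ⁅x, y⁆ ∈ DS := fun x y => by
    rw [hDS, hD1]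
    exact LieSubmodule.lie_mem_lie trivial trivial
  -- the orthogonal of the derived ideal consists of central elements
  set Z : Submodule ℂ g := B.orthogonal DS with hZ
  have hcent : ∀ z ∈ Z, ∀ y : g, ⁅y, z⁆ = 0 := by
    intro z hz y
    apply hnondeg.1
    intro n
    rw [hsymm, ← hinv]
    exact hz _ (hbr n y)
  have hcent' : ∀ z ∈ Z, ∀ y : g, ⁅z, y⁆ = 0 := by
    intro z hz y
    rw [← lie_skew, hcent z hz y, neg_zero]
  -- dimension count
  have hZfr : finrank ℂ Z = finrank ℂ g - finrank ℂ DS :=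
    LinearMap.BilinForm.finrank_orthogonal hnondeg DS
  have hDle : finrank ℂ DS ≤ finrank ℂ g := DS.finrank_le
  have hq := Z.finrank_quotient_add_finrank
  have hqD : finrank ℂ (g ⧸ Z) = finrank ℂ DS := by omega
  -- derived ideal is spanned by a single bracket
  have hq2 : finrank ℂ (g ⧸ Z) ≤ 2 := by omega
  obtain ⟨v, hv⟩ := aux_gen_of_finrank_quotient_le Z hq2
  have hspan : DS ≤ Submodule.span ℂ {⁅v 0, v 1⁆} := by
    rw [hDS, hD1, LieSubmodule.lieIdeal_oper_eq_linear_span']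
    rw [Submodule.span_le]
    rintro _ ⟨x, -, y, -, rfl⟩
    obtain ⟨z, hz, c, rfl⟩ := hv x
    obtain ⟨w, hw, d, rfl⟩ := hv y
    have : ⁅z + ∑ i, c i • v i, w + ∑ i, d i • v i⁆
        = (c 0 * d 1 - c 1 * d 0) • ⁅v 0, v 1⁆ := by
      simp only [Fin.sum_univ_two, lie_add, add_lie, lie_smul, smul_lie,
        hcent z hz, hcent' z hz, hcent w hw, hcent' w hw, lie_self,
        smul_zero, zero_add, add_zero, ← lie_skew (v 1) (v 0)]
      module
    rw [this]
    exact Submodule.smul_mem _ _ (Submodule.mem_span_singleton_self _)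
  have hD1fr : finrank ℂ DS ≤ 1 := by
    refine le_trans (Submodule.finrank_mono hspan) ?_
    refine le_trans (finrank_span_le_card _) ?_
    simp [Set.toFinset_singleton]
  -- so the quotient by the center has dimension at most 1, hence g is abelian
  have hq1 : finrank ℂ (g ⧸ Z) ≤ 1 := by omega
  obtain ⟨u, hu⟩ := aux_gen_of_finrank_quotient_le Z hq1
  apply hnonabelian
  intro x y
  obtain ⟨z, hz, c, rfl⟩ := hu x
  obtain ⟨w, hw, d, rfl⟩ := hu y
  simp [Fin.sum_univ_one, lie_add, add_lie, lie_smul, smul_lie,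
    hcent z hz, hcent' z hz, hcent w hw, hcent' w hw, lie_self]
end

section
/- Let (g,B) be a non-Abelian quadratic Lie algebra. Then there exist Lie ideals z and l of g such that: (i) g is the internal direct sum of z and l and B(z,l) = 0; (ii) z is contained in the center of g and l ≠ {0}; (iii) the restrictions of B to z × z and to l × l are nondegenerate; (iv) l is non-Abelian; (v) the intersection of the center of g with l is contained in [l,l] (i.e. the center of the quadratic Lie algebra l is totally isotropic). -/
/-- Every non-Abelian quadratic Lie algebra `(g,B)` decomposes as
`g = z ⊥⊕ l` with `z` a central ideal, `l ≠ 0` a non-Abelian ideal, the restrictions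
of `B` to `z` and `l` nondegenerate, and the center of `l` totally isotropic
(i.e. `Z(g) ⊓ l ⊆ [l,l]`). -/
theorem quadratic_decomposition
    {g : Type*} [LieRing g] [LieAlgebra ℂ g] [Module.Finite ℂ g]
    (B : LinearMap.BilinForm ℂ g)
    (hsymm : ∀ x y : g, B x y = B y x)
    (hnondeg : B.Nondegenerate)
    (hinv : ∀ x y z : g, B ⁅x, y⁆ z = B x ⁅y, z⁆)
    (hnonabelian : ¬ ∀ x y : g, ⁅x, y⁆ = 0) :
    ∃ z l : LieIdeal ℂ g,
      -- (i) internal direct sum, orthogonal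
      (z ⊓ l = ⊥ ∧ z ⊔ l = ⊤ ∧ ∀ x ∈ z, ∀ y ∈ l, B x y = 0) ∧
      -- (ii) z central, l nonzero
      (z ≤ LieAlgebra.center ℂ g ∧ l ≠ ⊥) ∧
      -- (iii) the restrictions of B to z × z and l × l are nondegenerate
      ((∀ x ∈ z, (∀ y ∈ z, B x y = 0) → x = 0) ∧
        (∀ x ∈ l, (∀ y ∈ l, B x y = 0) → x = 0)) ∧
      -- (iv) l is non-Abelian
      (∃ x ∈ l, ∃ y ∈ l, ⁅x, y⁆ ≠ 0) ∧
      -- (v) the center of l is totally isotropic: Z(g) ⊓ l ⊆ [l,l]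
      (LieAlgebra.center ℂ g ⊓ l ≤ ⁅l, l⁆) := by
  classical
  have hrefl : B.IsRefl := fun x y h => by rw [hsymm]; exact h
  have hnd' : ∀ v : g, (∀ w : g, B w v = 0) → v = 0 := by
    intro v h
    exact hnondeg.1 v fun w => by rw [hsymm]; exact h w
  set Z : Submodule ℂ g := (LieAlgebra.center ℂ g).toSubmodule with hZdef
  have hZmem : ∀ x : g, x ∈ Z ↔ ∀ y : g, ⁅y, x⁆ = 0 := fun x => Iff.rfl
  have hZlie : ∀ x ∈ Z, ∀ y : g, ⁅x, y⁆ = 0 := by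
    intro x hx y
    rw [← lie_skew, (hZmem x).mp hx y, neg_zero]
  -- radical of B restricted to Z
  set Zrad : Submodule ℂ g := Z ⊓ B.orthogonal Z with hZraddef
  -- complement of Zrad inside Z
  obtain ⟨W, hW⟩ := Submodule.exists_isCompl (Zrad.comap Z.subtype)
  set zc : Submodule ℂ g := W.map Z.subtype with hzcdef
  have hzc_le_Z : zc ≤ Z := by
    rintro x ⟨w, hw, rfl⟩; exact w.2
  have hZrad_le_Z : Zrad ≤ Z := inf_le_left
  have hsup : Zrad ⊔ zc = Z := by
    have : (Zrad.comap Z.subtype ⊔ W).map Z.subtype = Z := by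
      rw [hW.sup_eq_top, Submodule.map_top, Submodule.range_subtype]
    rwa [Submodule.map_sup, Submodule.map_comap_subtype, inf_eq_right.mpr hZrad_le_Z] at this
  have hdisj : ∀ x, x ∈ Zrad → x ∈ zc → x = 0 := by
    rintro x hx ⟨w, hw, rfl⟩
    have : w ∈ Zrad.comap Z.subtype ⊓ W := ⟨hx, hw⟩
    rw [hW.inf_eq_bot] at this
    simp [Submodule.mem_bot] at this
    simp [this]
  -- B restricted to zc is nondegenerate
  have hzc_nd_elt : ∀ x ∈ zc, (∀ y ∈ zc, B x y = 0) → x = 0 := by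
    intro x hx h
    have hxZ : x ∈ Z := hzc_le_Z hx
    have hxrad : x ∈ Zrad := by
      refine ⟨hxZ, fun n hn => ?_⟩
      obtain ⟨r, hr, w, hw, rfl⟩ := Submodule.mem_sup.mp (hsup ▸ hn)
      have h1 : B x r = 0 := hr.2 x hxZ
      have h2 : B x w = 0 := h w hw
      show B (r + w) x = 0
      rw [map_add, LinearMap.add_apply, hsymm r x, hsymm w x, h1, h2, add_zero]
    exact hdisj x hxrad hx
  have hzc_nd : (B.restrict zc).Nondegenerate := by
    refine ⟨?_, ?_⟩
    · rintro ⟨x, hx⟩ h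
      exact Subtype.ext (hzc_nd_elt x hx fun y hy => h ⟨y, hy⟩)
    · rintro ⟨x, hx⟩ h
      exact Subtype.ext (hzc_nd_elt x hx fun y hy => by
        rw [hsymm]; exact h ⟨y, hy⟩)
  set lc : Submodule ℂ g := B.orthogonal zc with hlcdef
  have hlcmem : ∀ x : g, x ∈ lc ↔ ∀ n ∈ zc, B n x = 0 := fun x => Iff.rfl
  have hcompl : IsCompl zc lc :=
    (LinearMap.BilinForm.restrict_nondegenerate_iff_isCompl_orthogonal hrefl).mp hzc_nd
  have hinf0 : zc ⊓ lc = ⊥ := hcompl.inf_eq_bot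
  have hsup0 : zc ⊔ lc = ⊤ := hcompl.sup_eq_top
  -- the Lie ideals
  have hzc_ideal : ∀ {x m : g}, m ∈ zc → ⁅x, m⁆ ∈ zc := by
    intro x m hm
    have : ⁅x, m⁆ = 0 := (hZmem m).mp (hzc_le_Z hm) x
    rw [this]; exact zc.zero_mem
  have hlc_ideal : ∀ {x m : g}, m ∈ lc → ⁅x, m⁆ ∈ lc := by
    intro x m hm n hn
    have h0 : ⁅m, n⁆ = 0 := (hZmem n).mp (hzc_le_Z hn) m
    show B n ⁅x, m⁆ = 0
    rw [hsymm, hinv, h0, map_zero]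
  set zI : LieIdeal ℂ g := { toSubmodule := zc, lie_mem := hzc_ideal } with hzIdef
  set lI : LieIdeal ℂ g := { toSubmodule := lc, lie_mem := hlc_ideal } with hlIdef
  have hmemz : ∀ x : g, x ∈ zI ↔ x ∈ zc := fun x => Iff.rfl
  have hmeml : ∀ x : g, x ∈ lI ↔ x ∈ lc := fun x => Iff.rfl
  -- z is central
  have hz_central : zI ≤ LieAlgebra.center ℂ g := fun x hx => hzc_le_Z hx
  -- sup/inf as Lie ideals
  have hIinf : zI ⊓ lI = ⊥ := by
    rw [← LieSubmodule.toSubmodule_inj, LieSubmodule.inf_toSubmodule,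
      LieSubmodule.bot_toSubmodule]
    exact hinf0
  have hIsup : zI ⊔ lI = ⊤ := by
    rw [← LieSubmodule.toSubmodule_inj, LieSubmodule.sup_toSubmodule,
      LieSubmodule.top_toSubmodule]
    exact hsup0
  -- nonabelian witnesses
  push_neg at hnonabelian
  obtain ⟨a, b, hab⟩ := hnonabelian
  -- decomposition of elements
  have hdec : ∀ v : g, ∃ n ∈ zc, ∃ y ∈ lc, v = n + y := by
    intro v
    obtain ⟨n, hn, y, hy, h⟩ := Submodule.mem_sup.mp (hsup0 ▸ Submodule.mem_top (x := v))
    exact ⟨n, hn, y, hy, h.symm⟩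
  have hbr : ∀ n ∈ zc, ∀ y : g, ∀ n' ∈ zc, ∀ y' : g,
      ⁅n + y, n' + y'⁆ = ⁅y, y'⁆ := by
    intro n hn y n' hn' y'
    have h1 : ∀ w : g, ⁅n, w⁆ = 0 := hZlie n (hzc_le_Z hn)
    have h2 : ∀ w : g, ⁅w, n'⁆ = 0 := (hZmem n').mp (hzc_le_Z hn')
    rw [add_lie, lie_add, lie_add, h1, h1, h2, add_zero, zero_add, zero_add]
  obtain ⟨na, hna, ya, hya, hadec⟩ := hdec a
  obtain ⟨nb, hnb, yb, hyb, hbdec⟩ := hdec b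
  have hyab : ⁅ya, yb⁆ ≠ 0 := by
    rw [hadec, hbdec, hbr na hna ya nb hnb yb] at hab
    exact hab
  have hya0 : ya ≠ 0 := fun h => hyab (by rw [h, zero_lie])
  -- the orthogonal of the center is the derived ideal
  set D : LieIdeal ℂ g := ⁅(⊤ : LieIdeal ℂ g), (⊤ : LieIdeal ℂ g)⁆ with hDdef
  have hDorth : B.orthogonal (LieSubmodule.toSubmodule D) = Z := by
    ext x
    constructor
    · intro h
      rw [hZmem]
      intro y
      apply hnondeg.1
      intro w
      rw [hsymm, ← hinv]
      have : (⁅w, y⁆ : g) ∈ D := LieSubmodule.lie_mem_lie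
        (LieSubmodule.mem_top w) (LieSubmodule.mem_top y)
      exact h ⁅w, y⁆ ((LieSubmodule.mem_toSubmodule _).mpr this)
    · intro hx d hd
      show B d x = 0
      have hle : LieSubmodule.toSubmodule D ≤ LinearMap.ker (B.flip x) := by
        rw [LieSubmodule.lieIdeal_oper_eq_linear_span']
        rw [Submodule.span_le]
        rintro m ⟨u, -, v, -, rfl⟩
        simp only [SetLike.mem_coe, LinearMap.mem_ker]
        show B ⁅u, v⁆ x = 0
        rw [hinv, (hZmem x).mp hx v, map_zero]
      simpa using hle hd
  have hZorth : B.orthogonal Z = LieSubmodule.toSubmodule D := by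
    rw [← hDorth, LinearMap.BilinForm.orthogonal_orthogonal hnondeg hrefl]
  -- derived ideal equals [l,l]
  have hD_eq : D = ⁅lI, lI⁆ := by
    have hz_lie : ∀ N : LieIdeal ℂ g, ⁅zI, N⁆ = ⊥ := by
      intro N
      rw [eq_bot_iff]
      rw [LieSubmodule.lie_le_iff]
      intro x hx m _
      have : ⁅x, m⁆ = 0 := hZlie x (hzc_le_Z hx) m
      rw [this]; exact (⊥ : LieIdeal ℂ g).zero_mem
    have hlz_lie : ⁅lI, zI⁆ = ⊥ := by
      rw [LieSubmodule.lie_comm]; exact hz_lie lI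
    rw [hDdef, ← hIsup, LieSubmodule.sup_lie, hz_lie, bot_sup_eq,
      LieSubmodule.lie_sup, hlz_lie, bot_sup_eq]
  refine ⟨zI, lI, ⟨hIinf, hIsup, ?_⟩, ⟨hz_central, ?_⟩, ⟨hzc_nd_elt, ?_⟩, ?_, ?_⟩
  · -- orthogonality
    intro x hx y hy
    exact hy x hx
  · -- l ≠ ⊥
    intro h
    have hyal : ya ∈ lI := hya
    rw [h] at hyal
    exact hya0 ((LieSubmodule.mem_bot _).mp hyal)
  · -- B nondegenerate on l
    intro x hx h
    apply hnondeg.1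
    intro w
    obtain ⟨n, hn, y, hy, rfl⟩ := hdec w
    have h1 : B x n = 0 := by rw [hsymm]; exact hx n hn
    have h2 : B x y = 0 := h y hy
    rw [map_add, h1, h2, add_zero]
  · -- l nonabelian
    exact ⟨ya, hya, yb, hyb, hyab⟩
  · -- center of l totally isotropic
    intro x hx
    obtain ⟨hxZ, hxl⟩ := hx
    have hxZ' : x ∈ Z := hxZ
    -- x ∈ Zrad
    obtain ⟨r, hr, w, hw, hxrw⟩ := Submodule.mem_sup.mp (hsup ▸ hxZ')
    have hrlc : r ∈ lc := by
      intro n hn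
      exact hr.2 n (hzc_le_Z hn)
    have hw0 : w = 0 := by
      have hwlc : w ∈ lc := by
        have : w = x - r := by rw [← hxrw]; abel
        rw [this]
        exact lc.sub_mem hxl hrlc
      have : w ∈ zc ⊓ lc := ⟨hw, hwlc⟩
      rw [hinf0] at this
      exact this
    have hxrad : x ∈ Zrad := by rw [← hxrw, hw0, add_zero]; exact hr
    have hxD : x ∈ LieSubmodule.toSubmodule D := by
      rw [← hZorth]
      intro n hn
      show B n x = 0
      exact hxrad.2 n hn
    rw [← hD_eq]
    exact (LieSubmodule.mem_toSubmodule _).mp hxD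
end

section
/- Let (g1,B1) and (g2,B2) be non-Abelian quadratic Lie algebras, and let g = g1 × g2 be the product Lie algebra equipped with the bilinear form B((x1,x2),(y1,y2)) = B1(x1,y1) + B2(x2,y2). Then (g,B) is a quadratic Lie algebra and dup(g) = 0, i.e. g is ordinary. -/
/-- The space of linear functionals `α` on `g` with `α ∧ I = 0`, where
`I(X,Y,Z) = B([X,Y],Z)` is the canonical 3-form of the quadratic Lie algebra `(g,B)`. -/
def dupSubmodule {g : Type*} [LieRing g] [LieAlgebra ℂ g]
    (B : LinearMap.BilinForm ℂ g) : Submodule ℂ (Module.Dual ℂ g) where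
  carrier := {α | ∀ X Y Z T : g,
    α X * B ⁅Y, Z⁆ T - α Y * B ⁅X, Z⁆ T + α Z * B ⁅X, Y⁆ T - α T * B ⁅X, Y⁆ Z = 0}
  add_mem' := by
    intro a b ha hb X Y Z T
    have h1 := ha X Y Z T
    have h2 := hb X Y Z T
    simp only [LinearMap.add_apply]
    linear_combination h1 + h2
  zero_mem' := by intro X Y Z T; simp
  smul_mem' := by
    intro c a ha X Y Z T
    have h := ha X Y Z T
    simp only [LinearMap.smul_apply, smul_eq_mul]
    linear_combination c * h

/-- The dup-number of a quadratic Lie algebra `(g,B)`: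
the dimension of `{α ∈ g* | α ∧ I = 0}`. -/
noncomputable def dup {g : Type*} [LieRing g] [LieAlgebra ℂ g]
    (B : LinearMap.BilinForm ℂ g) : ℕ :=
  Module.finrank ℂ (dupSubmodule B)

section Prod

variable {g1 g2 : Type*} [LieRing g1] [LieAlgebra ℂ g1] [LieRing g2] [LieAlgebra ℂ g2]

/-- The product Lie ring structure on `g1 × g2`, with bracket computed componentwise. -/
instance Prod.instLieRingOfProd : LieRing (g1 × g2) where
  bracket x y := (⁅x.1, y.1⁆, ⁅x.2, y.2⁆)
  add_lie x y z := by
    show (⁅x.1 + y.1, z.1⁆, ⁅x.2 + y.2, z.2⁆) =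
      ((⁅x.1, z.1⁆, ⁅x.2, z.2⁆) + (⁅y.1, z.1⁆, ⁅y.2, z.2⁆) : g1 × g2)
    rw [Prod.mk_add_mk, add_lie, add_lie]
  lie_add x y z := by
    show (⁅x.1, y.1 + z.1⁆, ⁅x.2, y.2 + z.2⁆) =
      ((⁅x.1, y.1⁆, ⁅x.2, y.2⁆) + (⁅x.1, z.1⁆, ⁅x.2, z.2⁆) : g1 × g2)
    rw [Prod.mk_add_mk, lie_add, lie_add]
  lie_self x := by
    show (⁅x.1, x.1⁆, ⁅x.2, x.2⁆) = (0 : g1 × g2)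
    simp
  leibniz_lie x y z := by
    show (⁅x.1, ⁅y.1, z.1⁆⁆, ⁅x.2, ⁅y.2, z.2⁆⁆) =
      ((⁅⁅x.1, y.1⁆, z.1⁆, ⁅⁅x.2, y.2⁆, z.2⁆) + (⁅y.1, ⁅x.1, z.1⁆⁆, ⁅y.2, ⁅x.2, z.2⁆⁆) : g1 × g2)
    rw [Prod.mk_add_mk, ← leibniz_lie, ← leibniz_lie]

/-- The product Lie algebra structure on `g1 × g2`. -/
instance Prod.instLieAlgebraOfProd : LieAlgebra ℂ (g1 × g2) where
  lie_smul t x y := by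
    show (⁅x.1, t • y.1⁆, ⁅x.2, t • y.2⁆) = t • ((⁅x.1, y.1⁆, ⁅x.2, y.2⁆) : g1 × g2)
    rw [Prod.smul_mk, lie_smul, lie_smul]

/-- The orthogonal direct sum of the bilinear forms `B1` and `B2` on the product `g1 × g2`:
`B((x1,x2),(y1,y2)) = B1(x1,y1) + B2(x2,y2)`. -/
noncomputable def prodForm (B1 : LinearMap.BilinForm ℂ g1) (B2 : LinearMap.BilinForm ℂ g2) :
    LinearMap.BilinForm ℂ (g1 × g2) :=
  B1.comp (LinearMap.fst ℂ g1 g2) (LinearMap.fst ℂ g1 g2) +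
    B2.comp (LinearMap.snd ℂ g1 g2) (LinearMap.snd ℂ g1 g2)

end Prod

lemma prodForm_apply {g1 g2 : Type*} [LieRing g1] [LieAlgebra ℂ g1] [LieRing g2] [LieAlgebra ℂ g2]
    (B1 : LinearMap.BilinForm ℂ g1) (B2 : LinearMap.BilinForm ℂ g2) (x y : g1 × g2) :
    prodForm B1 B2 x y = B1 x.1 y.1 + B2 x.2 y.2 := rfl

lemma prod_bracket {g1 g2 : Type*} [LieRing g1] [LieAlgebra ℂ g1] [LieRing g2] [LieAlgebra ℂ g2]
    (x y : g1 × g2) : ⁅x, y⁆ = (⁅x.1, y.1⁆, ⁅x.2, y.2⁆) := rfl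

/-- The orthogonal direct sum of two non-Abelian quadratic Lie algebras
`(g1,B1)` and `(g2,B2)` is a quadratic Lie algebra and is ordinary: `dup(g1 × g2) = 0`. -/
theorem prod_of_nonabelian_is_ordinary
    {g1 g2 : Type*} [LieRing g1] [LieAlgebra ℂ g1] [Module.Finite ℂ g1]
    [LieRing g2] [LieAlgebra ℂ g2] [Module.Finite ℂ g2]
    (B1 : LinearMap.BilinForm ℂ g1) (B2 : LinearMap.BilinForm ℂ g2)
    (hsymm1 : ∀ x y : g1, B1 x y = B1 y x)
    (hnondeg1 : B1.Nondegenerate)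
    (hinv1 : ∀ x y z : g1, B1 ⁅x, y⁆ z = B1 x ⁅y, z⁆)
    (hnonabelian1 : ¬ ∀ x y : g1, ⁅x, y⁆ = 0)
    (hsymm2 : ∀ x y : g2, B2 x y = B2 y x)
    (hnondeg2 : B2.Nondegenerate)
    (hinv2 : ∀ x y z : g2, B2 ⁅x, y⁆ z = B2 x ⁅y, z⁆)
    (hnonabelian2 : ¬ ∀ x y : g2, ⁅x, y⁆ = 0) :
    (∀ x y : g1 × g2, prodForm B1 B2 x y = prodForm B1 B2 y x) ∧
    (prodForm B1 B2).Nondegenerate ∧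
    (∀ x y z : g1 × g2, prodForm B1 B2 ⁅x, y⁆ z = prodForm B1 B2 x ⁅y, z⁆) ∧
    dup (prodForm B1 B2) = 0 := by
  refine ⟨?_, ?_, ?_, ?_⟩
  · intro x y
    simp only [prodForm_apply]
    rw [hsymm1, hsymm2]
  · have hsep : (prodForm B1 B2).SeparatingLeft := by
      intro x hx
      have h1 : x.1 = 0 := by
        apply hnondeg1.1
        intro y
        have := hx (y, 0)
        simpa [prodForm_apply] using this
      have h2 : x.2 = 0 := by
        apply hnondeg2.1
        intro y
        have := hx (0, y)
        simpa [prodForm_apply] using this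
      exact Prod.ext h1 h2
    refine ⟨hsep, fun x hx => hsep x (fun y => ?_)⟩
    rw [← hx y]
    simp only [prodForm_apply]
    rw [hsymm1, hsymm2]
  · intro x y z
    simp only [prodForm_apply, prod_bracket]
    rw [hinv1, hinv2]
  · have key : dupSubmodule (prodForm B1 B2) = ⊥ := by
      rw [eq_bot_iff]
      intro α hα
      push_neg at hnonabelian1 hnonabelian2
      obtain ⟨x1, y1, hxy1⟩ := hnonabelian1
      obtain ⟨x2, y2, hxy2⟩ := hnonabelian2
      obtain ⟨z1, hz1⟩ : ∃ z, B1 ⁅x1, y1⁆ z ≠ 0 := by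
        by_contra h
        push_neg at h
        exact hxy1 (hnondeg1.1 _ h)
      obtain ⟨z2, hz2⟩ : ∃ z, B2 ⁅x2, y2⁆ z ≠ 0 := by
        by_contra h
        push_neg at h
        exact hxy2 (hnondeg2.1 _ h)
      have h2 : ∀ t : g2, α (0, t) = 0 := by
        intro t
        have := hα (x1, 0) (y1, 0) (z1, 0) (0, t)
        simp only [prod_bracket, prodForm_apply] at this
        simp only [lie_zero, zero_lie, map_zero, LinearMap.zero_apply, add_zero, zero_add,
          mul_zero] at this
        have : α (0, t) * B1 ⁅x1, y1⁆ z1 = 0 := by linear_combination -this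
        exact (mul_eq_zero.mp this).resolve_right hz1
      have h1 : ∀ s : g1, α (s, 0) = 0 := by
        intro s
        have := hα (0, x2) (0, y2) (0, z2) (s, 0)
        simp only [prod_bracket, prodForm_apply] at this
        simp only [lie_zero, zero_lie, map_zero, LinearMap.zero_apply, add_zero, zero_add,
          mul_zero] at this
        have : α (s, 0) * B2 ⁅x2, y2⁆ z2 = 0 := by linear_combination -this
        exact (mul_eq_zero.mp this).resolve_right hz2
      have : α = 0 := by
        apply LinearMap.ext; intro x
        have : (x : g1 × g2) = (x.1, 0) + (0, x.2) := by simp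
        rw [show (x : g1 × g2) = (x.1, 0) + (0, x.2) by simp, map_add, h1, h2, add_zero]
        rfl
      simp [this]
    rw [dup, key]
    exact finrank_bot ℂ _
end

section
/- Let (g,B) be a singular quadratic Lie algebra. Then g is reduced (g ≠ {0} and its center Z(g) is totally isotropic, i.e. B(z,z') = 0 for all z,z' in Z(g)) if and only if g is indecomposable, meaning: whenever g is the internal direct sum of two Lie ideals a and b with B(a,b) = 0, one has a = {0} or b = {0}. -/
theorem aux_vanish {g : Type*} [LieRing g] [LieAlgebra ℂ g]
    (B : LinearMap.BilinForm ℂ g)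
    (α : Module.Dual ℂ g) (hα : α ∈ dupSubmodule B)
    (s t : LieIdeal ℂ g)
    (horth : ∀ x ∈ s, ∀ y ∈ t, B x y = 0)
    (X Y Z : g) (hY : Y ∈ s) (hZ : Z ∈ s)
    (hBZ : B ⁅X, Y⁆ Z ≠ 0) : ∀ T ∈ t, α T = 0 := by
  intro T hT
  have h := hα X Y Z T
  have e1 : B ⁅Y, Z⁆ T = 0 := horth _ (s.lie_mem hZ) T hT
  have e2 : B ⁅X, Z⁆ T = 0 := horth _ (s.lie_mem hZ) T hT
  have e3 : B ⁅X, Y⁆ T = 0 := horth _ (s.lie_mem hY) T hT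
  rw [e1, e2, e3] at h
  have : α T * B ⁅X, Y⁆ Z = 0 := by linear_combination -h
  rcases mul_eq_zero.mp this with h' | h'
  · exact h'
  · exact absurd h' hBZ

theorem aux_abelian {g : Type*} [LieRing g] [LieAlgebra ℂ g]
    (B : LinearMap.BilinForm ℂ g)
    (hnondeg : B.Nondegenerate)
    (s t : LieIdeal ℂ g)
    (hinf : ∀ x : g, x ∈ s → x ∈ t → x = 0)
    (hsup : ∀ w : g, ∃ ws ∈ s, ∃ wt ∈ t, ws + wt = w)
    (horth : ∀ x ∈ s, ∀ y ∈ t, B x y = 0)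
    (hiso : ∀ x ∈ LieAlgebra.center ℂ g, ∀ y ∈ LieAlgebra.center ℂ g, B x y = 0)
    (hs : s ≠ ⊥) (habel : ∀ x ∈ s, ∀ y ∈ s, ⁅x, y⁆ = (0 : g)) : False := by
  have hcent : ∀ x ∈ s, x ∈ LieAlgebra.center ℂ g := by
    intro x hx
    rw [LieAlgebra.center, LieModule.mem_maxTrivSubmodule]
    intro u
    obtain ⟨us, hus, ut, hut, rfl⟩ := hsup u
    have h1 : ⁅us, x⁆ = (0 : g) := habel us hus x hx
    have h2 : ⁅ut, x⁆ = (0 : g) := by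
      apply hinf
      · exact s.lie_mem hx
      · have h3 : ⁅x, ut⁆ ∈ t := t.lie_mem hut
        have : ⁅ut, x⁆ = -⁅x, ut⁆ := (lie_skew ut x).symm
        rw [this]
        exact t.neg_mem h3
    rw [add_lie, h1, h2, add_zero]
  obtain ⟨x, hx, hx0⟩ : ∃ x ∈ s, x ≠ (0 : g) := by
    by_contra hc
    push_neg at hc
    exact hs (LieSubmodule.eq_bot_iff s |>.mpr hc)
  obtain ⟨y, hy⟩ : ∃ y : g, B x y ≠ 0 := by
    by_contra hc
    push_neg at hc
    exact hx0 (hnondeg.1 x hc)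
  obtain ⟨ys, hys, yt, hyt, rfl⟩ := hsup y
  have hbt : B x yt = 0 := horth x hx yt hyt
  have : B x ys ≠ 0 := by
    intro h; apply hy; simp [h, hbt]
  exact this (hiso x (hcent x hx) ys (hcent ys hys))

/-- A singular quadratic Lie algebra is reduced (nonzero with totally
isotropic center) if and only if it is indecomposable. -/
theorem singular_reduced_iff_indecomposable
    {g : Type*} [LieRing g] [LieAlgebra ℂ g] [Module.Finite ℂ g]
    (B : LinearMap.BilinForm ℂ g)
    (hsymm : ∀ x y : g, B x y = B y x)
    (hnondeg : B.Nondegenerate)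
    (hinv : ∀ x y z : g, B ⁅x, y⁆ z = B x ⁅y, z⁆)
    (hnonabelian : ¬ ∀ x y : g, ⁅x, y⁆ = 0)
    (hsingular : 1 ≤ dup B) :
    (Nontrivial g ∧
        ∀ x ∈ LieAlgebra.center ℂ g, ∀ y ∈ LieAlgebra.center ℂ g, B x y = 0) ↔
      (∀ a b : LieIdeal ℂ g, a ⊓ b = ⊥ → a ⊔ b = ⊤ →
        (∀ x ∈ a, ∀ y ∈ b, B x y = 0) → a = ⊥ ∨ b = ⊥) := by
  have hnontriv : Nontrivial g := by
    push_neg at hnonabelian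
    obtain ⟨x, y, hxy⟩ := hnonabelian
    exact ⟨⁅x, y⁆, 0, hxy⟩
  constructor
  · rintro ⟨-, hiso⟩ a b hinf hsup horth
    by_contra hcon
    push_neg at hcon
    obtain ⟨ha, hb⟩ := hcon
    -- decomposition and intersection
    have hdec : ∀ w : g, ∃ wa ∈ a, ∃ wb ∈ b, wa + wb = w := by
      intro w
      have hw : w ∈ a ⊔ b := hsup ▸ LieSubmodule.mem_top w
      exact (LieSubmodule.mem_sup a b w).mp hw
    have hzero : ∀ x : g, x ∈ a → x ∈ b → x = 0 := by
      intro x h1 h2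
      have : x ∈ a ⊓ b := ⟨h1, h2⟩
      rw [hinf] at this
      exact (LieSubmodule.mem_bot x).mp this
    have horth' : ∀ x ∈ b, ∀ y ∈ a, B x y = 0 := by
      intro x hx y hy; rw [hsymm]; exact horth y hy x hx
    have hdec' : ∀ w : g, ∃ wb ∈ b, ∃ wa ∈ a, wb + wa = w := by
      intro w
      obtain ⟨wa, h1, wb, h2, h3⟩ := hdec w
      exact ⟨wb, h2, wa, h1, by rw [add_comm]; exact h3⟩
    by_cases habel : ∀ x ∈ a, ∀ y ∈ a, ⁅x, y⁆ = (0 : g)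
    · exact aux_abelian B hnondeg a b hzero hdec horth hiso ha habel
    by_cases hbbel : ∀ x ∈ b, ∀ y ∈ b, ⁅x, y⁆ = (0 : g)
    · exact aux_abelian B hnondeg b a (fun x h1 h2 => hzero x h2 h1) hdec' horth' hiso hb hbbel
    push_neg at habel hbbel
    obtain ⟨X, hX, Y, hY, hXY⟩ := habel
    obtain ⟨X', hX', Y', hY', hXY'⟩ := hbbel
    -- find Z in a with B ⁅X,Y⁆ Z ≠ 0
    obtain ⟨Z, hZ, hBZ⟩ : ∃ Z ∈ a, B ⁅X, Y⁆ Z ≠ 0 := by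
      obtain ⟨W, hW⟩ : ∃ W : g, B ⁅X, Y⁆ W ≠ 0 := by
        by_contra hc; push_neg at hc
        exact hXY (hnondeg.1 _ hc)
      obtain ⟨wa, h1, wb, h2, rfl⟩ := hdec W
      refine ⟨wa, h1, fun h => hW ?_⟩
      have : B ⁅X, Y⁆ wb = 0 := horth _ (a.lie_mem hY) wb h2
      simp [h, this]
    obtain ⟨Z', hZ', hBZ'⟩ : ∃ Z' ∈ b, B ⁅X', Y'⁆ Z' ≠ 0 := by
      obtain ⟨W, hW⟩ : ∃ W : g, B ⁅X', Y'⁆ W ≠ 0 := by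
        by_contra hc; push_neg at hc
        exact hXY' (hnondeg.1 _ hc)
      obtain ⟨wa, h1, wb, h2, rfl⟩ := hdec W
      refine ⟨wb, h2, fun h => hW ?_⟩
      have : B ⁅X', Y'⁆ wa = 0 := horth' _ (b.lie_mem hY') wa h1
      simp [h, this]
    -- get a nonzero α in dupSubmodule
    have hfd : FiniteDimensional ℂ g := inferInstance
    have hnt : Nontrivial (dupSubmodule B) := by
      have h0 : 0 < Module.finrank ℂ (dupSubmodule B) := hsingular
      exact Module.nontrivial_of_finrank_pos h0
    obtain ⟨α', hα'⟩ := exists_ne (0 : dupSubmodule B)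
    have hmem : (α' : Module.Dual ℂ g) ∈ dupSubmodule B := α'.2
    have hαne : (α' : Module.Dual ℂ g) ≠ 0 := by
      intro h
      exact hα' (Subtype.ext h)
    set α : Module.Dual ℂ g := (α' : Module.Dual ℂ g)
    have hvb : ∀ T ∈ b, α T = 0 := aux_vanish B α hmem a b horth X Y Z hY hZ hBZ
    have hva : ∀ T ∈ a, α T = 0 := aux_vanish B α hmem b a horth' X' Y' Z' hY' hZ' hBZ'
    apply hαne
    ext w
    obtain ⟨wa, h1, wb, h2, rfl⟩ := hdec w
    simp [hva wa h1, hvb wb h2]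
  · intro hind
    refine ⟨hnontriv, ?_⟩
    by_contra hc
    push_neg at hc
    obtain ⟨x, hx, y, hy, hxy⟩ := hc
    -- get z central with B z z ≠ 0
    obtain ⟨z, hz, hzz⟩ : ∃ z ∈ LieAlgebra.center ℂ g, B z z ≠ 0 := by
      by_cases h1 : B x x ≠ 0
      · exact ⟨x, hx, h1⟩
      by_cases h2 : B y y ≠ 0
      · exact ⟨y, hy, h2⟩
      push_neg at h1 h2
      refine ⟨x + y, (LieAlgebra.center ℂ g).add_mem hx hy, ?_⟩
      have e : B (x + y) (x + y) = B x x + B x y + (B y x + B y y) := by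
        simp only [map_add, LinearMap.add_apply]; ring
      rw [e, h1, h2, hsymm y x]
      intro h
      apply hxy
      have : (2 : ℂ) * B x y = 0 := by linear_combination h
      simpa using this
    have hzcent : ∀ u : g, ⁅u, z⁆ = 0 :=
      (LieModule.mem_maxTrivSubmodule ℂ g g z).mp hz
    have hz0 : z ≠ 0 := by
      intro h; apply hzz; simp [h]
    -- ideals
    let a : LieIdeal ℂ g :=
      { toSubmodule := Submodule.span ℂ {z}
        lie_mem := by
          intro u m hm
          obtain ⟨c, rfl⟩ := Submodule.mem_span_singleton.mp hm
          have : ⁅u, c • z⁆ = c • ⁅u, z⁆ := lie_smul c u z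
          rw [this, hzcent u, smul_zero]
          exact Submodule.zero_mem _ }
    let b : LieIdeal ℂ g :=
      { toSubmodule := LinearMap.ker (B z)
        lie_mem := by
          intro u m hm
          have hm' : B z m = 0 := hm
          have : B z ⁅u, m⁆ = 0 := by
            rw [hsymm, hinv]
            have : ⁅m, z⁆ = (0 : g) := hzcent m
            rw [this, map_zero]
          exact this }
    have hamem : ∀ w : g, w ∈ a ↔ ∃ c : ℂ, c • z = w := by
      intro w; exact Submodule.mem_span_singleton
    have hbmem : ∀ w : g, w ∈ b ↔ B z w = 0 := fun w => Iff.rfl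
    have hinfab : a ⊓ b = ⊥ := by
      rw [LieSubmodule.eq_bot_iff]
      rintro m ⟨h1, h2⟩
      obtain ⟨c, rfl⟩ := (hamem m).mp h1
      have : B z (c • z) = 0 := (hbmem _).mp h2
      rw [map_smul, smul_eq_mul] at this
      rcases mul_eq_zero.mp this with h | h
      · rw [h, zero_smul]
      · exact absurd h hzz
    have hsupab : a ⊔ b = ⊤ := by
      ext w
      simp only [LieSubmodule.mem_top, iff_true]
      have h1 : (B z w / B z z) • z ∈ a := (hamem _).mpr ⟨_, rfl⟩
      have h2 : w - (B z w / B z z) • z ∈ b := by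
        rw [hbmem]
        rw [map_sub, map_smul, smul_eq_mul]
        field_simp; ring
      have := add_mem
        ((LieSubmodule.mem_sup a b _).mpr ⟨_, h1, 0, b.zero_mem, add_zero _⟩)
        ((LieSubmodule.mem_sup a b _).mpr ⟨0, a.zero_mem, _, h2, zero_add _⟩)
      simpa using this
    have horthab : ∀ x ∈ a, ∀ y ∈ b, B x y = 0 := by
      intro u hu v hv
      obtain ⟨c, rfl⟩ := (hamem u).mp hu
      have : B z v = 0 := (hbmem v).mp hv
      rw [map_smul]
      simp [this]
    rcases hind a b hinfab hsupab horthab with h | h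
    · apply hz0
      have : z ∈ a := (hamem z).mpr ⟨1, one_smul ℂ z⟩
      rw [h] at this
      exact (LieSubmodule.mem_bot z).mp this
    · apply hnonabelian
      intro u v
      have hu : u = (B z u / B z z) • z := by
        have h2 : u - (B z u / B z z) • z ∈ b := by
          rw [hbmem, map_sub, map_smul, smul_eq_mul]
          field_simp; ring
        rw [h] at h2
        have h3 := (LieSubmodule.mem_bot _).mp h2
        exact (sub_eq_zero.mp h3)
      have hzv : ⁅z, v⁆ = (0 : g) := by
        rw [← lie_skew z v, hzcent v, neg_zero]
      rw [hu, smul_lie, hzv, smul_zero]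
end

section
/- Every non-Abelian quadratic Lie algebra (g,B) with dim g ≤ 5 is singular, i.e. dup(g) ≥ 1. -/
section AuxWedge

variable {g : Type*} [LieRing g] [LieAlgebra ℂ g]

theorem hsk_aux (B : LinearMap.BilinForm ℂ g) (X Y Z : g) :
    B ⁅X, Y⁆ Z = - B ⁅Y, X⁆ Z := by
  rw [← lie_skew X Y, map_neg, LinearMap.neg_apply]

theorem hsk2_aux (B : LinearMap.BilinForm ℂ g)
    (hinv : ∀ x y z : g, B ⁅x, y⁆ z = B x ⁅y, z⁆) (X Y Z : g) :
    B ⁅X, Y⁆ Z = - B ⁅X, Z⁆ Y := by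
  rw [hinv, hinv, ← lie_skew Y Z, map_neg]

/-- The wedge `α ∧ I` of a linear functional with the canonical 3-form, as an
alternating 4-linear map. -/
noncomputable def wedgeForm (B : LinearMap.BilinForm ℂ g)
    (hinv : ∀ x y z : g, B ⁅x, y⁆ z = B x ⁅y, z⁆)
    (α : Module.Dual ℂ g) : g [⋀^Fin 4]→ₗ[ℂ] ℂ where
  toFun v := α (v 0) * B ⁅v 1, v 2⁆ (v 3) - α (v 1) * B ⁅v 0, v 2⁆ (v 3)
      + α (v 2) * B ⁅v 0, v 1⁆ (v 3) - α (v 3) * B ⁅v 0, v 1⁆ (v 2)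
  map_update_add' := by
    intro dec m i x y
    have hd : dec = instDecidableEqFin 4 := Subsingleton.elim _ _
    subst hd
    fin_cases i <;>
      simp [Function.update_apply, map_add, add_lie, lie_add] <;> ring
  map_update_smul' := by
    intro dec m i c x
    have hd : dec = instDecidableEqFin 4 := Subsingleton.elim _ _
    subst hd
    fin_cases i <;>
      simp [Function.update_apply, map_smul, smul_lie, lie_smul] <;> ring
  map_eq_zero_of_eq' := by
    intro v i j h hij
    show α (v 0) * B ⁅v 1, v 2⁆ (v 3) - α (v 1) * B ⁅v 0, v 2⁆ (v 3)
      + α (v 2) * B ⁅v 0, v 1⁆ (v 3) - α (v 3) * B ⁅v 0, v 1⁆ (v 2) = 0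
    have hsk : ∀ X Y Z : g, B ⁅X, Y⁆ Z = - B ⁅Y, X⁆ Z := hsk_aux B
    have hsk2 : ∀ X Y Z : g, B ⁅X, Y⁆ Z = - B ⁅X, Z⁆ Y := hsk2_aux B hinv
    fin_cases i <;> fin_cases j <;>
    first
    | exact absurd rfl hij
    | (rw [show v 0 = v 1 from h]; linear_combination (1/2) * (α (v 2)) * hsk (v 1) (v 1) (v 3) - (1/2) * (α (v 3)) * hsk (v 1) (v 1) (v 2))
    | (rw [show v 0 = v 2 from h]; linear_combination - (1/2) * (α (v 1)) * hsk (v 2) (v 2) (v 3) + (α (v 2)) * hsk (v 1) (v 2) (v 3) - (α (v 3)) * hsk (v 1) (v 2) (v 2) + (1/2) * (α (v 3)) * hsk2 (v 1) (v 2) (v 2))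
    | (rw [show v 0 = v 3 from h]; linear_combination - (α (v 1)) * hsk (v 2) (v 3) (v 3) + (1/2) * (α (v 1)) * hsk2 (v 2) (v 3) (v 3) + (α (v 2)) * hsk (v 1) (v 3) (v 3) - (1/2) * (α (v 2)) * hsk2 (v 1) (v 3) (v 3) + (α (v 3)) * hsk2 (v 1) (v 2) (v 3) - (α (v 3)) * hsk (v 1) (v 3) (v 2))
    | (rw [show v 1 = v 0 from h]; linear_combination (1/2) * (α (v 2)) * hsk (v 0) (v 0) (v 3) - (1/2) * (α (v 3)) * hsk (v 0) (v 0) (v 2))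
    | (rw [show v 1 = v 2 from h]; linear_combination (1/2) * (α (v 0)) * hsk (v 2) (v 2) (v 3) - (1/2) * (α (v 3)) * hsk2 (v 0) (v 2) (v 2))
    | (rw [show v 1 = v 3 from h]; linear_combination (α (v 0)) * hsk (v 2) (v 3) (v 3) - (1/2) * (α (v 0)) * hsk2 (v 2) (v 3) (v 3) + (1/2) * (α (v 2)) * hsk2 (v 0) (v 3) (v 3) - (α (v 3)) * hsk2 (v 0) (v 2) (v 3))
    | (rw [show v 2 = v 0 from h]; linear_combination (α (v 0)) * hsk (v 0) (v 1) (v 3) - (1/2) * (α (v 1)) * hsk (v 0) (v 0) (v 3) + (1/2) * (α (v 3)) * hsk (v 0) (v 0) (v 1) - (α (v 3)) * hsk2 (v 0) (v 0) (v 1))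
    | (rw [show v 2 = v 1 from h]; linear_combination (1/2) * (α (v 0)) * hsk (v 1) (v 1) (v 3) - (1/2) * (α (v 3)) * hsk2 (v 0) (v 1) (v 1))
    | (rw [show v 2 = v 3 from h]; linear_combination (1/2) * (α (v 0)) * hsk2 (v 1) (v 3) (v 3) - (1/2) * (α (v 1)) * hsk2 (v 0) (v 3) (v 3))
    | (rw [show v 3 = v 0 from h]; linear_combination - (α (v 0)) * hsk (v 0) (v 1) (v 2) + (α (v 0)) * hsk2 (v 1) (v 0) (v 2) + (1/2) * (α (v 1)) * hsk (v 0) (v 0) (v 2) - (α (v 1)) * hsk2 (v 0) (v 0) (v 2) - (1/2) * (α (v 2)) * hsk (v 0) (v 0) (v 1) + (α (v 2)) * hsk2 (v 0) (v 0) (v 1))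
    | (rw [show v 3 = v 1 from h]; linear_combination - (1/2) * (α (v 0)) * hsk (v 1) (v 1) (v 2) + (α (v 0)) * hsk2 (v 1) (v 1) (v 2) - (α (v 1)) * hsk2 (v 0) (v 1) (v 2) + (1/2) * (α (v 2)) * hsk2 (v 0) (v 1) (v 1))
    | (rw [show v 3 = v 2 from h]; linear_combination (1/2) * (α (v 0)) * hsk2 (v 1) (v 2) (v 2) - (1/2) * (α (v 1)) * hsk2 (v 0) (v 2) (v 2))

/-- An alternating 4-form vanishing on all strictly monotone tuples of basis vectors
vanishes identically. -/
theorem alt_ext_zero {n : ℕ} (e : Module.Basis (Fin n) ℂ g) (f : g [⋀^Fin 4]→ₗ[ℂ] ℂ)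
    (h : ∀ w : Fin 4 → Fin n, StrictMono w → (f fun i => e (w i)) = 0) : f = 0 := by
  classical
  refine Module.Basis.ext_alternating e fun v hv => ?_
  rw [AlternatingMap.zero_apply]
  set S : Finset (Fin n) := Finset.image v Finset.univ with hS
  have hcard : S.card = 4 := by
    rw [hS, Finset.card_image_of_injective _ hv, Finset.card_univ, Fintype.card_fin]
  set w : Fin 4 → Fin n := ⇑(S.orderEmbOfFin hcard) with hw'
  have hw : StrictMono w := (S.orderEmbOfFin hcard).strictMono
  have hmem : ∀ i, v i ∈ S := fun i => Finset.mem_image_of_mem v (Finset.mem_univ i)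
  set σ' : Fin 4 → Fin 4 := fun i => (S.orderIsoOfFin hcard).symm ⟨v i, hmem i⟩ with hσ'
  have hinj : Function.Injective σ' := by
    intro a b hab
    apply hv
    have := congrArg (fun t => ((S.orderIsoOfFin hcard) t : Fin n)) hab
    simpa [hσ'] using this
  let σ : Equiv.Perm (Fin 4) := Equiv.ofBijective σ' (Finite.injective_iff_bijective.mp hinj)
  have hfac : ∀ i, v i = w (σ i) := by
    intro i
    have h1 : ((S.orderIsoOfFin hcard) (σ' i) : Fin n) = v i := by simp [hσ']
    have h2 : w (σ' i) = ((S.orderIsoOfFin hcard) (σ' i) : Fin n) :=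
      (Finset.coe_orderIsoOfFin_apply S hcard (σ' i)).symm
    rw [show σ i = σ' i from rfl, h2, h1]
  have hfun : (fun i => e (v i)) = (fun i => e (w i)) ∘ σ := by
    funext i; simp [Function.comp, hfac i]
  rw [hfun, f.map_perm, h w hw, smul_zero]

theorem no_strictmono_small {k : ℕ} (hk : k ≤ 3) (w : Fin 4 → Fin k) (hw : StrictMono w) :
    False := by
  have h01 : (w 0).val < (w 1).val := hw (by decide)
  have h12 : (w 1).val < (w 2).val := hw (by decide)
  have h23 : (w 2).val < (w 3).val := hw (by decide)
  have h3 := (w 3).isLt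
  omega

/-- If the wedge form of `α` vanishes, then `α` lies in `dupSubmodule B`. -/
theorem mem_dup_of_wedge_eq_zero (B : LinearMap.BilinForm ℂ g)
    (hinv : ∀ x y z : g, B ⁅x, y⁆ z = B x ⁅y, z⁆)
    (α : Module.Dual ℂ g) (hF : wedgeForm B hinv α = 0) : α ∈ dupSubmodule B := by
  intro X Y Z T
  have h0 : wedgeForm B hinv α ![X, Y, Z, T] = 0 := by rw [hF]; rfl
  exact h0

end AuxWedge

set_option maxRecDepth 100000 in
/-- Every non-Abelian quadratic Lie algebra of dimension at most `5`
is singular, i.e. `dup(g) ≥ 1`. -/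
theorem dim_le_five_singular
    {g : Type*} [LieRing g] [LieAlgebra ℂ g] [Module.Finite ℂ g]
    (B : LinearMap.BilinForm ℂ g)
    (hsymm : ∀ x y : g, B x y = B y x)
    (hnondeg : B.Nondegenerate)
    (hinv : ∀ x y z : g, B ⁅x, y⁆ z = B x ⁅y, z⁆)
    (hnonabelian : ¬ ∀ x y : g, ⁅x, y⁆ = 0)
    (hdim : Module.finrank ℂ g ≤ 5) :
    1 ≤ dup B := by
  classical
  push_neg at hnonabelian
  obtain ⟨x, y, hxy⟩ := hnonabelian
  have hgnt : Nontrivial g := by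
    refine ⟨x, 0, ?_⟩
    rintro rfl
    exact hxy (zero_lie y)
  -- it suffices to produce a nonzero element of the dup submodule
  suffices hex : ∃ α : Module.Dual ℂ g, α ≠ 0 ∧ α ∈ dupSubmodule B by
    obtain ⟨α, hne, hmem⟩ := hex
    have : Nontrivial (dupSubmodule B) := by
      refine nontrivial_of_ne ⟨α, hmem⟩ 0 ?_
      intro hh
      exact hne (by simpa [Submodule.mk_eq_zero] using hh)
    have hfd : FiniteDimensional ℂ (Module.Dual ℂ g) := inferInstance
    exact Module.finrank_pos
  -- choose a basis
  obtain ⟨n, hn⟩ : ∃ n, Module.finrank ℂ g = n := ⟨_, rfl⟩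
  have hn5 : n ≤ 5 := hn ▸ hdim
  have hn1 : 1 ≤ n := hn ▸ Module.finrank_pos
  -- helper to produce α from coefficient vectors
  have key : ∀ (e : Module.Basis (Fin n) ℂ g) (a : Fin n → ℂ), a ≠ 0 →
      (∀ w : Fin 4 → Fin n, StrictMono w →
        a (w 0) * B ⁅e (w 1), e (w 2)⁆ (e (w 3)) - a (w 1) * B ⁅e (w 0), e (w 2)⁆ (e (w 3))
        + a (w 2) * B ⁅e (w 0), e (w 1)⁆ (e (w 3)) - a (w 3) * B ⁅e (w 0), e (w 1)⁆ (e (w 2)) = 0) →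
      ∃ α : Module.Dual ℂ g, α ≠ 0 ∧ α ∈ dupSubmodule B := by
    intro e a ha hsol
    set α : Module.Dual ℂ g := ∑ i, a i • e.coord i with hα'
    have hα : ∀ i, α (e i) = a i := by
      intro i
      simp [hα', LinearMap.sum_apply, Module.Basis.coord_apply, Module.Basis.repr_self,
        Finsupp.single_apply, Finset.sum_ite_eq]
    have hne : α ≠ 0 := by
      intro h0
      apply ha
      funext i
      have := hα i
      rw [h0] at this
      simpa using this.symm
    refine ⟨α, hne, mem_dup_of_wedge_eq_zero B hinv α ?_⟩
    refine alt_ext_zero e _ ?_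
    intro w hw
    show α (e (w 0)) * B ⁅e (w 1), e (w 2)⁆ (e (w 3)) - α (e (w 1)) * B ⁅e (w 0), e (w 2)⁆ (e (w 3))
      + α (e (w 2)) * B ⁅e (w 0), e (w 1)⁆ (e (w 3)) - α (e (w 3)) * B ⁅e (w 0), e (w 1)⁆ (e (w 2)) = 0
    rw [hα, hα, hα, hα]
    exact hsol w hw
  interval_cases n
  -- n = 1, 2, 3 : vacuous
  · exact key (Module.finBasisOfFinrankEq ℂ g hn) (fun _ => 1) (by
      intro h; have := congrFun h 0; simp at this)
      (fun w hw => False.elim (no_strictmono_small (by norm_num) w hw))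
  · exact key (Module.finBasisOfFinrankEq ℂ g hn) (fun _ => 1) (by
      intro h; have := congrFun h 0; simp at this)
      (fun w hw => False.elim (no_strictmono_small (by norm_num) w hw))
  · exact key (Module.finBasisOfFinrankEq ℂ g hn) (fun _ => 1) (by
      intro h; have := congrFun h 0; simp at this)
      (fun w hw => False.elim (no_strictmono_small (by norm_num) w hw))
  -- n = 4
  · set e := Module.finBasisOfFinrankEq ℂ g hn with he
    set c : Fin 4 → Fin 4 → Fin 4 → ℂ := fun i j k => B ⁅e i, e j⁆ (e k) with hc'
    have hfv4 : ∀ (i : Fin 4) (m : ℕ) (h : m < 4), i.val = m → i = ⟨m, h⟩ :=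
      fun i m h hm => Fin.ext hm
    have hwid : ∀ w : Fin 4 → Fin 4, StrictMono w →
        w 0 = 0 ∧ w 1 = 1 ∧ w 2 = 2 ∧ w 3 = 3 := by
      intro w hw
      have h01 : (w 0).val < (w 1).val := hw (by decide)
      have h12 : (w 1).val < (w 2).val := hw (by decide)
      have h23 : (w 2).val < (w 3).val := hw (by decide)
      have h3 := (w 3).isLt
      exact ⟨hfv4 (w 0) 0 (by omega) (by omega), hfv4 (w 1) 1 (by omega) (by omega),
        hfv4 (w 2) 2 (by omega) (by omega), hfv4 (w 3) 3 (by omega) (by omega)⟩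
    by_cases hc : c 1 2 3 = 0
    · refine key e ![1, 0, 0, 0] (by
        intro h; have := congrFun h 0; simp at this) ?_
      intro w hw
      obtain ⟨e0, e1, e2, e3⟩ := hwid w hw
      rw [e0, e1, e2, e3]
      show (1 : ℂ) * c 1 2 3 - 0 * c 0 2 3 + 0 * c 0 1 3 - 0 * c 0 1 2 = 0
      rw [hc]; ring
    · refine key e ![c 0 2 3, c 1 2 3, 0, 0] (by
        intro h; apply hc; have := congrFun h 1; simpa using this) ?_
      intro w hw
      obtain ⟨e0, e1, e2, e3⟩ := hwid w hw
      rw [e0, e1, e2, e3]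
      show c 0 2 3 * c 1 2 3 - c 1 2 3 * c 0 2 3 + 0 * c 0 1 3 - 0 * c 0 1 2 = 0
      ring
  -- n = 5
  · set e := Module.finBasisOfFinrankEq ℂ g hn with he
    set c : Fin 5 → Fin 5 → Fin 5 → ℂ := fun i j k => B ⁅e i, e j⁆ (e k) with hc'
    set A : Matrix (Fin 5) (Fin 5) ℂ :=
      !![0, c 2 3 4, -c 1 3 4, c 1 2 4, -c 1 2 3;
         -c 2 3 4, 0, c 0 3 4, -c 0 2 4, c 0 2 3;
         c 1 3 4, -c 0 3 4, 0, c 0 1 4, -c 0 1 3;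
         -c 1 2 4, c 0 2 4, -c 0 1 4, 0, c 0 1 2;
         c 1 2 3, -c 0 2 3, c 0 1 3, -c 0 1 2, 0] with hA'
    have hAT : A.transpose = -A := by
      ext i j
      fin_cases i <;> fin_cases j <;> simp [hA', Matrix.transpose_apply] <;> ring
    have hdet : A.det = 0 := by
      have h1 : A.det = (-A).det := by rw [← hAT, Matrix.det_transpose]
      rw [Matrix.det_neg, Fintype.card_fin] at h1
      have h2 : A.det + A.det = 0 := by
        norm_num at h1
        linear_combination h1
      exact add_self_eq_zero.mp h2
    obtain ⟨a, hane, ha⟩ := Matrix.exists_mulVec_eq_zero_iff.mpr hdet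
    have H0 := congrFun ha 0
    have H1 := congrFun ha 1
    have H2 := congrFun ha 2
    have H3 := congrFun ha 3
    have H4 := congrFun ha 4
    simp only [Matrix.mulVec, dotProduct, Fin.sum_univ_five, hA',
      Matrix.cons_val', Matrix.cons_val_zero, Matrix.cons_val_one, Matrix.head_cons,
      Matrix.empty_val', Matrix.cons_val_fin_one, Matrix.head_fin_const,
      Matrix.cons_val_two, Matrix.tail_cons, Matrix.cons_val_three, Matrix.cons_val_four,
      Matrix.of_apply, Pi.zero_apply] at H0 H1 H2 H3 H4
    refine key e a hane ?_
    intro w hw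
    have h01 : (w 0).val < (w 1).val := hw (by decide)
    have h12 : (w 1).val < (w 2).val := hw (by decide)
    have h23 : (w 2).val < (w 3).val := hw (by decide)
    have h3 := (w 3).isLt
    have hfv : ∀ (i : Fin 5) (m : ℕ) (h : m < 5), i.val = m → i = ⟨m, h⟩ :=
      fun i m h hm => Fin.ext hm
    have hd : ((w 0).val = 0 ∧ (w 1).val = 1 ∧ (w 2).val = 2 ∧ (w 3).val = 3) ∨
        ((w 0).val = 0 ∧ (w 1).val = 1 ∧ (w 2).val = 2 ∧ (w 3).val = 4) ∨
        ((w 0).val = 0 ∧ (w 1).val = 1 ∧ (w 2).val = 3 ∧ (w 3).val = 4) ∨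
        ((w 0).val = 0 ∧ (w 1).val = 2 ∧ (w 2).val = 3 ∧ (w 3).val = 4) ∨
        ((w 0).val = 1 ∧ (w 1).val = 2 ∧ (w 2).val = 3 ∧ (w 3).val = 4) := by omega
    rcases hd with ⟨d0, d1, d2, d3⟩ | ⟨d0, d1, d2, d3⟩ | ⟨d0, d1, d2, d3⟩ |
      ⟨d0, d1, d2, d3⟩ | ⟨d0, d1, d2, d3⟩
    · rw [hfv (w 0) 0 (by omega) d0, hfv (w 1) 1 (by omega) d1,
        hfv (w 2) 2 (by omega) d2, hfv (w 3) 3 (by omega) d3]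
      show a 0 * c 1 2 3 - a 1 * c 0 2 3 + a 2 * c 0 1 3 - a 3 * c 0 1 2 = 0
      linear_combination H4
    · rw [hfv (w 0) 0 (by omega) d0, hfv (w 1) 1 (by omega) d1,
        hfv (w 2) 2 (by omega) d2, hfv (w 3) 4 (by omega) d3]
      show a 0 * c 1 2 4 - a 1 * c 0 2 4 + a 2 * c 0 1 4 - a 4 * c 0 1 2 = 0
      linear_combination -H3
    · rw [hfv (w 0) 0 (by omega) d0, hfv (w 1) 1 (by omega) d1,
        hfv (w 2) 3 (by omega) d2, hfv (w 3) 4 (by omega) d3]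
      show a 0 * c 1 3 4 - a 1 * c 0 3 4 + a 3 * c 0 1 4 - a 4 * c 0 1 3 = 0
      linear_combination H2
    · rw [hfv (w 0) 0 (by omega) d0, hfv (w 1) 2 (by omega) d1,
        hfv (w 2) 3 (by omega) d2, hfv (w 3) 4 (by omega) d3]
      show a 0 * c 2 3 4 - a 2 * c 0 3 4 + a 3 * c 0 2 4 - a 4 * c 0 2 3 = 0
      linear_combination -H1
    · rw [hfv (w 0) 1 (by omega) d0, hfv (w 1) 2 (by omega) d1,
        hfv (w 2) 3 (by omega) d2, hfv (w 3) 4 (by omega) d3]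
      show a 1 * c 2 3 4 - a 2 * c 1 3 4 + a 3 * c 1 2 4 - a 4 * c 1 2 3 = 0
      linear_combination H0
end

section
/- Let (g,B) be a quadratic Lie algebra with dup(g) = 1. Then g is a solvable Lie algebra. -/
section Aux
variable {g : Type*} [LieRing g] [LieAlgebra ℂ g]

private lemma aux_solvable (A Z : LieIdeal ℂ g)
    (h1 : ∀ x y : g, ⁅x, y⁆ ∈ A)
    (h2 : ∀ x, x ∈ A → ∀ y, y ∈ A → ⁅x, y⁆ ∈ Z)
    (h3 : ∀ x, x ∈ Z → ∀ y, y ∈ Z → ⁅x, y⁆ = (0 : g)) :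
    LieAlgebra.IsSolvable g := by
  have hsucc : ∀ k, LieAlgebra.derivedSeries ℂ g (k + 1) =
      ⁅LieAlgebra.derivedSeries ℂ g k, LieAlgebra.derivedSeries ℂ g k⁆ := by
    intro k
    rw [LieAlgebra.derivedSeries_def, LieAlgebra.derivedSeriesOfIdeal_succ]
  have e1 : LieAlgebra.derivedSeries ℂ g 1 ≤ A := by
    rw [hsucc 0]
    rw [LieSubmodule.lieIdeal_oper_eq_span, LieSubmodule.lieSpan_le]
    rintro m ⟨x, y, rfl⟩
    exact h1 x y
  have hAA : ⁅A, A⁆ ≤ Z := by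
    rw [LieSubmodule.lieIdeal_oper_eq_span, LieSubmodule.lieSpan_le]
    rintro m ⟨x, y, rfl⟩
    exact h2 x x.2 y y.2
  have hZZ : ⁅Z, Z⁆ ≤ (⊥ : LieIdeal ℂ g) := by
    rw [LieSubmodule.lieIdeal_oper_eq_span, LieSubmodule.lieSpan_le]
    rintro m ⟨x, y, rfl⟩
    simp only [LieSubmodule.mem_bot, SetLike.mem_coe]
    exact h3 x x.2 y y.2
  have e2 : LieAlgebra.derivedSeries ℂ g 2 ≤ Z := by
    rw [hsucc 1]
    exact le_trans (LieSubmodule.mono_lie e1 e1) hAA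
  have e3 : LieAlgebra.derivedSeries ℂ g 3 ≤ ⊥ := by
    rw [hsucc 2]
    exact le_trans (LieSubmodule.mono_lie e2 e2) hZZ
  exact LieAlgebra.IsSolvable.mk (le_bot_iff.mp e3)

end Aux

/-- A quadratic Lie algebra with `dup(g) = 1` is solvable. -/
theorem dup_one_solvable
    {g : Type*} [LieRing g] [LieAlgebra ℂ g] [Module.Finite ℂ g]
    (B : LinearMap.BilinForm ℂ g)
    (hsymm : ∀ x y : g, B x y = B y x)
    (hnondeg : B.Nondegenerate)
    (hinv : ∀ x y z : g, B ⁅x, y⁆ z = B x ⁅y, z⁆)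
    (hdup : dup B = 1) :
    LieAlgebra.IsSolvable g := by
  classical
  have hdup' : Module.finrank ℂ (dupSubmodule B) = 1 := hdup
  have hnt : Nontrivial (dupSubmodule B) :=
    Module.nontrivial_of_finrank_pos (R := ℂ) (by rw [hdup']; norm_num)
  obtain ⟨a, ha0⟩ := exists_ne (0 : dupSubmodule B)
  set α : Module.Dual ℂ g := (a : Module.Dual ℂ g) with hαdef
  have hmem : ∀ X Y Z T : g,
      α X * B ⁅Y, Z⁆ T - α Y * B ⁅X, Z⁆ T + α Z * B ⁅X, Y⁆ T - α T * B ⁅X, Y⁆ Z = 0 := a.2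
  have hα0 : α ≠ 0 := fun h => ha0 (Subtype.coe_injective h)
  set X₀ : g := ((LinearMap.BilinForm.toDual B hnondeg).symm α) with hX₀def
  have hX₀ : ∀ T, B X₀ T = α T := fun T =>
    LinearMap.BilinForm.apply_toDual_symm_apply α T
  have hX₀0 : X₀ ≠ 0 := by
    intro h
    apply hα0
    ext T
    rw [← hX₀ T, h, map_zero]
  -- basic consequences of invariance
  have hq : ∀ x y : g, B ⁅x, y⁆ x = 0 := by
    intro x y
    have h1 : B ⁅x, y⁆ x = B ⁅y, x⁆ x := by rw [hinv x y x]; exact hsymm _ _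
    have h2 : (⁅y, x⁆ : g) = -⁅x, y⁆ := by rw [← lie_skew]
    rw [h2, map_neg, LinearMap.neg_apply] at h1
    linear_combination h1 / 2
  have hsk : ∀ x y z : g, B ⁅x, y⁆ z = - B y ⁅x, z⁆ := by
    intro x y z
    have h2 : (⁅x, y⁆ : g) = -⁅y, x⁆ := by rw [lie_skew]
    rw [h2, map_neg, LinearMap.neg_apply, hinv]
  -- the key pointwise identity
  have hstar : ∀ X Y Z : g,
      α X • ⁅Y, Z⁆ - α Y • ⁅X, Z⁆ + α Z • ⁅X, Y⁆ = (B ⁅X, Y⁆ Z) • X₀ := by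
    intro X Y Z
    have key : ∀ T, B (α X • ⁅Y, Z⁆ - α Y • ⁅X, Z⁆ + α Z • ⁅X, Y⁆
        - (B ⁅X, Y⁆ Z) • X₀) T = 0 := by
      intro T
      have h := hmem X Y Z T
      have hT := hX₀ T
      simp only [map_add, map_sub, map_smul, LinearMap.add_apply, LinearMap.sub_apply,
        LinearMap.smul_apply, smul_eq_mul]
      linear_combination h - (B ⁅X, Y⁆ Z) * hT
    have h0 := hnondeg.1 _ key
    exact sub_eq_zero.mp h0
  -- finrank-one consequence
  have hrank : ∀ β : Module.Dual ℂ g, β ∈ dupSubmodule B → ∃ t : ℂ, t • α = β := by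
    intro β hβ
    obtain ⟨t, ht⟩ := (finrank_eq_one_iff_of_nonzero' a ha0).mp hdup' ⟨β, hβ⟩
    refine ⟨t, ?_⟩
    have := congrArg (Subtype.val) ht
    simpa using this
  by_cases hc0 : α X₀ = 0
  · -- Case B : `α X₀ = 0` (isotropic case)
    have hexy : ∃ y, α y ≠ 0 := by
      by_contra hno
      push_neg at hno
      exact hα0 (by ext y; simpa using hno y)
    obtain ⟨y₀, hy₀⟩ := hexy
    set Y₀ : g := (α y₀)⁻¹ • y₀ with hY₀def
    have hY₀ : α Y₀ = 1 := by
      simp only [hY₀def, map_smul, smul_eq_mul]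
      exact inv_mul_cancel₀ hy₀
    clear_value Y₀
    set u : g := ⁅Y₀, X₀⁆ with hudef
    have hXY : (⁅X₀, Y₀⁆ : g) = -u := by rw [hudef, ← lie_skew]
    have hBuY₀ : B u Y₀ = 0 := by rw [hudef]; exact hq Y₀ X₀
    have hBuX₀ : B u X₀ = 0 := by rw [hudef, hinv]; simp
    have hαu : α u = 0 := by rw [← hX₀ u, hsymm]; exact hBuX₀
    clear_value u
    have e3Y : ∀ p : g, (⁅p, Y₀⁆ : g) = -⁅Y₀, p⁆ := by
      intro p; rw [← lie_skew]
    have hadX₀ : ∀ z : g, α z = 0 → ⁅X₀, z⁆ = (B u z) • X₀ := by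
      intro z hz
      have h := hstar X₀ Y₀ z
      rw [hc0, hY₀, hz] at h
      have h2 : B ⁅X₀, Y₀⁆ z = - B u z := by
        rw [hXY, map_neg, LinearMap.neg_apply]
      rw [h2] at h
      linear_combination (norm := module) -h
    have hbr : ∀ x y : g, α x = 0 → α y = 0 → ⁅x, y⁆ = (B ⁅Y₀, x⁆ y) • X₀ := by
      intro x y hx hy
      have h := hstar x Y₀ y
      rw [hx, hy, hY₀] at h
      have h2 : B ⁅x, Y₀⁆ y = - B ⁅Y₀, x⁆ y := by
        rw [e3Y x, map_neg, LinearMap.neg_apply]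
      rw [h2] at h
      linear_combination (norm := module) -h
    have hkerB : ∀ W : g, α (W - α W • Y₀) = 0 := by
      intro W
      simp only [map_sub, map_smul, smul_eq_mul, hY₀, mul_one, sub_self]
    by_cases hu0 : u = 0
    · -- `X₀` is central: `g` is solvable (double extension type)
      have hcent : ∀ W : g, (⁅X₀, W⁆ : g) = 0 := by
        intro W
        have h1 : (⁅X₀, W - α W • Y₀⁆ : g) = 0 := by
          rw [hadX₀ _ (hkerB W), hu0]
          simp
        have h2 : (⁅X₀, W⁆ : g) = ⁅X₀, W - α W • Y₀⁆ + α W • ⁅X₀, Y₀⁆ := by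
          rw [lie_sub, lie_smul]
          abel
        rw [h2, h1, hXY, hu0]
        simp
      have hαbr : ∀ X W : g, α ⁅X, W⁆ = 0 := by
        intro X W
        rw [← hX₀ ⁅X, W⁆, hsymm, hinv]
        rw [show (⁅W, X₀⁆ : g) = -⁅X₀, W⁆ by rw [← lie_skew], hcent W]
        simp
      let A : LieIdeal ℂ g :=
        { carrier := {z : g | α z = 0}
          add_mem' := by
            intro p q hp hq
            simp only [Set.mem_setOf_eq, map_add] at *
            rw [hp, hq]; ring
          zero_mem' := by simp
          smul_mem' := by
            intro t p hp
            simp only [Set.mem_setOf_eq, map_smul, smul_eq_mul] at *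
            rw [hp]; ring
          lie_mem := by
            intro x m _
            exact hαbr x m }
      let Zc : LieIdeal ℂ g :=
        { toSubmodule := Submodule.span ℂ {X₀}
          lie_mem := by
            intro x m hm
            obtain ⟨t, rfl⟩ := Submodule.mem_span_singleton.mp hm
            show (⁅x, t • X₀⁆ : g) ∈ Submodule.span ℂ {X₀}
            have hz : (⁅x, t • X₀⁆ : g) = 0 := by
              rw [lie_smul, show (⁅x, X₀⁆ : g) = -⁅X₀, x⁆ by rw [← lie_skew], hcent x]
              simp
            rw [hz]
            exact Submodule.zero_mem _ }
      apply aux_solvable A Zc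
      · intro x y
        exact hαbr x y
      · intro x hx y hy
        have hx' : α x = 0 := hx
        have hy' : α y = 0 := hy
        show (⁅x, y⁆ : g) ∈ Submodule.span ℂ {X₀}
        rw [hbr x y hx' hy']
        exact Submodule.mem_span_singleton.mpr ⟨_, rfl⟩
      · intro x hx y hy
        obtain ⟨t, rfl⟩ := Submodule.mem_span_singleton.mp hy
        rw [lie_smul, show (⁅x, X₀⁆ : g) = -⁅X₀, x⁆ by rw [← lie_skew], hcent x]
        simp
    · -- `u ≠ 0`: contradiction with dup = 1
      exfalso
      have hexz : ∃ z, α z = 0 ∧ B u z ≠ 0 := by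
        by_contra hno
        push_neg at hno
        apply hu0
        apply hnondeg.1
        intro W
        have h1 := hno _ (hkerB W)
        simp only [map_sub, map_smul, smul_eq_mul, hBuY₀, mul_zero, sub_zero] at h1
        exact h1
      obtain ⟨z₀, hz₀α, hz₀⟩ := hexz
      set y₁ : g := (B u z₀)⁻¹ • z₀ with hy₁def
      have hy₁α : α y₁ = 0 := by simp [hy₁def, map_smul, hz₀α]
      have hy₁ : B u y₁ = 1 := by
        simp only [hy₁def, map_smul, smul_eq_mul]
        exact inv_mul_cancel₀ hz₀
      clear_value y₁
      set v : g := ⁅Y₀, y₁⁆ with hvdef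
      have hBvY₀ : B v Y₀ = 0 := by rw [hvdef]; exact hq Y₀ y₁
      have hαD : ∀ x : g, α ⁅Y₀, x⁆ = - B u x := by
        intro x
        have h1 : α ⁅Y₀, x⁆ = B ⁅Y₀, x⁆ X₀ := by rw [← hX₀ ⁅Y₀, x⁆, hsymm]
        have h2 : B ⁅Y₀, x⁆ X₀ = - B x ⁅Y₀, X₀⁆ := hsk Y₀ x X₀
        have h3 : B x ⁅Y₀, X₀⁆ = B u x := by rw [← hudef]; exact hsymm x u
        rw [h1, h2, h3]
      have hαv : α v = -1 := by
        rw [hvdef, hαD y₁, hy₁]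
      clear_value v
      have hD : ∀ x : g, α x = 0 → ⁅Y₀, x⁆ = (B u x) • v - (B v x) • u := by
        intro x hx
        have jac : (⁅Y₀, ⁅x, y₁⁆⁆ : g) = ⁅⁅Y₀, x⁆, y₁⁆ + ⁅x, ⁅Y₀, y₁⁆⁆ :=
          leibniz_lie Y₀ x y₁
        have l1 : (⁅Y₀, ⁅x, y₁⁆⁆ : g) = (- B v x) • u := by
          rw [hbr x y₁ hx hy₁α, lie_smul, ← hudef]
          congr 1
          rw [hsk Y₀ x y₁, ← hvdef, hsymm x v]
        have hαdv : α (v + Y₀) = 0 := by rw [map_add, hαv, hY₀]; ring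
        have l2 : (⁅x, ⁅Y₀, y₁⁆⁆ : g) = (B ⁅Y₀, x⁆ v) • X₀ + ⁅Y₀, x⁆ := by
          rw [← hvdef]
          have e1 : (⁅x, v⁆ : g) = ⁅x, v + Y₀⁆ - ⁅x, Y₀⁆ := by rw [lie_add]; abel
          rw [e1, hbr x (v + Y₀) hx hαdv]
          have e2 : B ⁅Y₀, x⁆ (v + Y₀) = B ⁅Y₀, x⁆ v := by
            rw [map_add, hq Y₀ x, add_zero]
          rw [e2, e3Y x]
          abel
        have hw : α (⁅Y₀, x⁆ + (B u x) • Y₀) = 0 := by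
          rw [map_add, map_smul, hαD x, hY₀, smul_eq_mul]
          ring
        have l3 : (⁅⁅Y₀, x⁆, y₁⁆ : g) = (- B ⁅Y₀, x⁆ v) • X₀ - (B u x) • v := by
          have e1 : (⁅⁅Y₀, x⁆, y₁⁆ : g)
              = ⁅⁅Y₀, x⁆ + (B u x) • Y₀, y₁⁆ - (B u x) • ⁅Y₀, y₁⁆ := by
            rw [add_lie, smul_lie]
            abel
          rw [e1, hbr _ y₁ hw hy₁α, ← hvdef]
          have e2 : B ⁅Y₀, ⁅Y₀, x⁆ + (B u x) • Y₀⁆ y₁ = - B ⁅Y₀, x⁆ v := by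
            rw [hsk Y₀ _ y₁, ← hvdef]
            have e4 : B Y₀ v = 0 := by rw [hsymm]; exact hBvY₀
            rw [map_add, map_smul, LinearMap.add_apply, LinearMap.smul_apply,
              smul_eq_mul, e4, mul_zero, add_zero]
          rw [e2]
        rw [l1, l2, l3] at jac
        linear_combination (norm := module) -jac
      have hBu : ∀ W : g, B u (W - α W • Y₀) = B u W := by
        intro W
        simp only [map_sub, map_smul, smul_eq_mul, hBuY₀, mul_zero, sub_zero]
      have hBv : ∀ W : g, B v (W - α W • Y₀) = B v W := by
        intro W
        simp only [map_sub, map_smul, smul_eq_mul, hBvY₀, mul_zero, sub_zero]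
      have hI : ∀ X Y Z : g, B ⁅X, Y⁆ Z =
          (B u X * B v Y - B v X * B u Y) * α Z
            + (α X * B u Y - α Y * B u X) * B v Z
            - (α X * B v Y - α Y * B v X) * B u Z := by
        intro X Y Z
        have hxα := hkerB X
        have hyα := hkerB Y
        have hexp : (⁅X, Y⁆ : g) = ⁅X - α X • Y₀, Y - α Y • Y₀⁆
            + α X • ⁅Y₀, Y - α Y • Y₀⁆ - α Y • ⁅Y₀, X - α X • Y₀⁆ := by
          simp only [lie_sub, sub_lie, lie_smul, smul_lie, lie_self, smul_zero, e3Y,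
            smul_neg, smul_smul]
          module
        rw [hexp, hbr _ _ hxα hyα, hD _ hxα, hD _ hyα]
        simp only [map_add, map_sub, map_smul, LinearMap.add_apply, LinearMap.sub_apply,
          LinearMap.smul_apply, smul_eq_mul, hX₀, hBu, hBv, hBuY₀, hBvY₀,
          mul_zero, sub_zero]
        ring
      have hβmem : (B u : Module.Dual ℂ g) ∈ dupSubmodule B := by
        intro X Y Z T
        rw [hI Y Z T, hI X Z T, hI X Y T, hI X Y Z]
        ring
      obtain ⟨t, ht⟩ := hrank (B u) hβmem
      have h1 : t = 0 := by
        have h2 := congrArg (fun f : Module.Dual ℂ g => f Y₀) ht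
        simp only [LinearMap.smul_apply, smul_eq_mul, hY₀, mul_one, hBuY₀] at h2
        exact h2
      apply hu0
      apply hnondeg.1
      intro W
      have h3 := congrArg (fun f : Module.Dual ℂ g => f W) ht
      simp only [LinearMap.smul_apply, smul_eq_mul, h1, zero_mul] at h3
      exact h3.symm
  · -- Case A : `α X₀ ≠ 0`
    set c := α X₀ with hcdef
    have hbr2 : ∀ y z : g, α y = 0 → α z = 0 →
        c • ⁅y, z⁆ = (B ⁅X₀, y⁆ z) • X₀ := by
      intro y z hy hz
      have h := hstar X₀ y z
      rw [hy, hz] at h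
      simpa using h
    have hker : ∀ W : g, α (W - (c⁻¹ * α W) • X₀) = 0 := by
      intro W
      simp only [map_sub, map_smul, smul_eq_mul, ← hcdef]
      field_simp
      ring
    have e3 : ∀ p : g, (⁅p, X₀⁆ : g) = -⁅X₀, p⁆ := by
      intro p; rw [← lie_skew]
    have hDfull : ∀ X : g, (⁅X₀, X⁆ : g) = ⁅X₀, X - (c⁻¹ * α X) • X₀⁆ := by
      intro X
      simp [lie_sub, lie_smul, lie_self]
    have hexpand : ∀ X Y : g, (⁅X, Y⁆ : g) =
        ⁅X - (c⁻¹ * α X) • X₀, Y - (c⁻¹ * α Y) • X₀⁆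
          + (c⁻¹ * α X) • ⁅X₀, Y⁆ - (c⁻¹ * α Y) • ⁅X₀, X⁆ := by
      intro X Y
      simp only [lie_sub, sub_lie, lie_smul, smul_lie, lie_self, smul_zero, e3,
        smul_neg, smul_smul]
      module
    by_cases hD0 : ∀ y : g, α y = 0 → ⁅X₀, y⁆ = 0
    · -- abelian case
      have hDall : ∀ W : g, (⁅X₀, W⁆ : g) = 0 := by
        intro W
        rw [hDfull W]
        exact hD0 _ (hker W)
      have habel : ∀ X W : g, ⁅X, W⁆ = 0 := by
        intro X W
        have hb : c • ⁅X - (c⁻¹ * α X) • X₀, W - (c⁻¹ * α W) • X₀⁆ = 0 := by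
          rw [hbr2 _ _ (hker X) (hker W), hD0 _ (hker X)]
          simp
        have hb2 : ⁅X - (c⁻¹ * α X) • X₀, W - (c⁻¹ * α W) • X₀⁆ = (0 : g) :=
          (smul_eq_zero.mp hb).resolve_left hc0
        rw [hexpand X W, hb2, hDall W, hDall X]
        simp
      apply aux_solvable (⊥ : LieIdeal ℂ g) ⊥
      · intro x y
        simp [LieSubmodule.mem_bot, habel x y]
      · intro x _ y _
        simp [LieSubmodule.mem_bot, habel x y]
      · intro x _ y _
        exact habel x y
    · -- non-abelian case: contradiction with dup = 1
      push_neg at hD0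
      obtain ⟨x₁, hx₁α, hv₁0⟩ := hD0
      exfalso
      set v₁ : g := ⁅X₀, x₁⁆ with hv₁def
      have hv₁X₀ : B v₁ X₀ = 0 := hq X₀ x₁
      have hex : ∃ z, α z = 0 ∧ B v₁ z ≠ 0 := by
        by_contra hno
        push_neg at hno
        apply hv₁0
        apply hnondeg.1
        intro W
        have h1 := hno _ (hker W)
        simp only [map_sub, map_smul, smul_eq_mul, hv₁X₀, mul_zero, sub_zero] at h1
        exact h1
      obtain ⟨z₀, hz₀α, hz₀⟩ := hex
      set z₁ : g := (B v₁ z₀)⁻¹ • z₀ with hz₁def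
      have hz₁α : α z₁ = 0 := by simp [hz₁def, map_smul, hz₀α]
      have hz₁ : B v₁ z₁ = 1 := by
        simp only [hz₁def, map_smul, smul_eq_mul]
        exact inv_mul_cancel₀ hz₀
      set v₂ : g := ⁅X₀, z₁⁆ with hv₂def
      have hv₂X₀ : B v₂ X₀ = 0 := hq X₀ z₁
      have hJ : ∀ x y z : g, α x = 0 → α y = 0 → α z = 0 →
          (B ⁅X₀, y⁆ z) • ⁅X₀, x⁆ + (B ⁅X₀, z⁆ x) • ⁅X₀, y⁆
            + (B ⁅X₀, x⁆ y) • ⁅X₀, z⁆ = 0 := by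
        intro x y z hx hy hz
        have hj := lie_jacobi x y z
        have hj2 : c • ⁅x, ⁅y, z⁆⁆ + c • ⁅y, ⁅z, x⁆⁆ + c • ⁅z, ⁅x, y⁆⁆ = (0 : g) := by
          rw [← smul_add, ← smul_add, hj, smul_zero]
        have e4 : ∀ p q r : g, α q = 0 → α r = 0 →
            c • ⁅p, ⁅q, r⁆⁆ = -((B ⁅X₀, q⁆ r) • ⁅X₀, p⁆) := by
          intro p q r hq' hr'
          rw [← lie_smul, hbr2 q r hq' hr', lie_smul, e3, smul_neg]
        rw [e4 x y z hy hz, e4 y z x hz hx, e4 z x y hx hy] at hj2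
        linear_combination (norm := module) -hj2
      have hDform : ∀ x : g, α x = 0 →
          ⁅X₀, x⁆ = (B v₁ x) • v₂ - (B v₂ x) • v₁ := by
        intro x hx
        have h := hJ x x₁ z₁ hx hx₁α hz₁α
        rw [← hv₁def, ← hv₂def, hz₁] at h
        have exy : B ⁅X₀, x⁆ x₁ = - B v₁ x := by
          rw [hsk X₀ x x₁, ← hv₁def, hsymm x v₁]
        rw [exy] at h
        linear_combination (norm := module) h
      -- the canonical 3-form is an explicit determinant
      have hI : ∀ X Y Z : g, B ⁅X, Y⁆ Z =
          c⁻¹ * ((B v₁ X * B v₂ Y - B v₂ X * B v₁ Y) * α Z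
            + (α X * B v₁ Y - α Y * B v₁ X) * B v₂ Z
            - (α X * B v₂ Y - α Y * B v₂ X) * B v₁ Z) := by
        intro X Y Z
        have hxα : α (X - (c⁻¹ * α X) • X₀) = 0 := hker X
        have hyα : α (Y - (c⁻¹ * α Y) • X₀) = 0 := hker Y
        have hv₁x : B v₁ (X - (c⁻¹ * α X) • X₀) = B v₁ X := by
          simp only [map_sub, map_smul, smul_eq_mul, hv₁X₀, mul_zero, sub_zero]
        have hv₂x : B v₂ (X - (c⁻¹ * α X) • X₀) = B v₂ X := by
          simp only [map_sub, map_smul, smul_eq_mul, hv₂X₀, mul_zero, sub_zero]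
        have hv₁y : B v₁ (Y - (c⁻¹ * α Y) • X₀) = B v₁ Y := by
          simp only [map_sub, map_smul, smul_eq_mul, hv₁X₀, mul_zero, sub_zero]
        have hv₂y : B v₂ (Y - (c⁻¹ * α Y) • X₀) = B v₂ Y := by
          simp only [map_sub, map_smul, smul_eq_mul, hv₂X₀, mul_zero, sub_zero]
        have hxy : ⁅X - (c⁻¹ * α X) • X₀, Y - (c⁻¹ * α Y) • X₀⁆
            = (c⁻¹ * (B v₁ X * B v₂ Y - B v₂ X * B v₁ Y)) • X₀ := by
          have h1 := hbr2 _ _ hxα hyα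
          have h2 : B ⁅X₀, X - (c⁻¹ * α X) • X₀⁆ (Y - (c⁻¹ * α Y) • X₀)
              = B v₁ X * B v₂ Y - B v₂ X * B v₁ Y := by
            rw [hDform _ hxα]
            simp only [map_sub, map_smul, LinearMap.sub_apply, LinearMap.smul_apply,
              smul_eq_mul, hv₁x, hv₂x, hv₁y, hv₂y, hv₁X₀, hv₂X₀, mul_zero, sub_zero]
            try ring
          rw [h2] at h1
          have h3 := congrArg (fun w : g => c⁻¹ • w) h1
          simp only [smul_smul] at h3
          rw [inv_mul_cancel₀ hc0, one_smul] at h3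
          exact h3
        rw [hexpand X Y, hDfull X, hDfull Y, hxy, hDform _ hxα, hDform _ hyα]
        simp only [map_add, map_sub, map_smul, LinearMap.add_apply, LinearMap.sub_apply,
          LinearMap.smul_apply, smul_eq_mul, hX₀, hv₁x, hv₂x, hv₁y, hv₂y, hv₁X₀, hv₂X₀,
          mul_zero, sub_zero]
        ring
      have hβmem : (B v₁ : Module.Dual ℂ g) ∈ dupSubmodule B := by
        intro X Y Z T
        rw [hI Y Z T, hI X Z T, hI X Y T, hI X Y Z]
        ring
      obtain ⟨t, ht⟩ := hrank (B v₁) hβmem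
      have h1 : t * α X₀ = B v₁ X₀ := by
        have := congrArg (fun f : Module.Dual ℂ g => f X₀) ht
        simpa using this
      rw [hv₁X₀, ← hcdef] at h1
      have ht0 : t = 0 := by
        rcases mul_eq_zero.mp h1 with h | h
        · exact h
        · exact absurd h hc0
      apply hv₁0
      apply hnondeg.1
      intro W
      have := congrArg (fun f : Module.Dual ℂ g => f W) ht
      simp only [LinearMap.smul_apply, smul_eq_mul, ht0, zero_mul] at this
      exact this.symm
end

section
/- Let (g,B) be a non-Abelian quadratic Lie algebra. Then g is solvable and singular (i.e. dup(g) ≥ 1) if and only if g admits double-extension data. -/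
/-- Double-extension data for a quadratic Lie algebra `(g,B)`: a pair `(X0,Y0)` with
`B(X0,X0) = B(Y0,Y0) = 0`, `B(X0,Y0) = 1`, `[Y0,X0] = 0` and
`[X,Y] = B(X0,X)[Y0,Y] − B(X0,Y)[Y0,X] + B([Y0,X],Y) X0` for all `X,Y`. -/
def HasDoubleExtensionData {g : Type*} [LieRing g] [LieAlgebra ℂ g]
    (B : LinearMap.BilinForm ℂ g) : Prop :=
  ∃ X0 Y0 : g,
    B X0 X0 = 0 ∧ B Y0 Y0 = 0 ∧ B X0 Y0 = 1 ∧ ⁅Y0, X0⁆ = 0 ∧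
    ∀ X Y : g, ⁅X, Y⁆ = B X0 X • ⁅Y0, Y⁆ - B X0 Y • ⁅Y0, X⁆ + B ⁅Y0, X⁆ Y • X0


section QLA
variable {g : Type*} [LieRing g] [LieAlgebra ℂ g]

/-- Dup condition for the functional `B x0 ·`. -/
def QLA_DupCond (B : LinearMap.BilinForm ℂ g) (x0 : g) : Prop :=
  ∀ X Y Z T : g, B x0 X * B ⁅Y, Z⁆ T - B x0 Y * B ⁅X, Z⁆ T
    + B x0 Z * B ⁅X, Y⁆ T - B x0 T * B ⁅X, Y⁆ Z = 0

lemma QLA_skew (B : LinearMap.BilinForm ℂ g)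
    (hinv : ∀ x y z : g, B ⁅x, y⁆ z = B x ⁅y, z⁆) (w u v : g) :
    B ⁅w, v⁆ u = - B ⁅w, u⁆ v := by
  rw [hinv, hinv, ← lie_skew u v, map_neg, neg_neg]

lemma QLA_alt1 (B : LinearMap.BilinForm ℂ g)
    (hinv : ∀ x y z : g, B ⁅x, y⁆ z = B x ⁅y, z⁆) (x y : g) :
    B ⁅x, y⁆ x = 0 := by
  have h := QLA_skew B hinv x y x
  rw [lie_self] at h
  simp only [map_zero, LinearMap.zero_apply] at h
  linear_combination h

lemma QLA_alt2 (B : LinearMap.BilinForm ℂ g)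
    (hinv : ∀ x y z : g, B ⁅x, y⁆ z = B x ⁅y, z⁆) (x y : g) :
    B ⁅x, y⁆ y = 0 := by
  rw [hinv, lie_self, map_zero]

/-- The master bracket formula. -/
lemma QLA_master (B : LinearMap.BilinForm ℂ g)
    (hsymm : ∀ x y : g, B x y = B y x)
    (hnondeg : B.Nondegenerate)
    (hinv : ∀ x y z : g, B ⁅x, y⁆ z = B x ⁅y, z⁆)
    {X0 Y0 : g} (hdup : QLA_DupCond B X0) (hpair : B X0 Y0 = 1) (X Y : g) :
    ⁅X, Y⁆ = B X0 X • ⁅Y0, Y⁆ - B X0 Y • ⁅Y0, X⁆ + B ⁅Y0, X⁆ Y • X0 := by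
  have key : ∀ V : g,
      B (⁅X, Y⁆ - (B X0 X • ⁅Y0, Y⁆ - B X0 Y • ⁅Y0, X⁆ + B ⁅Y0, X⁆ Y • X0)) V = 0 := by
    intro V
    have hd := hdup X Y V Y0
    have e1 : B ⁅Y, V⁆ Y0 = B ⁅Y0, Y⁆ V := by rw [hsymm, ← hinv]
    have e2 : B ⁅X, V⁆ Y0 = B ⁅Y0, X⁆ V := by rw [hsymm, ← hinv]
    have e3 : B ⁅X, Y⁆ Y0 = B ⁅Y0, X⁆ Y := by rw [hsymm, ← hinv]
    rw [e1, e2, e3, hpair] at hd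
    simp only [map_sub, map_add, map_smul, LinearMap.sub_apply, LinearMap.add_apply,
      LinearMap.smul_apply, smul_eq_mul]
    linear_combination -hd
  exact sub_eq_zero.mp (hnondeg.1 _ key)

lemma QLA_solvable_of_data (B : LinearMap.BilinForm ℂ g)
    (X0 Y0 : g) (h1 : B X0 X0 = 0) (h4 : ⁅Y0, X0⁆ = 0)
    (hinv : ∀ x y z : g, B ⁅x, y⁆ z = B x ⁅y, z⁆)
    (h5 : ∀ X Y : g, ⁅X, Y⁆ = B X0 X • ⁅Y0, Y⁆ - B X0 Y • ⁅Y0, X⁆ + B ⁅Y0, X⁆ Y • X0) :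
    LieAlgebra.IsSolvable g := by
  have haC : ∀ v : g, B X0 ⁅Y0, v⁆ = 0 := by
    intro v
    rw [← hinv, ← lie_skew, h4]
    simp
  have haLie : ∀ x y : g, B X0 ⁅x, y⁆ = 0 := by
    intro x y
    rw [h5 x y]
    simp only [map_add, map_sub, map_smul, smul_eq_mul, haC, h1]
    ring
  set K1 : LieIdeal ℂ g :=
    { toSubmodule := LinearMap.ker (B X0)
      lie_mem := fun {x m} _ => by simp [LinearMap.mem_ker, haLie] } with hK1
  set K2 : LieIdeal ℂ g :=
    { toSubmodule := (ℂ ∙ X0 : Submodule ℂ g)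
      lie_mem := by
        intro x m hm
        obtain ⟨s, rfl⟩ := Submodule.mem_span_singleton.mp hm
        rw [lie_smul]
        apply Submodule.smul_mem
        have : ⁅x, X0⁆ = B ⁅Y0, x⁆ X0 • X0 := by
          rw [h5 x X0, h4, h1]
          simp
        exact Submodule.mem_span_singleton.mpr ⟨B ⁅Y0, x⁆ X0, by rw [this]⟩ } with hK2
  have hmem1 : ∀ x : g, x ∈ K1 ↔ B X0 x = 0 := fun x => Iff.rfl
  have hmem2 : ∀ x : g, x ∈ K2 ↔ ∃ s : ℂ, s • X0 = x := fun x => Submodule.mem_span_singleton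
  have hsucc : ∀ k, LieAlgebra.derivedSeries ℂ g (k+1)
      = ⁅LieAlgebra.derivedSeries ℂ g k, LieAlgebra.derivedSeries ℂ g k⁆ := by
    intro k
    exact LieAlgebra.derivedSeriesOfIdeal_succ ℂ g ⊤ k
  have hD1 : LieAlgebra.derivedSeries ℂ g 1 ≤ K1 := by
    rw [hsucc 0, LieSubmodule.lieIdeal_oper_eq_span, LieSubmodule.lieSpan_le]
    rintro m ⟨x, y, rfl⟩
    exact haLie x y
  have hD2 : LieAlgebra.derivedSeries ℂ g 2 ≤ K2 := by
    rw [hsucc 1]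
    refine le_trans (LieSubmodule.mono_lie hD1 hD1) ?_
    rw [LieSubmodule.lieIdeal_oper_eq_span, LieSubmodule.lieSpan_le]
    rintro m ⟨⟨u, hu⟩, ⟨v, hv⟩, rfl⟩
    simp only [SetLike.mem_coe]
    rw [hmem2]
    refine ⟨B ⁅Y0, u⁆ v, ?_⟩
    have hu' : B X0 u = 0 := hu
    have hv' : B X0 v = 0 := hv
    rw [h5 u v, hu', hv']
    simp
  have hD3 : LieAlgebra.derivedSeries ℂ g 3 = ⊥ := by
    rw [le_bot_iff.symm, hsucc 2]
    refine le_trans (LieSubmodule.mono_lie hD2 hD2) ?_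
    rw [LieSubmodule.lieIdeal_oper_eq_span, LieSubmodule.lieSpan_le]
    rintro m ⟨⟨u, hu⟩, ⟨v, hv⟩, rfl⟩
    obtain ⟨s, rfl⟩ := (hmem2 u).mp hu
    obtain ⟨t, rfl⟩ := (hmem2 v).mp hv
    simp only [lie_smul, smul_lie, lie_self, smul_zero]
    exact LieSubmodule.zero_mem ⊥
  exact LieAlgebra.IsSolvable.mk hD3

/-- From a central isotropic dup vector, build double extension data. -/
lemma QLA_central_case (B : LinearMap.BilinForm ℂ g)
    (hsymm : ∀ x y : g, B x y = B y x)
    (hnondeg : B.Nondegenerate)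
    (hinv : ∀ x y z : g, B ⁅x, y⁆ z = B x ⁅y, z⁆)
    {X0 : g} (hne : X0 ≠ 0) (hiso : B X0 X0 = 0) (hdup : QLA_DupCond B X0)
    (hcent : ∀ v : g, ⁅v, X0⁆ = 0) :
    HasDoubleExtensionData B := by
  obtain ⟨Y, hY⟩ : ∃ Y : g, B X0 Y ≠ 0 := by
    by_contra hc
    push_neg at hc
    exact hne (hnondeg.1 X0 hc)
  set Y1 : g := (B X0 Y)⁻¹ • Y with hY1
  have hpair1 : B X0 Y1 = 1 := by
    rw [hY1, map_smul, smul_eq_mul, inv_mul_cancel₀ hY]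
  set Y0 : g := Y1 - (B Y1 Y1 / 2) • X0 with hY0
  have hpair : B X0 Y0 = 1 := by
    rw [hY0]
    simp only [map_sub, map_smul, smul_eq_mul]
    rw [hpair1, hiso]
    ring
  refine ⟨X0, Y0, hiso, ?_, hpair, hcent Y0, fun X Y' =>
    QLA_master B hsymm hnondeg hinv hdup hpair X Y'⟩
  rw [hY0]
  simp only [map_sub, map_smul, LinearMap.sub_apply, LinearMap.smul_apply, smul_eq_mul]
  rw [hiso, hpair1, hsymm Y1 X0, hpair1]
  ring

/-- Case `B X0 X0 ≠ 0`: produce a nonzero isotropic dup vector. -/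
lemma QLA_nonisotropic_case [Module.Finite ℂ g] (B : LinearMap.BilinForm ℂ g)
    (hsymm : ∀ x y : g, B x y = B y x)
    (hnondeg : B.Nondegenerate)
    (hinv : ∀ x y z : g, B ⁅x, y⁆ z = B x ⁅y, z⁆)
    (hnonabelian : ¬ ∀ x y : g, ⁅x, y⁆ = 0)
    (hsolv : LieAlgebra.IsSolvable g)
    {X0 : g} (hdup : QLA_DupCond B X0) (hc : B X0 X0 ≠ 0) :
    ∃ X1 : g, X1 ≠ 0 ∧ B X1 X1 = 0 ∧ QLA_DupCond B X1 := by
  classical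
  obtain ⟨Y0, hY0def⟩ : ∃ y : g, y = (B X0 X0)⁻¹ • X0 := ⟨_, rfl⟩
  have hpair : B X0 Y0 = 1 := by rw [hY0def, map_smul, smul_eq_mul, inv_mul_cancel₀ hc]
  have hm : ∀ X Y' : g, ⁅X, Y'⁆ = B X0 X • ⁅Y0, Y'⁆ - B X0 Y' • ⁅Y0, X⁆ + B ⁅Y0, X⁆ Y' • X0 :=
    QLA_master B hsymm hnondeg hinv hdup hpair
  have hbskew : ∀ u v : g, B ⁅Y0, u⁆ v = - B ⁅Y0, v⁆ u := fun u v => QLA_skew B hinv Y0 v u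
  have hY0X0 : ⁅Y0, X0⁆ = 0 := by rw [hY0def, smul_lie, lie_self, smul_zero]
  have hX0Y0 : ⁅X0, Y0⁆ = 0 := by rw [hY0def, lie_smul, lie_self, smul_zero]
  have haC : ∀ v : g, B X0 ⁅Y0, v⁆ = 0 := by
    intro v
    rw [← hinv, hX0Y0]
    simp
  have hbX0 : ∀ x : g, B ⁅Y0, x⁆ X0 = 0 := by
    intro x
    rw [hbskew, hY0X0]
    simp
  -- auxiliary expansions
  have hCbr : ∀ Y W : g, ⁅Y0, ⁅Y, W⁆⁆
      = B X0 Y • ⁅Y0, ⁅Y0, W⁆⁆ - B X0 W • ⁅Y0, ⁅Y0, Y⁆⁆ := by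
    intro Y W
    conv_lhs => rw [hm Y W]
    rw [lie_add, lie_sub, lie_smul, lie_smul, lie_smul, hY0X0, smul_zero, add_zero]
  have haBr : ∀ Y W : g, B X0 ⁅Y, W⁆ = B X0 X0 * B ⁅Y0, Y⁆ W := by
    intro Y W
    conv_lhs => rw [hm Y W]
    simp only [map_add, map_sub, map_smul, smul_eq_mul]
    rw [haC W, haC Y]
    ring
  have hbBr : ∀ V Y W : g, B ⁅Y0, V⁆ ⁅Y, W⁆
      = B X0 Y * B ⁅Y0, V⁆ ⁅Y0, W⁆ - B X0 W * B ⁅Y0, V⁆ ⁅Y0, Y⁆ := by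
    intro V Y W
    conv_lhs => rw [hm Y W]
    simp only [map_add, map_sub, map_smul, smul_eq_mul]
    rw [hbX0 V]
    ring
  have hbBr2 : ∀ V X Y : g, B ⁅Y0, ⁅X, Y⁆⁆ V
      = -(B X0 X * B ⁅Y0, V⁆ ⁅Y0, Y⁆ - B X0 Y * B ⁅Y0, V⁆ ⁅Y0, X⁆) := by
    intro V X Y
    rw [hbskew, hbBr V X Y]
  -- the Jacobi relation
  have hR : ∀ X Y W : g,
      B ⁅Y0, Y⁆ W • ⁅Y0, X⁆ - B ⁅Y0, X⁆ W • ⁅Y0, Y⁆ + B ⁅Y0, X⁆ Y • ⁅Y0, W⁆ = 0 := by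
    intro X Y W
    have jac : ⁅X, ⁅Y, W⁆⁆ = ⁅⁅X, Y⁆, W⁆ + ⁅Y, ⁅X, W⁆⁆ := leibniz_lie X Y W
    have hA : ⁅X, ⁅Y, W⁆⁆
        = B X0 X • (B X0 Y • ⁅Y0, ⁅Y0, W⁆⁆ - B X0 W • ⁅Y0, ⁅Y0, Y⁆⁆)
          - (B X0 X0 * B ⁅Y0, Y⁆ W) • ⁅Y0, X⁆
          + (B X0 Y * B ⁅Y0, X⁆ ⁅Y0, W⁆ - B X0 W * B ⁅Y0, X⁆ ⁅Y0, Y⁆) • X0 := by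
      rw [hm X ⁅Y, W⁆, hCbr Y W, haBr Y W, hbBr X Y W]
    have hB : ⁅⁅X, Y⁆, W⁆
        = (B X0 X0 * B ⁅Y0, X⁆ Y) • ⁅Y0, W⁆
          - B X0 W • (B X0 X • ⁅Y0, ⁅Y0, Y⁆⁆ - B X0 Y • ⁅Y0, ⁅Y0, X⁆⁆)
          + (-(B X0 X * B ⁅Y0, W⁆ ⁅Y0, Y⁆ - B X0 Y * B ⁅Y0, W⁆ ⁅Y0, X⁆)) • X0 := by
      rw [hm ⁅X, Y⁆ W, hbBr2 W X Y, haBr X Y, hCbr X Y]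
    have hC : ⁅Y, ⁅X, W⁆⁆
        = B X0 Y • (B X0 X • ⁅Y0, ⁅Y0, W⁆⁆ - B X0 W • ⁅Y0, ⁅Y0, X⁆⁆)
          - (B X0 X0 * B ⁅Y0, X⁆ W) • ⁅Y0, Y⁆
          + (B X0 X * B ⁅Y0, Y⁆ ⁅Y0, W⁆ - B X0 W * B ⁅Y0, Y⁆ ⁅Y0, X⁆) • X0 := by
      rw [hm Y ⁅X, W⁆, hCbr X W, haBr X W, hbBr Y X W]
    rw [hA, hB, hC, hsymm ⁅Y0, W⁆ ⁅Y0, Y⁆, hsymm ⁅Y0, W⁆ ⁅Y0, X⁆,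
      hsymm ⁅Y0, Y⁆ ⁅Y0, X⁆] at jac
    have jkey : B X0 X0 • (B ⁅Y0, Y⁆ W • ⁅Y0, X⁆ - B ⁅Y0, X⁆ W • ⁅Y0, Y⁆
        + B ⁅Y0, X⁆ Y • ⁅Y0, W⁆) = 0 := by
      linear_combination (norm := module) -jac
    rcases smul_eq_zero.mp jkey with h | h
    · exact absurd h hc
    · exact h
  -- some bracket is nonzero
  obtain ⟨Ya, Wa, hba⟩ : ∃ Ya Wa : g, B ⁅Y0, Ya⁆ Wa ≠ 0 := by
    by_contra hcon
    push_neg at hcon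
    apply hnonabelian
    intro x y
    have hCzero : ∀ w : g, ⁅Y0, w⁆ = 0 := fun w => hnondeg.1 _ (hcon w)
    rw [hm x y, hCzero x, hCzero y]
    simp
  obtain ⟨Yb, hYbdef⟩ : ∃ yb : g, yb = (B ⁅Y0, Ya⁆ Wa)⁻¹ • Ya := ⟨_, rfl⟩
  obtain ⟨u, hu⟩ : ∃ u : g, u = ⁅Y0, Yb⁆ := ⟨_, rfl⟩
  obtain ⟨v, hv⟩ : ∃ v : g, v = ⁅Y0, Wa⁆ := ⟨_, rfl⟩
  have hb1 : B u Wa = 1 := by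
    rw [hu, hYbdef, lie_smul, map_smul, LinearMap.smul_apply, smul_eq_mul,
      inv_mul_cancel₀ hba]
  have hCX : ∀ X : g, ⁅Y0, X⁆ = B u X • v - B v X • u := by
    intro X
    have h := hR X Yb Wa
    rw [← hu, ← hv] at h
    rw [hb1, one_smul] at h
    have e1 : B ⁅Y0, X⁆ Wa = - B v X := by rw [hbskew X Wa, ← hv]
    have e2 : B ⁅Y0, X⁆ Yb = - B u X := by rw [hbskew X Yb, ← hu]
    rw [e1, e2] at h
    linear_combination (norm := module) h
  have hbform : ∀ X V : g, B ⁅Y0, X⁆ V = B u X * B v V - B v X * B u V := by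
    intro X V
    rw [hCX X, map_sub, map_smul, map_smul]
    simp [smul_eq_mul]
  have hau : B X0 u = 0 := by rw [hu]; exact haC Yb
  have hav : B X0 v = 0 := by rw [hv]; exact haC Wa
  have hId : ∀ X Y T : g, B ⁅X, Y⁆ T
      = B X0 X * (B u Y * B v T - B v Y * B u T)
        - B X0 Y * (B u X * B v T - B v X * B u T)
        + (B u X * B v Y - B v X * B u Y) * B X0 T := by
    intro X Y T
    rw [hm X Y]
    simp only [map_add, map_sub, map_smul, LinearMap.add_apply, LinearMap.sub_apply,
      LinearMap.smul_apply, smul_eq_mul]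
    rw [hbform Y T, hbform X T, hbform X Y]
  have huYb : B u Yb = 0 := by rw [hu]; exact QLA_alt2 B hinv Y0 Yb
  have hvYb : B v Yb = -1 := by
    rw [hv, hbskew Wa Yb, ← hu, hb1]
  by_cases hD : B u u * B v v - B u v * B u v = 0
  · by_cases he : B u u = 0
    · refine ⟨u, ?_, he, ?_⟩
      · intro h0
        rw [h0] at hb1
        simp at hb1
      · intro X Y Zv T
        rw [hId Y Zv T, hId X Zv T, hId X Y T, hId X Y Zv]
        ring
    · obtain ⟨X1, hX1⟩ : ∃ x : g, x = v - (B u v / B u u) • u := ⟨_, rfl⟩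
      have hX1v : ∀ t : g, B X1 t = B v t - (B u v / B u u) * B u t := by
        intro t
        rw [hX1, map_sub, map_smul]
        simp [smul_eq_mul]
      refine ⟨X1, ?_, ?_, ?_⟩
      · intro h0
        have h1 := hX1v Yb
        rw [h0, hvYb, huYb] at h1
        simp at h1
      · have h1 : B v X1 = B v v - (B u v / B u u) * B v u := by
          rw [hX1, map_sub, map_smul]
          simp [smul_eq_mul]
        have h2 : B u X1 = B u v - (B u v / B u u) * B u u := by
          rw [hX1, map_sub, map_smul]
          simp [smul_eq_mul]
        rw [hX1v X1, h1, h2, hsymm v u]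
        field_simp
        linear_combination hD
      · intro X Y Zv T
        rw [hX1v X, hX1v Y, hX1v Zv, hX1v T, hId Y Zv T, hId X Zv T, hId X Y T, hId X Y Zv]
        ring
  · -- nondegenerate 2x2 block contradicts solvability
    exfalso
    have huv : ⁅u, v⁆ = (B u u * B v v - B u v * B u v) • X0 := by
      rw [hm u v, hau, hav, hbform u v, hsymm v u]
      module
    have hXu : ⁅X0, u⁆ = B X0 X0 • (B u u • v - B u v • u) := by
      rw [hm X0 u, hau, hY0X0, hCX u, hsymm v u]
      simp only [map_zero, LinearMap.zero_apply, zero_smul, smul_zero, sub_zero, add_zero]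
    have hXv : ⁅X0, v⁆ = B X0 X0 • (B u v • v - B v v • u) := by
      rw [hm X0 v, hav, hY0X0, hCX v]
      simp only [map_zero, LinearMap.zero_apply, zero_smul, smul_zero, sub_zero, add_zero]
    have hbr : ∀ (k : ℕ) (x y : g), x ∈ LieAlgebra.derivedSeries ℂ g k →
        y ∈ LieAlgebra.derivedSeries ℂ g k → ⁅x, y⁆ ∈ LieAlgebra.derivedSeries ℂ g (k+1) := by
      intro k x y hx hy
      rw [show LieAlgebra.derivedSeries ℂ g (k+1) = _ from
        LieAlgebra.derivedSeriesOfIdeal_succ ℂ g ⊤ k]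
      exact LieSubmodule.lie_mem_lie hx hy
    have hcD : B X0 X0 * (B u u * B v v - B u v * B u v) ≠ 0 := mul_ne_zero hc hD
    have hind : ∀ k : ℕ, X0 ∈ LieAlgebra.derivedSeries ℂ g k ∧
        u ∈ LieAlgebra.derivedSeries ℂ g k ∧ v ∈ LieAlgebra.derivedSeries ℂ g k := by
      intro k
      induction k with
      | zero => exact ⟨LieSubmodule.mem_top _, LieSubmodule.mem_top _, LieSubmodule.mem_top _⟩
      | succ k ih =>
        obtain ⟨hX0k, huk, hvk⟩ := ih
        have m1 := hbr k X0 u hX0k huk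
        have m2 := hbr k X0 v hX0k hvk
        have m3 := hbr k u v huk hvk
        have hX0' : X0 ∈ LieAlgebra.derivedSeries ℂ g (k+1) := by
          rw [huv] at m3
          have h2 := (LieAlgebra.derivedSeries ℂ g (k+1)).smul_mem
            (B u u * B v v - B u v * B u v)⁻¹ m3
          rwa [smul_smul, inv_mul_cancel₀ hD, one_smul] at h2
        have hcombu : B u v • ⁅X0, u⁆ - B u u • ⁅X0, v⁆
            = (B X0 X0 * (B u u * B v v - B u v * B u v)) • u := by
          rw [hXu, hXv]
          match_scalars <;> ring
        have hcombv : B v v • ⁅X0, u⁆ - B u v • ⁅X0, v⁆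
            = (B X0 X0 * (B u u * B v v - B u v * B u v)) • v := by
          rw [hXu, hXv]
          match_scalars <;> ring
        have hu' : u ∈ LieAlgebra.derivedSeries ℂ g (k+1) := by
          have hmem := (LieAlgebra.derivedSeries ℂ g (k+1)).sub_mem
            ((LieAlgebra.derivedSeries ℂ g (k+1)).smul_mem (B u v) m1)
            ((LieAlgebra.derivedSeries ℂ g (k+1)).smul_mem (B u u) m2)
          rw [hcombu] at hmem
          have h2 := (LieAlgebra.derivedSeries ℂ g (k+1)).smul_mem
            (B X0 X0 * (B u u * B v v - B u v * B u v))⁻¹ hmem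
          rwa [smul_smul, inv_mul_cancel₀ hcD, one_smul] at h2
        have hv' : v ∈ LieAlgebra.derivedSeries ℂ g (k+1) := by
          have hmem := (LieAlgebra.derivedSeries ℂ g (k+1)).sub_mem
            ((LieAlgebra.derivedSeries ℂ g (k+1)).smul_mem (B v v) m1)
            ((LieAlgebra.derivedSeries ℂ g (k+1)).smul_mem (B u v) m2)
          rw [hcombv] at hmem
          have h2 := (LieAlgebra.derivedSeries ℂ g (k+1)).smul_mem
            (B X0 X0 * (B u u * B v v - B u v * B u v))⁻¹ hmem
          rwa [smul_smul, inv_mul_cancel₀ hcD, one_smul] at h2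
        exact ⟨hX0', hu', hv'⟩
    obtain ⟨n, hn⟩ := (LieAlgebra.isSolvable_iff ℂ g).mp hsolv
    have hmem := (hind n).1
    rw [hn] at hmem
    have hX00 : X0 = 0 := by simpa using hmem
    apply hc
    rw [hX00]
    simp

/-- Case `B X0 X0 = 0`: produce a nonzero isotropic *central* dup vector. -/
lemma QLA_isotropic_case [Module.Finite ℂ g] (B : LinearMap.BilinForm ℂ g)
    (hsymm : ∀ x y : g, B x y = B y x)
    (hnondeg : B.Nondegenerate)
    (hinv : ∀ x y z : g, B ⁅x, y⁆ z = B x ⁅y, z⁆)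
    (hsolv : LieAlgebra.IsSolvable g)
    {X0 : g} (hne : X0 ≠ 0) (hdup : QLA_DupCond B X0) (hc : B X0 X0 = 0) :
    ∃ X1 : g, X1 ≠ 0 ∧ B X1 X1 = 0 ∧ QLA_DupCond B X1 ∧ ∀ v : g, ⁅v, X1⁆ = 0 := by
  classical
  obtain ⟨Y1, hpair⟩ : ∃ y : g, B X0 y = 1 := by
    obtain ⟨Y, hY⟩ : ∃ Y : g, B X0 Y ≠ 0 := by
      by_contra hcon
      push_neg at hcon
      exact hne (hnondeg.1 X0 hcon)
    exact ⟨(B X0 Y)⁻¹ • Y, by rw [map_smul, smul_eq_mul, inv_mul_cancel₀ hY]⟩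
  have hm : ∀ X Y' : g, ⁅X, Y'⁆ = B X0 X • ⁅Y1, Y'⁆ - B X0 Y' • ⁅Y1, X⁆ + B ⁅Y1, X⁆ Y' • X0 :=
    QLA_master B hsymm hnondeg hinv hdup hpair
  obtain ⟨Z, hZdef⟩ : ∃ z : g, z = ⁅Y1, X0⁆ := ⟨_, rfl⟩
  have hbskew : ∀ u v : g, B ⁅Y1, u⁆ v = - B ⁅Y1, v⁆ u := fun u v => QLA_skew B hinv Y1 v u
  have hz1 : B Z Y1 = 0 := by rw [hZdef]; exact QLA_alt1 B hinv Y1 X0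
  have haZ : B X0 Z = 0 := by
    have h := QLA_alt1 B hinv X0 Y1
    rw [hinv] at h
    rw [hZdef]
    exact h
  have hXY1 : ⁅X0, Y1⁆ = -Z := by
    rw [hZdef]
    exact neg_eq_iff_eq_neg.mp (lie_skew Y1 X0)
  have haC : ∀ v : g, B X0 ⁅Y1, v⁆ = - B Z v := by
    intro v
    rw [← hinv, hXY1]
    simp
  by_cases hZ0 : Z = 0
  · -- X0 itself is central
    refine ⟨X0, hne, hc, hdup, ?_⟩
    intro v
    have e1 : B ⁅Y1, v⁆ X0 = 0 := by
      rw [hbskew, ← hZdef, hZ0]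
      simp
    rw [hm v X0, ← hZdef, hZ0, hc, e1]
    simp
  -- the key consequence of the Jacobi identity
  have hstar : ∀ X W' : g, B X0 X = 0 → B X0 W' = 0 →
      B Z W' • ⁅Y1, X⁆ = B Z X • ⁅Y1, W'⁆ + B ⁅Y1, X⁆ W' • Z := by
    intro X W' haX haW
    have jac : ⁅X, ⁅Y1, W'⁆⁆ = ⁅⁅X, Y1⁆, W'⁆ + ⁅Y1, ⁅X, W'⁆⁆ := leibniz_lie X Y1 W'
    have hA : ⁅X, ⁅Y1, W'⁆⁆ = B Z W' • ⁅Y1, X⁆ + B ⁅Y1, X⁆ ⁅Y1, W'⁆ • X0 := by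
      rw [hm X ⁅Y1, W'⁆, haX, haC W']
      module
    have hB : ⁅⁅X, Y1⁆, W'⁆ = B Z X • ⁅Y1, W'⁆ + B ⁅Y1, W'⁆ ⁅Y1, X⁆ • X0 := by
      rw [← lie_skew X Y1, neg_lie, hm ⁅Y1, X⁆ W', haC X, haW,
        hbskew ⁅Y1, X⁆ W']
      module
    have hC : ⁅Y1, ⁅X, W'⁆⁆ = B ⁅Y1, X⁆ W' • Z := by
      rw [hm X W', haX, haW]
      simp only [zero_smul, sub_zero, zero_add, zero_sub, neg_zero]
      rw [lie_smul, ← hZdef]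
    rw [hA, hB, hC, hsymm ⁅Y1, W'⁆ ⁅Y1, X⁆] at jac
    linear_combination (norm := module) jac
  have hUX0 : ∀ U : g, ⁅U, X0⁆ = B X0 U • Z - B Z U • X0 := by
    intro U
    have e1 : B ⁅Y1, U⁆ X0 = - B Z U := by
      rw [hbskew, ← hZdef]
    rw [hm U X0, ← hZdef, hc, e1]
    module
  -- find W with B X0 W = 0 and B Z W = 1
  obtain ⟨W, haW, hzW⟩ : ∃ w : g, B X0 w = 0 ∧ B Z w = 1 := by
    obtain ⟨W0, haW0, hzW0⟩ : ∃ W0 : g, B X0 W0 = 0 ∧ B Z W0 ≠ 0 := by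
      by_contra hcon
      push_neg at hcon
      apply hZ0
      apply hnondeg.1
      intro v
      have h1 : B X0 (v - B X0 v • Y1) = 0 := by
        rw [map_sub, map_smul, smul_eq_mul, hpair]
        ring
      have h2 := hcon _ h1
      rw [map_sub, map_smul, smul_eq_mul, hz1] at h2
      linear_combination h2
    refine ⟨(B Z W0)⁻¹ • W0, ?_, ?_⟩
    · rw [map_smul, smul_eq_mul, haW0]
      ring
    · rw [map_smul, smul_eq_mul, inv_mul_cancel₀ hzW0]
  by_cases hz2 : B Z Z = 0
  · -- construct the central isotropic vector Z + s • X0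
    have hCV0 : ∀ u : g, B X0 u = 0 → B Z u = 0 → ⁅Y1, u⁆ = B ⁅Y1, u⁆ W • Z := by
      intro u hu1 hu2
      have h := hstar u W hu1 haW
      rwa [hzW, hu2, one_smul, zero_smul, zero_add] at h
    have hCv : ∀ u : g, ⁅Y1, u⁆ = B Z u • ⁅Y1, W⁆ - B ⁅Y1, W⁆ u • Z := by
      intro u
      obtain ⟨u0, hu0⟩ : ∃ u0 : g, u0 = u - B X0 u • Y1 - B Z u • W := ⟨_, rfl⟩
      have ha0 : B X0 u0 = 0 := by
        rw [hu0, map_sub, map_sub, map_smul, map_smul, smul_eq_mul, smul_eq_mul, hpair, haW]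
        ring
      have hz0 : B Z u0 = 0 := by
        rw [hu0, map_sub, map_sub, map_smul, map_smul, smul_eq_mul, smul_eq_mul, hz1, hzW]
        ring
      have h1 : ⁅Y1, u⁆ = ⁅Y1, u0⁆ + B X0 u • ⁅Y1, Y1⁆ + B Z u • ⁅Y1, W⁆ := by
        have hd : u = u0 + B X0 u • Y1 + B Z u • W := by rw [hu0]; module
        conv_lhs => rw [hd]
        rw [lie_add, lie_add, lie_smul, lie_smul]
      have h2 : ⁅Y1, u0⁆ = B ⁅Y1, u0⁆ W • Z := hCV0 u0 ha0 hz0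
      have h3 : B ⁅Y1, u0⁆ W = - B ⁅Y1, W⁆ u := by
        rw [hbskew, hu0, map_sub, map_sub, map_smul, map_smul, smul_eq_mul, smul_eq_mul,
          QLA_alt1 B hinv Y1 W, QLA_alt2 B hinv Y1 W]
        ring
      rw [h1, h2, h3, lie_self]
      module
    have hbd : ∀ u v : g, B ⁅Y1, u⁆ v = B Z u * B ⁅Y1, W⁆ v - B Z v * B ⁅Y1, W⁆ u := by
      intro u v
      conv_lhs => rw [hCv u]
      rw [map_sub, map_smul, map_smul]
      simp only [LinearMap.sub_apply, LinearMap.smul_apply, smul_eq_mul]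
      rw [hsymm Z v]
      rw [hsymm v Z]
      ring
    obtain ⟨s, hsdef⟩ : ∃ s : ℂ, s = B ⁅Y1, W⁆ Z := ⟨_, rfl⟩
    obtain ⟨X1, hX1def⟩ : ∃ x : g, x = Z + s • X0 := ⟨_, rfl⟩
    have hX1v : ∀ v : g, B X1 v = B Z v + s * B X0 v := by
      intro v
      rw [hX1def, map_add, map_smul]
      simp [smul_eq_mul]
    have hX1ne : X1 ≠ 0 := by
      intro h0
      have hBW := hX1v W
      rw [h0, hzW, haW] at hBW
      simp at hBW
    have hX1iso : B X1 X1 = 0 := by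
      have h1 : B Z X1 = B Z Z + s * B Z X0 := by
        rw [hX1def, map_add, map_smul, smul_eq_mul]
      have h2 : B X0 X1 = B X0 Z + s * B X0 X0 := by
        rw [hX1def, map_add, map_smul, smul_eq_mul]
      rw [hX1v X1, h1, h2, hz2, haZ, hc, hsymm Z X0, haZ]
      ring
    have hId : ∀ X Y' T : g, B ⁅X, Y'⁆ T =
        B X0 X * (B Z Y' * B ⁅Y1, W⁆ T - B Z T * B ⁅Y1, W⁆ Y')
        - B X0 Y' * (B Z X * B ⁅Y1, W⁆ T - B Z T * B ⁅Y1, W⁆ X)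
        + (B Z X * B ⁅Y1, W⁆ Y' - B Z Y' * B ⁅Y1, W⁆ X) * B X0 T := by
      intro X Y' T
      rw [hm X Y']
      simp only [map_add, map_sub, map_smul, LinearMap.add_apply, LinearMap.sub_apply,
        LinearMap.smul_apply, smul_eq_mul]
      rw [hbd Y' T, hbd X T, hbd X Y']
    have hX1dup : QLA_DupCond B X1 := by
      intro X Y' Zv T
      rw [hX1v X, hX1v Y', hX1v Zv, hX1v T, hId Y' Zv T, hId X Zv T, hId X Y' T, hId X Y' Zv]
      ring
    have hX1cent : ∀ v : g, ⁅v, X1⁆ = 0 := by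
      intro v
      have hYZ : ⁅Y1, Z⁆ = - s • Z := by
        rw [hCv Z, hz2, ← hsdef]
        module
      have hvZ : ⁅v, Z⁆ = -(B X0 v * s) • Z + (B Z v * s) • X0 := by
        rw [hm v Z, hYZ, haZ, hbd v Z, hz2, ← hsdef]
        match_scalars <;> ring
      have hvX0 : ⁅v, X0⁆ = B X0 v • Z - B Z v • X0 := hUX0 v
      rw [hX1def, lie_add, lie_smul, hvZ, hvX0]
      match_scalars <;> ring
    exact ⟨X1, hX1ne, hX1iso, hX1dup, hX1cent⟩
  · -- B Z Z ≠ 0 contradicts solvability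
    exfalso
    have hXZ : ⁅X0, Z⁆ = B Z Z • X0 := by
      rw [hm X0 Z, ← hZdef, hc, haZ]
      module
    have haZU : ∀ U : g, B X0 ⁅Z, U⁆ = B Z Z * B X0 U := by
      intro U
      rw [hm Z U]
      simp only [map_add, map_sub, map_smul, smul_eq_mul]
      rw [haZ, haC Z, hc]
      ring
    have hbr : ∀ (k : ℕ) (x y : g), x ∈ LieAlgebra.derivedSeries ℂ g k →
        y ∈ LieAlgebra.derivedSeries ℂ g k → ⁅x, y⁆ ∈ LieAlgebra.derivedSeries ℂ g (k+1) := by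
      intro k x y hx hy
      rw [show LieAlgebra.derivedSeries ℂ g (k+1) = _ from
        LieAlgebra.derivedSeriesOfIdeal_succ ℂ g ⊤ k]
      exact LieSubmodule.lie_mem_lie hx hy
    have hind : ∀ k : ℕ, X0 ∈ LieAlgebra.derivedSeries ℂ g k ∧
        Z ∈ LieAlgebra.derivedSeries ℂ g k ∧
        ∃ U, U ∈ LieAlgebra.derivedSeries ℂ g k ∧ B X0 U = 1 := by
      intro k
      induction k with
      | zero => exact ⟨LieSubmodule.mem_top _, LieSubmodule.mem_top _, Y1,
          LieSubmodule.mem_top _, hpair⟩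
      | succ k ih =>
        obtain ⟨hX0k, hZk, U, hUk, haU⟩ := ih
        have hX0' : X0 ∈ LieAlgebra.derivedSeries ℂ g (k+1) := by
          have h1 := hbr k X0 Z hX0k hZk
          rw [hXZ] at h1
          have h2 := (LieAlgebra.derivedSeries ℂ g (k+1)).smul_mem (B Z Z)⁻¹ h1
          rwa [smul_smul, inv_mul_cancel₀ hz2, one_smul] at h2
        have hZ' : Z ∈ LieAlgebra.derivedSeries ℂ g (k+1) := by
          have h1 := hbr k U X0 hUk hX0k
          rw [hUX0 U, haU, one_smul] at h1
          have h2 := (LieAlgebra.derivedSeries ℂ g (k+1)).add_mem h1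
            ((LieAlgebra.derivedSeries ℂ g (k+1)).smul_mem (B Z U) hX0')
          rwa [sub_add_cancel] at h2
        refine ⟨hX0', hZ', (B Z Z)⁻¹ • ⁅Z, U⁆,
          (LieAlgebra.derivedSeries ℂ g (k+1)).smul_mem _ (hbr k Z U hZk hUk), ?_⟩
        rw [map_smul, smul_eq_mul, haZU U, haU]
        field_simp
    obtain ⟨n, hn⟩ := (LieAlgebra.isSolvable_iff ℂ g).mp hsolv
    have hmem := (hind n).1
    rw [hn] at hmem
    exact hne (by simpa using hmem)

end QLA

/-- A non-Abelian quadratic Lie algebra is solvable and singular if and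
only if it admits double-extension data. -/
theorem solvable_singular_iff_double_extension
    {g : Type*} [LieRing g] [LieAlgebra ℂ g] [Module.Finite ℂ g]
    (B : LinearMap.BilinForm ℂ g)
    (hsymm : ∀ x y : g, B x y = B y x)
    (hnondeg : B.Nondegenerate)
    (hinv : ∀ x y z : g, B ⁅x, y⁆ z = B x ⁅y, z⁆)
    (hnonabelian : ¬ ∀ x y : g, ⁅x, y⁆ = 0) :
    (LieAlgebra.IsSolvable g ∧ 1 ≤ dup B) ↔ HasDoubleExtensionData B := by
  constructor
  · rintro ⟨hsolv, hdup1⟩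
    -- extract a nonzero element of the dup space
    have hfd : FiniteDimensional ℂ g := inferInstance
    obtain ⟨α, hαmem, hαne⟩ : ∃ α : Module.Dual ℂ g, α ∈ dupSubmodule B ∧ α ≠ 0 := by
      have hpos : 0 < Module.finrank ℂ (dupSubmodule B) := hdup1
      rw [Module.finrank_pos_iff] at hpos
      obtain ⟨x, y, hxy⟩ := hpos
      rcases eq_or_ne (x : Module.Dual ℂ g) 0 with h0 | h0
      · refine ⟨(y : Module.Dual ℂ g), y.2, ?_⟩
        intro hy0
        exact hxy (Subtype.ext (by rw [h0, hy0]))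
      · exact ⟨(x : Module.Dual ℂ g), x.2, h0⟩
    -- represent α via B
    set X0 : g := (LinearMap.BilinForm.toDual B hnondeg).symm α with hX0def
    have hX0α : ∀ v : g, B X0 v = α v := by
      intro v
      have : LinearMap.BilinForm.toDual B hnondeg X0 = α :=
        (LinearMap.BilinForm.toDual B hnondeg).apply_symm_apply α
      calc B X0 v = (LinearMap.BilinForm.toDual B hnondeg X0) v := rfl
      _ = α v := by rw [this]
    have hX0dup : QLA_DupCond B X0 := by
      intro X Y Z T
      rw [hX0α, hX0α, hX0α, hX0α]
      exact hαmem X Y Z T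
    have hX0ne : X0 ≠ 0 := by
      intro h0
      apply hαne
      ext v
      rw [← hX0α v, h0]
      simp
    -- reduce to an isotropic dup vector
    obtain ⟨X1, hX1ne, hX1iso, hX1dup⟩ :
        ∃ X1 : g, X1 ≠ 0 ∧ B X1 X1 = 0 ∧ QLA_DupCond B X1 := by
      rcases eq_or_ne (B X0 X0) 0 with h | h
      · exact ⟨X0, hX0ne, h, hX0dup⟩
      · exact QLA_nonisotropic_case B hsymm hnondeg hinv hnonabelian hsolv hX0dup h
    obtain ⟨X2, hX2ne, hX2iso, hX2dup, hX2cent⟩ :=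
      QLA_isotropic_case B hsymm hnondeg hinv hsolv hX1ne hX1dup hX1iso
    exact QLA_central_case B hsymm hnondeg hinv hX2ne hX2iso hX2dup hX2cent
  · rintro ⟨X0, Y0, h1, h2, h3, h4, h5⟩
    refine ⟨QLA_solvable_of_data B X0 Y0 h1 h4 hinv h5, ?_⟩
    have hI : ∀ X Y T : g, B ⁅X, Y⁆ T
        = B X0 X * B ⁅Y0, Y⁆ T - B X0 Y * B ⁅Y0, X⁆ T + B ⁅Y0, X⁆ Y * B X0 T := by
      intro X Y T
      rw [h5 X Y]
      simp only [map_add, map_sub, map_smul, LinearMap.add_apply, LinearMap.sub_apply,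
        LinearMap.smul_apply, smul_eq_mul]
    have hmem : (B X0 : Module.Dual ℂ g) ∈ dupSubmodule B := by
      intro X Y Z T
      rw [hI Y Z T, hI X Z T, hI X Y T, hI X Y Z]
      ring
    have hne : (⟨B X0, hmem⟩ : dupSubmodule B) ≠ 0 := by
      intro hc
      have h0 : B X0 Y0 = 0 := by
        have := congrArg (fun f : dupSubmodule B => (f : Module.Dual ℂ g) Y0) hc
        simpa using this
      rw [h3] at h0
      exact one_ne_zero h0
    have : Nontrivial (dupSubmodule B) := nontrivial_of_ne _ _ hne
    exact Module.finrank_pos_iff.mpr this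
end

section
/- Let (g,B) be a quadratic Lie algebra admitting double-extension data (X0,Y0). Then g is a nilpotent Lie algebra if and only if the adjoint endomorphism ad(Y0) : g → g, x ↦ [Y0,x], is nilpotent. -/
/-- Let `(g,B)` be a quadratic Lie algebra with double-extension data
`(X0,Y0)`. Then `g` is nilpotent if and only if `ad(Y0)` is a nilpotent endomorphism. -/
theorem nilpotent_iff_ad_nilpotent
    {g : Type*} [LieRing g] [LieAlgebra ℂ g] [Module.Finite ℂ g]
    (B : LinearMap.BilinForm ℂ g)
    (hsymm : ∀ x y : g, B x y = B y x)
    (hnondeg : B.Nondegenerate)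
    (hinv : ∀ x y z : g, B ⁅x, y⁆ z = B x ⁅y, z⁆)
    (X0 Y0 : g)
    (hX0 : B X0 X0 = 0) (hY0 : B Y0 Y0 = 0) (hXY : B X0 Y0 = 1)
    (hYX : ⁅Y0, X0⁆ = 0)
    (hbracket : ∀ X Y : g,
      ⁅X, Y⁆ = B X0 X • ⁅Y0, Y⁆ - B X0 Y • ⁅Y0, X⁆ + B ⁅Y0, X⁆ Y • X0) :
    LieRing.IsNilpotent g ↔ IsNilpotent (LieAlgebra.ad ℂ g Y0) := by
  rw [LieAlgebra.isNilpotent_iff_forall (R := ℂ)]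
  constructor
  · intro h; exact h Y0
  · intro hD X
    set D := LieAlgebra.ad ℂ g Y0 with hDdef
    -- X0 is central
    have hcentral : ∀ Z : g, ⁅X0, Z⁆ = 0 := by
      intro Z
      rw [hbracket X0 Z, hX0, hYX]
      simp
    -- B X0 ⁅Z, Y⁆ = 0 for all Z Y
    have hf : ∀ Z Y : g, B X0 ⁅Z, Y⁆ = 0 := by
      intro Z Y
      rw [← hinv X0 Z Y, hcentral]
      simp
    obtain ⟨n, hn⟩ := hD
    set T := LieAlgebra.ad ℂ g X with hTdef
    have hTX0 : T X0 = 0 := by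
      have : ⁅X, X0⁆ = -⁅X0, X⁆ := by rw [← lie_skew]
      simp [hTdef, LieAlgebra.ad_apply, this, hcentral]
    -- key induction
    have key : ∀ Y : g, B X0 Y = 0 → ∀ k : ℕ, ∃ c : ℂ,
        (T ^ k) Y = (B X0 X) ^ k • (D ^ k) Y + c • X0 := by
      intro Y hY
      have hfD : ∀ k : ℕ, B X0 ((D ^ k) Y) = 0 := by
        intro k
        cases k with
        | zero => simpa using hY
        | succ m =>
          rw [pow_succ']
          simpa [hDdef, LieAlgebra.ad_apply] using hf Y0 ((D ^ m) Y)
      intro k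
      induction k with
      | zero => exact ⟨0, by simp⟩
      | succ m ih =>
        obtain ⟨c, hc⟩ := ih
        refine ⟨(B X0 X) ^ m * B ⁅Y0, X⁆ ((D ^ m) Y), ?_⟩
        rw [pow_succ', Module.End.mul_apply, hc, map_add, map_smul, map_smul, hTX0,
          smul_zero, add_zero]
        have hstep : T ((D ^ m) Y) =
            B X0 X • D ((D ^ m) Y) + B ⁅Y0, X⁆ ((D ^ m) Y) • X0 := by
          have := hbracket X ((D ^ m) Y)
          rw [hfD m] at this
          simpa [hTdef, hDdef, LieAlgebra.ad_apply] using this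
        have hend : (D ^ (m + 1)) Y = D ((D ^ m) Y) := by
          rw [pow_succ', Module.End.mul_apply]
        rw [hend, hstep, pow_succ']
        module
    refine ⟨n + 2, ?_⟩
    ext Y
    have hTY : B X0 (T Y) = 0 := by
      simpa [hTdef, LieAlgebra.ad_apply] using hf X Y
    obtain ⟨c, hc⟩ := key (T Y) hTY n
    rw [hn] at hc
    simp only [LinearMap.zero_apply, smul_zero, zero_add] at hc
    have : (T ^ (n + 2)) Y = T ((T ^ n) (T Y)) := by
      rw [show n + 2 = (n + 1) + 1 from rfl, pow_succ, Module.End.mul_apply,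
        pow_succ', Module.End.mul_apply]
    rw [this, hc, map_smul, hTX0, smul_zero]
    simp
end

section
/- Let C be a nilpotent complex n×n matrix with Cᵀ = −C and let λ be a nonzero complex number. Then there exists a complex n×n matrix U with Uᵀ·U = 1 such that U·C·U⁻¹ = λ·C. Consequently, for nilpotent C, C' in o(n,ℂ), C is O(n,ℂ)-conjugate to λ·C' for some nonzero λ if and only if C is O(n,ℂ)-conjugate to C'. -/
open Polynomial Matrix


lemma sqrtX_local (a : ℂ) (ha : a ≠ 0) (k : ℕ) :
    ∃ q : ℂ[X], (X - C a) ^ (k+1) ∣ q^2 - X := by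
  induction k with
  | zero =>
    obtain ⟨b, hb⟩ := IsAlgClosed.exists_pow_nat_eq a (n := 2) (by norm_num)
    refine ⟨C b, ?_⟩
    rw [pow_one, dvd_iff_isRoot]
    simp [IsRoot, hb]
  | succ k ih =>
    obtain ⟨q, r, hr⟩ := ih
    have hqa : q.eval a ^ 2 = a := by
      have h1 : (X - C a) ∣ q^2 - X := dvd_trans (dvd_pow_self _ (Nat.succ_ne_zero k)) ⟨r, hr⟩
      rw [dvd_iff_isRoot] at h1
      simp [IsRoot] at h1
      linear_combination h1
    have hq0 : q.eval a ≠ 0 := by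
      intro h; rw [h] at hqa; simp at hqa; exact ha hqa.symm
    set c : ℂ := -(r.eval a) / (2 * q.eval a) with hc
    refine ⟨q + C c * (X - C a)^(k+1), ?_⟩
    have expand : (q + C c * (X - C a)^(k+1))^2 - X
        = (X - C a)^(k+1) * (r + 2 * C c * q + C c ^2 * (X - C a)^(k+1)) := by
      linear_combination hr
    rw [expand, pow_succ]
    refine mul_dvd_mul_left _ ?_
    rw [dvd_iff_isRoot]
    simp only [IsRoot, eval_add, eval_mul, eval_pow, eval_ofNat, eval_C, eval_sub, eval_X,
      sub_self, zero_pow (Nat.succ_ne_zero k), mul_zero, add_zero]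
    field_simp [hc]
    rw [hc]; field_simp; ring

lemma sqrtX_combine {f g q₁ q₂ : ℂ[X]} (hco : IsCoprime f g)
    (h1 : f ∣ q₁^2 - X) (h2 : g ∣ q₂^2 - X) : ∃ q : ℂ[X], f * g ∣ q^2 - X := by
  obtain ⟨u, v, huv⟩ := hco
  refine ⟨q₁ * (v * g) + q₂ * (u * f), ?_⟩
  refine IsCoprime.mul_dvd ⟨u, v, huv⟩ ?_ ?_
  · have : f ∣ (q₁ * (v * g) + q₂ * (u * f)) - q₁ := by
      have : (q₁ * (v * g) + q₂ * (u * f)) - q₁ = (q₂ * u - q₁ * u) * f := by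
        linear_combination (q₁ : ℂ[X]) * huv
      rw [this]; exact Dvd.intro_left _ rfl
    obtain ⟨w, hw⟩ := this
    obtain ⟨s, hs⟩ := h1
    refine ⟨w * ((q₁ * (v * g) + q₂ * (u * f)) + q₁) + s, ?_⟩
    linear_combination ((q₁ * (v * g) + q₂ * (u * f)) + q₁) * hw + hs
  · have : g ∣ (q₁ * (v * g) + q₂ * (u * f)) - q₂ := by
      have : (q₁ * (v * g) + q₂ * (u * f)) - q₂ = (q₁ * v - q₂ * v) * g := by
        linear_combination (q₂ : ℂ[X]) * huv
      rw [this]; exact Dvd.intro_left _ rfl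
    obtain ⟨w, hw⟩ := this
    obtain ⟨s, hs⟩ := h2
    refine ⟨w * ((q₁ * (v * g) + q₂ * (u * f)) + q₂) + s, ?_⟩
    linear_combination ((q₁ * (v * g) + q₂ * (u * f)) + q₂) * hw + hs

lemma sqrtX_global_aux : ∀ d : ℕ, ∀ μ : ℂ[X], μ.natDegree = d → μ.eval 0 ≠ 0 →
    ∃ q : ℂ[X], μ ∣ q^2 - X := by
  intro d
  induction d using Nat.strong_induction_on with
  | _ d ih =>
  intro μ hd h0
  have hne : μ ≠ 0 := fun h => h0 (by simp [h])
  by_cases hdeg : μ.natDegree = 0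
  · -- μ is a nonzero constant, hence a unit
    have hμC : μ = C (μ.coeff 0) := Polynomial.eq_C_of_natDegree_eq_zero hdeg
    have : IsUnit μ := by
      rw [hμC]
      exact Polynomial.isUnit_C.mpr (Ne.isUnit (by
        rw [Polynomial.coeff_zero_eq_eval_zero]; exact h0))
    exact ⟨0, this.dvd⟩
  · obtain ⟨a, haroot⟩ := Complex.exists_root (f := μ) (by
      rwa [Polynomial.degree_eq_natDegree hne, Nat.cast_pos, Nat.pos_iff_ne_zero])
    have ha : a ≠ 0 := by rintro rfl; exact h0 haroot
    obtain ⟨ν, hfact, hnd⟩ := Polynomial.exists_eq_pow_rootMultiplicity_mul_and_not_dvd μ hne a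
    set k := Polynomial.rootMultiplicity a μ with hk
    have hk1 : 1 ≤ k := (Polynomial.le_rootMultiplicity_iff hne).mpr (by
      simpa [Polynomial.dvd_iff_isRoot] using haroot)
    have hν0 : ν.eval 0 ≠ 0 := by
      intro h
      apply h0
      rw [hfact]
      simp [h]
    have hνne : ν ≠ 0 := fun h => hν0 (by simp [h])
    have hcop : IsCoprime ((X - C a)^k) ν :=
      (((Polynomial.irreducible_X_sub_C a).coprime_iff_not_dvd).mpr hnd).pow_left
    have hndeg : ν.natDegree < d := by
      have : μ.natDegree = k + ν.natDegree := by
        rw [hfact, Polynomial.natDegree_mul (pow_ne_zero _ (Polynomial.X_sub_C_ne_zero a)) hνne]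
        simp [Polynomial.natDegree_pow]
      omega
    obtain ⟨q₂, hq₂⟩ := ih ν.natDegree hndeg ν rfl hν0
    obtain ⟨q₁, hq₁⟩ := sqrtX_local a ha (k-1)
    rw [Nat.sub_add_cancel hk1] at hq₁
    obtain ⟨q, hq⟩ := sqrtX_combine hcop hq₁ hq₂
    exact ⟨q, hfact ▸ hq⟩

lemma sqrtX_global (μ : ℂ[X]) (h0 : μ.eval 0 ≠ 0) : ∃ q : ℂ[X], μ ∣ q^2 - X :=
  sqrtX_global_aux μ.natDegree μ rfl h0


variable {n : ℕ}

lemma aeval_transpose (S : Matrix (Fin n) (Fin n) ℂ) (q : ℂ[X]) :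
    (aeval S q)ᵀ = aeval Sᵀ q := by
  rw [Polynomial.aeval_eq_sum_range, Polynomial.aeval_eq_sum_range]
  rw [Matrix.transpose_sum]
  refine Finset.sum_congr rfl fun i _ => ?_
  rw [Matrix.transpose_smul, Matrix.transpose_pow]

lemma aeval_commute {S B : Matrix (Fin n) (Fin n) ℂ} (h : Commute S B) (q : ℂ[X]) :
    Commute (aeval S q) B := by
  rw [Polynomial.aeval_eq_sum_range]
  exact Commute.sum_left _ _ _ fun i _ => (h.pow_left i).smul_left _

lemma matrix_sqrt (S : Matrix (Fin n) (Fin n) ℂ) (hS : IsUnit S) :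
    ∃ q : ℂ[X], (aeval S q) * (aeval S q) = S := by
  have hint := Matrix.isIntegral S
  have hμne : (minpoly ℂ S) ≠ 0 := minpoly.ne_zero hint
  have h0 : (minpoly ℂ S).eval 0 ≠ 0 := by
    intro h
    have hXdvd : X ∣ (minpoly ℂ S) := by
      rw [Polynomial.X_dvd_iff, Polynomial.coeff_zero_eq_eval_zero]; exact h
    obtain ⟨h1, hh1⟩ := hXdvd
    have haev : S * aeval S h1 = 0 := by
      have h3 := minpoly.aeval ℂ S
      rw [hh1] at h3
      simpa using h3
    obtain ⟨u, hu⟩ := hS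
    have h1z : aeval S h1 = 0 := by
      rw [← hu] at haev ⊢
      calc aeval (↑u : Matrix (Fin n) (Fin n) ℂ) h1
          = ↑u⁻¹ * (↑u * aeval (↑u : Matrix (Fin n) (Fin n) ℂ) h1) := by
            rw [← mul_assoc, Units.inv_mul, one_mul]
        _ = 0 := by rw [haev, mul_zero]
    have hdvd : (minpoly ℂ S) ∣ h1 := minpoly.dvd ℂ S h1z
    have hh1ne : h1 ≠ 0 := by rintro rfl; rw [mul_zero] at hh1; exact hμne hh1
    have h4 := Polynomial.natDegree_le_of_dvd hdvd hh1ne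
    have h2 : (minpoly ℂ S).natDegree = 1 + h1.natDegree := by
      rw [hh1, Polynomial.natDegree_mul Polynomial.X_ne_zero hh1ne, Polynomial.natDegree_X]
    omega
  obtain ⟨q, r, hr⟩ := sqrtX_global (minpoly ℂ S) h0
  refine ⟨q, ?_⟩
  have : aeval S (q^2 - X) = 0 := by
    rw [hr, _root_.map_mul, minpoly.aeval, zero_mul]
  simp only [map_sub, _root_.map_pow, Polynomial.aeval_X] at this
  have := sub_eq_zero.mp this
  rw [← sq]; exact this


noncomputable def sig (c : ℂ) : ℂ[X] →ₐ[ℂ] ℂ[X] := aeval (C c * X)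

lemma sig_X (c : ℂ) : sig c X = C c * X := aeval_X _

lemma sig_C (c r : ℂ) : sig c (C r) = C r := by
  rw [sig, ← Polynomial.algebraMap_eq, AlgHom.commutes, Polynomial.algebraMap_eq]

lemma sig_sig (a b : ℂ) (q : ℂ[X]) : sig a (sig b q) = sig (b * a) q := by
  have h1 : sig a (sig b q) = aeval (sig a (C b * X)) q := (aeval_algHom_apply (sig a) _ q).symm
  rw [h1]
  show aeval (sig a (C b * X)) q = aeval (C (b * a) * X) q
  rw [_root_.map_mul, sig_C, sig_X, ← mul_assoc, ← C_mul]

lemma sig_one (q : ℂ[X]) : sig 1 q = q := by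
  rw [sig, _root_.map_one, one_mul, aeval_X_left_apply]

/-- `sig c` scales any irreducible divisor of a power of `X`. -/
lemma sig_irr {c : ℂ} {p : ℂ[X]} (hp : Irreducible p) {m : ℕ} (hdvd : p ∣ X ^ m) :
    sig c p = C c * p := by
  have hprime : Prime p := hp.prime
  have hpX : p ∣ X := hprime.dvd_of_dvd_pow hdvd
  obtain ⟨d, hd⟩ := hpX
  rcases (Polynomial.irreducible_X (R := ℂ)).isUnit_or_isUnit hd with hu | hu
  · exact absurd hu hp.not_isUnit
  · obtain ⟨r, hr, hCr⟩ := Polynomial.isUnit_iff.mp hu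
    have hrne : r ≠ 0 := hr.ne_zero
    have hCrne : (C r : ℂ[X]) ≠ 0 := by simpa using hrne
    apply mul_right_cancel₀ hCrne
    have h2 : sig c (p * C r) = C c * X := by
      rw [hCr, ← hd, sig_X]
    rw [_root_.map_mul, sig_C] at h2
    rw [h2, hd, hCr]
    ring

lemma sig_stab {c : ℂ} {p : ℂ[X]} (hp : Irreducible p) {m e : ℕ}
    (hdvd : p ^ e ∣ X ^ m) :
    Ideal.span {p ^ e} ≤ Ideal.comap (sig c) (Ideal.span {p ^ e}) := by
  intro a ha
  rw [Ideal.mem_comap, Ideal.mem_span_singleton]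
  rw [Ideal.mem_span_singleton] at ha
  obtain ⟨b, rfl⟩ := ha
  rw [_root_.map_mul]
  rcases Nat.eq_zero_or_pos e with he | he
  · subst he; simp
  · have hpX : p ∣ X ^ m := dvd_trans (dvd_pow_self p he.ne') hdvd
    rw [_root_.map_pow, sig_irr hp hpX, mul_pow]
    exact Dvd.dvd.mul_right (Dvd.dvd.mul_left dvd_rfl _) _

lemma end_similar {M : Type} [AddCommGroup M] [Module ℂ M] [Module.Finite ℂ M]
    (f : M →ₗ[ℂ] M) {m : ℕ} (hf : f ^ m = 0) {lam : ℂ} (hlam : lam ≠ 0) :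
    ∃ g : M →ₗ[ℂ] M, Function.Bijective g ∧ ∀ v, g (f v) = lam • f (g v) := by
  classical
  have hpow : ∀ (k : ℕ) (w : M), (X ^ k : ℂ[X]) • Module.AEval'.of f w
      = Module.AEval'.of f ((f ^ k) w) := by
    intro k
    induction k with
    | zero => intro w; simp
    | succ k ih =>
      intro w
      rw [pow_succ, mul_smul, Module.AEval'.X_smul_of, ih, pow_succ,
        Module.End.mul_apply]
  have hNtor : ∀ x : Module.AEval' f, (X ^ m : ℂ[X]) • x = 0 := by
    intro x
    obtain ⟨v, rfl⟩ := (Module.AEval'.of f).surjective x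
    rw [hpow, hf]; simp
  have tors : Module.IsTorsion ℂ[X] (Module.AEval' f) := fun x =>
    ⟨⟨X ^ m, mem_nonZeroDivisors_of_ne_zero (pow_ne_zero _ Polynomial.X_ne_zero)⟩, hNtor x⟩
  obtain ⟨ι, hfin, p, hirr, e, ⟨eqv⟩⟩ := Module.equiv_directSum_of_isTorsion tors
  set Q : ι → Type := fun i => ℂ[X] ⧸ Submodule.span ℂ[X] {p i ^ e i} with hQ
  -- each factor is killed by X ^ m
  have hDtor : ∀ d : DirectSum ι Q, (X ^ m : ℂ[X]) • d = 0 := by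
    intro d
    obtain ⟨x, rfl⟩ := eqv.surjective d
    rw [← _root_.map_smul, hNtor, _root_.map_zero]
  have hXm : ∀ i, p i ^ e i ∣ X ^ m := by
    intro i
    have h1 := hDtor (DirectSum.lof ℂ[X] ι Q i (Ideal.Quotient.mk (Ideal.span {p i ^ e i}) 1))
    rw [← _root_.map_smul] at h1
    have h2 : (X ^ m : ℂ[X]) • (Ideal.Quotient.mk (Ideal.span {p i ^ e i}) 1 : Q i) = 0 := by
      have h3 := congrArg (DirectSum.component ℂ[X] ι Q i) h1
      rwa [DirectSum.component.lof_self, _root_.map_zero] at h3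
    rw [← Ideal.Quotient.mk_eq_mk, ← Submodule.Quotient.mk_smul,
      Submodule.Quotient.mk_eq_zero] at h2
    rw [← Ideal.mem_span_singleton]
    simpa using h2
  -- the twisting maps
  set T : (c : ℂ) → (DirectSum ι Q) →ₗ[ℂ] (DirectSum ι Q) := fun c =>
    DirectSum.toModule ℂ ι _ (fun i => (DirectSum.lof ℂ ι Q i).comp
      (Ideal.quotientMapₐ _ (sig c) (sig_stab (hirr i) (hXm i))).toLinearMap) with hT
  have hTof : ∀ (c : ℂ) (i) (a : ℂ[X]),
      T c (DirectSum.of Q i (Ideal.Quotient.mk (Ideal.span {p i ^ e i}) a))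
        = DirectSum.of Q i (Ideal.Quotient.mk (Ideal.span {p i ^ e i}) (sig c a)) := by
    intro c i a
    rw [← DirectSum.lof_eq_of ℂ, hT, DirectSum.toModule_lof]
    simp only [LinearMap.comp_apply, AlgHom.toLinearMap_apply]
    rw [DirectSum.lof_eq_of]
    congr 1
  have hsmul_of : ∀ (i) (q : Q i) (r : ℂ[X]),
      r • DirectSum.of Q i q = DirectSum.of Q i (r • q) := by
    intro i q r
    rw [← DirectSum.lof_eq_of ℂ[X], ← _root_.map_smul, DirectSum.lof_eq_of]
  have hmk_smul : ∀ (i) (r a : ℂ[X]),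
      r • (Ideal.Quotient.mk (Ideal.span {p i ^ e i}) a : Q i)
        = Ideal.Quotient.mk (Ideal.span {p i ^ e i}) (r * a) := by
    intro i r a
    rw [← Ideal.Quotient.mk_eq_mk, ← Submodule.Quotient.mk_smul, smul_eq_mul,
      Ideal.Quotient.mk_eq_mk]
  have hTX : ∀ (c : ℂ) (d : DirectSum ι Q),
      T c ((X : ℂ[X]) • d) = (C c * X : ℂ[X]) • T c d := by
    intro c d
    induction d using DirectSum.induction_on with
    | zero => simp
    | of i q =>
      obtain ⟨a, rfl⟩ := Ideal.Quotient.mk_surjective (I := Ideal.span {p i ^ e i}) q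
      rw [hsmul_of, hmk_smul, hTof, hTof, hsmul_of, hmk_smul]
      congr 1
      rw [_root_.map_mul, sig_X]
    | add x y hx hy => rw [smul_add, _root_.map_add, hx, hy, _root_.map_add, smul_add]
  have hTT : ∀ (c : ℂ) (hc : c ≠ 0) (d : DirectSum ι Q), T c⁻¹ (T c d) = d := by
    intro c hc d
    induction d using DirectSum.induction_on with
    | zero => simp
    | of i q =>
      obtain ⟨a, rfl⟩ := Ideal.Quotient.mk_surjective (I := Ideal.span {p i ^ e i}) q
      rw [hTof, hTof, sig_sig, mul_inv_cancel₀ hc, sig_one]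
    | add x y hx hy => rw [_root_.map_add, _root_.map_add, hx, hy]
  have hTbij : Function.Bijective (T lam) := by
    refine Function.bijective_iff_has_inverse.mpr ⟨T lam⁻¹, fun d => hTT lam hlam d, fun d => ?_⟩
    have h4 := hTT lam⁻¹ (inv_ne_zero hlam) d
    rwa [inv_inv] at h4
  -- transport to N
  set gN : Module.AEval' f →ₗ[ℂ] Module.AEval' f :=
    ((eqv.symm.toLinearMap.restrictScalars ℂ).comp
      ((T lam).comp (eqv.toLinearMap.restrictScalars ℂ))) with hgN
  have hgNbij : Function.Bijective gN := by
    rw [hgN]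
    exact ((eqv.symm.bijective).comp hTbij).comp eqv.bijective
  have hgNX : ∀ x : Module.AEval' f,
      gN ((X : ℂ[X]) • x) = (C lam * X : ℂ[X]) • gN x := by
    intro x
    simp only [hgN, LinearMap.comp_apply, LinearMap.restrictScalars_apply,
      LinearEquiv.coe_coe]
    rw [_root_.map_smul, hTX, _root_.map_smul]
  -- transport to M
  refine ⟨(Module.AEval'.of f).symm.toLinearMap ∘ₗ gN ∘ₗ (Module.AEval'.of f).toLinearMap,
    ?_, ?_⟩
  · exact (((Module.AEval'.of f).symm.bijective.comp hgNbij).comp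
      (Module.AEval'.of f).bijective)
  · intro v
    simp only [LinearMap.comp_apply, LinearEquiv.coe_coe]
    rw [← Module.AEval'.X_smul_of, hgNX]
    set w := gN ((Module.AEval'.of f) v) with hwdef
    have hCsmul : ∀ z : Module.AEval' f, (C lam : ℂ[X]) • z = lam • z := by
      intro z
      rw [← Polynomial.algebraMap_eq]
      exact algebraMap_smul ℂ[X] lam z
    have hw : (X : ℂ[X]) • w = Module.AEval'.of f (f ((Module.AEval'.of f).symm w)) := by
      conv_lhs => rw [← LinearEquiv.apply_symm_apply (Module.AEval'.of f) w]
      rw [Module.AEval'.X_smul_of]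
    rw [mul_smul, hw, hCsmul, _root_.map_smul, LinearEquiv.symm_apply_apply]

lemma matrix_similar {n : ℕ} (C : Matrix (Fin n) (Fin n) ℂ) (hC : IsNilpotent C)
    {lam : ℂ} (hlam : lam ≠ 0) :
    ∃ G : Matrix (Fin n) (Fin n) ℂ, IsUnit G ∧ G * C = lam • (C * G) := by
  obtain ⟨m, hm⟩ := hC
  set A := (Matrix.toLinAlgEquiv' : Matrix (Fin n) (Fin n) ℂ ≃ₐ[ℂ] _) with hA
  set f := A C with hf
  have hfm : f ^ m = 0 := by rw [hf, ← _root_.map_pow, hm, _root_.map_zero]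
  obtain ⟨g, hgbij, hgf⟩ := end_similar f hfm hlam
  set gE := LinearEquiv.ofBijective g hgbij with hgE
  refine ⟨A.symm g, ?_, ?_⟩
  · refine ⟨⟨A.symm g, A.symm gE.symm.toLinearMap, ?_, ?_⟩, rfl⟩
    · rw [← _root_.map_mul]
      have h1 : g * gE.symm.toLinearMap = 1 := by
        apply LinearMap.ext
        intro v
        simp only [Module.End.mul_apply, Module.End.one_apply]
        exact gE.apply_symm_apply v
      rw [h1, _root_.map_one]
    · rw [← _root_.map_mul]
      have h1 : gE.symm.toLinearMap * g = 1 := by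
        apply LinearMap.ext
        intro v
        simp only [Module.End.mul_apply, Module.End.one_apply]
        exact gE.symm_apply_apply v
      rw [h1, _root_.map_one]
  · have h2 : g * f = lam • (f * g) := by
      apply LinearMap.ext
      intro v
      simp only [Module.End.mul_apply, LinearMap.smul_apply]
      exact hgf v
    have h3 := congrArg A.symm h2
    rw [_root_.map_mul, _root_.map_smul, _root_.map_mul, AlgEquiv.symm_apply_apply] at h3
    exact h3


/-- A nonzero multiple `λ • C` of a nilpotent skew-symmetric complex
matrix `C` is conjugate to `C` by a complex orthogonal matrix; consequently two nilpotent
elements of `o(n,ℂ)` are `O(n,ℂ)`-conjugate up to a nonzero scalar if and only if they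
are `O(n,ℂ)`-conjugate. -/
theorem nilpotent_skew_conjugate_scalar (n : ℕ) :
    (∀ C : Matrix (Fin n) (Fin n) ℂ, IsNilpotent C → Cᵀ = -C →
      ∀ lam : ℂ, lam ≠ 0 →
        ∃ U : Matrix (Fin n) (Fin n) ℂ, Uᵀ * U = 1 ∧ U * C * U⁻¹ = lam • C) ∧
    (∀ C C' : Matrix (Fin n) (Fin n) ℂ, IsNilpotent C → IsNilpotent C' →
      Cᵀ = -C → C'ᵀ = -C' →
      ((∃ lam : ℂ, lam ≠ 0 ∧
          ∃ U : Matrix (Fin n) (Fin n) ℂ, Uᵀ * U = 1 ∧ C = U * (lam • C') * U⁻¹) ↔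
        (∃ U : Matrix (Fin n) (Fin n) ℂ, Uᵀ * U = 1 ∧ C = U * C' * U⁻¹))) := by
  have part1 : ∀ C : Matrix (Fin n) (Fin n) ℂ, IsNilpotent C → Cᵀ = -C →
      ∀ lam : ℂ, lam ≠ 0 →
        ∃ U : Matrix (Fin n) (Fin n) ℂ, Uᵀ * U = 1 ∧ U * C * U⁻¹ = lam • C := by
    intro C hC hskew lam hlam
    obtain ⟨G, hGu, hGC⟩ := matrix_similar C hC hlam
    have hdetG : IsUnit G.det := (Matrix.isUnit_iff_isUnit_det G).mp hGu
    have hGGinv : G * G⁻¹ = 1 := Matrix.mul_nonsing_inv G hdetG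
    have hGinvG : G⁻¹ * G = 1 := Matrix.nonsing_inv_mul G hdetG
    have hconj : G * C * G⁻¹ = lam • C := by
      rw [hGC, Matrix.smul_mul, mul_assoc, hGGinv, mul_one]
    have htr : G⁻¹ᵀ * C * Gᵀ = lam • C := by
      have h1 := congrArg Matrix.transpose hconj
      rw [Matrix.transpose_mul, Matrix.transpose_mul, Matrix.transpose_smul, hskew] at h1
      have h2 : G⁻¹ᵀ * (C * Gᵀ) = lam • C := by
        have h1' := congrArg Neg.neg h1
        simpa [Matrix.neg_mul, Matrix.mul_neg] using h1'
      rw [← mul_assoc] at h2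
      exact h2
    have hGt : Gᵀ * G⁻¹ᵀ = 1 := by
      rw [← Matrix.transpose_mul, hGinvG, Matrix.transpose_one]
    have hS_comm : Gᵀ * G * C = C * (Gᵀ * G) := by
      have h3 : G * C * G⁻¹ = G⁻¹ᵀ * C * Gᵀ := by rw [htr, hconj]
      have h4 := congrArg (fun A => Gᵀ * A * G) h3
      simp only [← mul_assoc] at h4
      rw [mul_assoc (Gᵀ * G * C) G⁻¹ G, hGinvG, mul_one, hGt, one_mul] at h4
      rw [h4, mul_assoc]
    have hcomm : Commute (Gᵀ * G) C := hS_comm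
    have hGtu : IsUnit Gᵀ := (Matrix.isUnit_iff_isUnit_det _).mpr
      (by rw [Matrix.det_transpose]; exact hdetG)
    have hSu : IsUnit (Gᵀ * G) := hGtu.mul hGu
    obtain ⟨q, hq⟩ := matrix_sqrt (Gᵀ * G) hSu
    set T := Polynomial.aeval (Gᵀ * G) q with hTdef
    have hTsymm : Tᵀ = T := by
      rw [hTdef, aeval_transpose, Matrix.transpose_mul, Matrix.transpose_transpose]
    have hTC : T * C = C * T := aeval_commute hcomm q
    have hdetS : IsUnit (Gᵀ * G).det := (Matrix.isUnit_iff_isUnit_det _).mp hSu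
    have hdetT : IsUnit T.det := by
      have h5 : T.det * T.det = (Gᵀ * G).det := by rw [← Matrix.det_mul, hq]
      rw [isUnit_iff_ne_zero] at hdetS ⊢
      intro h
      rw [h, zero_mul] at h5
      exact hdetS h5.symm
    have hx : T⁻¹ * C * T = C := by
      rw [mul_assoc, ← hTC, ← mul_assoc, Matrix.nonsing_inv_mul T hdetT, one_mul]
    refine ⟨G * T⁻¹, ?_, ?_⟩
    · rw [Matrix.transpose_mul, Matrix.transpose_nonsing_inv, hTsymm]
      simp only [← mul_assoc]
      rw [mul_assoc T⁻¹ Gᵀ G, ← hq, ← mul_assoc, Matrix.nonsing_inv_mul T hdetT, one_mul,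
        Matrix.mul_nonsing_inv T hdetT]
    · rw [Matrix.mul_inv_rev, Matrix.nonsing_inv_nonsing_inv T hdetT]
      calc G * T⁻¹ * C * (T * G⁻¹) = G * (T⁻¹ * C * T) * G⁻¹ := by
            simp only [← mul_assoc]
        _ = lam • C := by rw [hx, hconj]
  refine ⟨part1, ?_⟩
  intro C C' hC hC' hs hs'
  constructor
  · rintro ⟨lam, hlam, U0, hU0, hCeq⟩
    obtain ⟨U1, hU1, hU1C⟩ := part1 C' hC' hs' lam hlam
    refine ⟨U0 * U1, ?_, ?_⟩
    · rw [Matrix.transpose_mul, mul_assoc, ← mul_assoc U0ᵀ U0 U1, hU0, one_mul, hU1]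
    · rw [hCeq, ← hU1C, Matrix.mul_inv_rev]
      simp only [← mul_assoc]
  · rintro ⟨U, hU, hCeq⟩
    exact ⟨1, one_ne_zero, U, hU, by rw [one_smul]; exact hCeq⟩
end

section
/- Let C and C' be complex n×n matrices with Cᵀ = −C and C'ᵀ = −C'. Then the following are equivalent: (i) there exist an invertible complex n×n matrix P and a nonzero λ in ℂ such that C' = λ·P·C·P⁻¹ and Pᵀ·P·C = C; (ii) there exist a complex n×n matrix U with Uᵀ·U = 1 and a nonzero μ in ℂ such that C' = μ·U·C·U⁻¹. -/
open Matrix Polynomial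

private lemma pow_mul_fix {n : ℕ} {M C0 : Matrix (Fin n) (Fin n) ℂ}
    (h : M * C0 = C0) (k : ℕ) : M ^ k * C0 = C0 := by
  induction k with
  | zero => simp
  | succ k ih => rw [pow_succ, mul_assoc, h, ih]

private lemma aeval_mul_fix {n : ℕ} {M C0 : Matrix (Fin n) (Fin n) ℂ}
    (h : M * C0 = C0) (p : ℂ[X]) :
    (aeval M p) * C0 = (p.eval 1) • C0 := by
  induction p using Polynomial.induction_on' with
  | add p q hp hq => rw [map_add, add_mul, hp, hq, eval_add, add_smul]
  | monomial k a =>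
      rw [aeval_monomial, eval_monomial, one_pow, mul_one, Algebra.algebraMap_eq_smul_one,
        smul_mul_assoc, smul_mul_assoc, one_mul, pow_mul_fix h]

private lemma aeval_transpose_eq {n : ℕ} {M : Matrix (Fin n) (Fin n) ℂ}
    (p : ℂ[X]) : (aeval M p)ᵀ = aeval Mᵀ p := by
  induction p using Polynomial.induction_on' with
  | add p q hp hq => rw [map_add, transpose_add, hp, hq, map_add]
  | monomial k a =>
      rw [aeval_monomial, aeval_monomial, Algebra.algebraMap_eq_smul_one,
        smul_mul_assoc, one_mul, transpose_smul, transpose_pow,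
        smul_mul_assoc, one_mul]

private lemma isCoprime_X_sub_C_of_eval_ne {q : ℂ[X]} {a : ℂ} (h : q.eval a ≠ 0) :
    IsCoprime (X - C a) q := by
  obtain ⟨g, hg⟩ := Polynomial.X_sub_C_dvd_sub_C_eval (a := a) (p := q)
  have h1 : C (q.eval a)⁻¹ * C (q.eval a) = 1 := by
    rw [← C_mul, inv_mul_cancel₀ h, C_1]
  exact ⟨-(C (q.eval a)⁻¹ * g), C (q.eval a)⁻¹, by linear_combination C (q.eval a)⁻¹ * hg + h1⟩

private lemma exists_sqrt_mod (m : ℂ[X]) (hm : m.Monic) (h0 : m.eval 0 ≠ 0) :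
    ∃ q : ℂ[X], m ∣ q ^ 2 - X := by
  classical
  set s : Finset ℂ := m.roots.toFinset with hs
  set f : ℂ → ℂ := fun z => z ^ ((1 : ℂ)/2) with hf
  have hroot : ∀ a ∈ s, a ≠ 0 ∧ f a ^ 2 = a := by
    intro a ha
    have ham : a ∈ m.roots := Multiset.mem_toFinset.mp ha
    have hisroot : m.IsRoot a := isRoot_of_mem_roots ham
    have hane : a ≠ 0 := by rintro rfl; exact h0 hisroot
    refine ⟨hane, ?_⟩
    rw [hf, sq, ← Complex.cpow_add _ _ hane]
    norm_num
  set q0 : ℂ[X] := Lagrange.interpolate s id f with hq0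
  have hq0eval : ∀ a ∈ s, q0.eval a = f a := by
    intro a ha
    exact Lagrange.eval_interpolate_at_node f (Set.injOn_id _) ha
  set r : ℂ[X] := ∏ a ∈ s, (X - C a) with hr
  have hreval : ∀ a ∈ s, r.eval a = 0 := by
    intro a ha
    rw [hr, eval_prod]
    exact Finset.prod_eq_zero ha (by simp)
  have hcop : (↑s : Set ℂ).Pairwise (Function.onFun IsCoprime fun a => X - C a) :=
    (pairwise_coprime_X_sub_C Function.injective_id).set_pairwise _
  -- Newton iteration
  have key : ∀ j : ℕ, ∃ q : ℂ[X], (∀ a ∈ s, q.eval a = f a) ∧ r ^ (2 ^ j) ∣ q ^ 2 - X := by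
    intro j
    induction j with
    | zero =>
        refine ⟨q0, hq0eval, ?_⟩
        rw [pow_zero, pow_one]
        refine Finset.prod_dvd_of_coprime hcop (fun a ha => ?_)
        rw [Polynomial.dvd_iff_isRoot]
        simp only [IsRoot, eval_sub, eval_pow, eval_X, hq0eval a ha, (hroot a ha).2, sub_self]
    | succ j ih =>
        obtain ⟨q, hqe, hqd⟩ := ih
        set R : ℂ[X] := r ^ (2 ^ j) with hR
        obtain ⟨t, ht⟩ := hqd
        have hcq : IsCoprime q R := by
          refine IsCoprime.pow_right ?_
          refine IsCoprime.symm (IsCoprime.prod_left (fun a ha => ?_))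
          refine isCoprime_X_sub_C_of_eval_ne ?_
          rw [hqe a ha]
          intro hfa
          have := (hroot a ha).2
          rw [hfa] at this
          exact (hroot a ha).1 (by simpa using this.symm)
        obtain ⟨u, v, huv⟩ := hcq
        have h3 : (2 : ℂ[X]) * C ((1:ℂ)/2) = 1 := by
          rw [← map_ofNat (Polynomial.C) 2, ← C_mul]
          norm_num
        refine ⟨q - C ((1:ℂ)/2) * (q ^ 2 - X) * u, ?_, ?_⟩
        · intro a ha
          have heva : (q ^ 2 - X).eval a = 0 := by
            rw [ht, eval_mul, hR, eval_pow, hreval a ha, zero_pow (by positivity), zero_mul]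
          simp [eval_sub, eval_mul, heva, hqe a ha]
        · refine ⟨t * v + C ((1:ℂ)/2) ^ 2 * t ^ 2 * u ^ 2, ?_⟩
          have hRR : r ^ 2 ^ (j + 1) = R ^ 2 := by rw [hR, ← pow_mul, pow_succ]
          rw [hRR]
          linear_combination (C ((1:ℂ)/2) ^ 2 * u ^ 2 * ((q ^ 2 - X) + R * t) + v * R) * ht
            + (-(q ^ 2 - X)) * huv + (-(q ^ 2 - X) * u * q) * h3
  obtain ⟨q, _, hqd⟩ := key m.natDegree
  refine ⟨q, dvd_trans ?_ hqd⟩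
  have hsplit : m = (Multiset.map (fun a => X - C a) m.roots).prod :=
    (IsAlgClosed.splits m).eq_prod_roots_of_monic hm
  have hcount : m = ∏ a ∈ s, (X - C a) ^ (m.roots.count a) := by
    conv_lhs => rw [hsplit]
    exact Finset.prod_multiset_map_count _ _
  have hbound : ∀ a ∈ s, (X - C a) ^ (m.roots.count a) ∣ (X - C a) ^ (2 ^ m.natDegree) := by
    intro a _
    refine pow_dvd_pow _ ?_
    calc m.roots.count a ≤ Multiset.card m.roots := Multiset.count_le_card _ _
      _ ≤ m.natDegree := Polynomial.card_roots' m
      _ ≤ 2 ^ m.natDegree := Nat.le_of_lt Nat.lt_two_pow_self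
  calc m = ∏ a ∈ s, (X - C a) ^ (m.roots.count a) := hcount
    _ ∣ ∏ a ∈ s, (X - C a) ^ (2 ^ m.natDegree) := Finset.prod_dvd_prod_of_dvd _ _ hbound
    _ = r ^ (2 ^ m.natDegree) := Finset.prod_pow _ _ _

/-- For skew-symmetric complex matrices `C, C'`: there exist an
invertible `P` and a nonzero `λ` with `C' = λ • (P * C * P⁻¹)` and `Pᵀ * P * C = C`
if and only if there exist a complex orthogonal `U` and a nonzero `μ` with
`C' = μ • (U * C * U⁻¹)`. -/
theorem skew_conjugation_criterion (n : ℕ)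
    (C C' : Matrix (Fin n) (Fin n) ℂ) (hC : Cᵀ = -C) (hC' : C'ᵀ = -C') :
    (∃ (P : Matrix (Fin n) (Fin n) ℂ) (lam : ℂ), IsUnit P ∧ lam ≠ 0 ∧
        C' = lam • (P * C * P⁻¹) ∧ Pᵀ * P * C = C) ↔
      (∃ (U : Matrix (Fin n) (Fin n) ℂ) (mu : ℂ), Uᵀ * U = 1 ∧ mu ≠ 0 ∧
        C' = mu • (U * C * U⁻¹)) := by
  constructor
  · rintro ⟨P, lam, hP, hlam, hC'eq, hPC⟩
    by_cases hC0 : C = 0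
    · refine ⟨1, 1, by simp, one_ne_zero, ?_⟩
      rw [hC'eq, hC0]; simp
    set M : Matrix (Fin n) (Fin n) ℂ := Pᵀ * P with hM
    have hMC : M * C = C := hPC
    have hMsymm : Mᵀ = M := by rw [hM, transpose_mul, transpose_transpose]
    have hPdet : IsUnit P.det := (Matrix.isUnit_iff_isUnit_det P).mp hP
    have hMdet : IsUnit M.det := by
      rw [hM, det_mul, det_transpose]; exact hPdet.mul hPdet
    set m : ℂ[X] := minpoly ℂ M with hmdef
    have hint : IsIntegral ℂ M := IsIntegral.of_finite ℂ M
    have hm : m.Monic := minpoly.monic hint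
    have hmaeval : aeval M m = 0 := minpoly.aeval ℂ M
    have h00 : m.eval 0 ≠ 0 := by
      intro h
      have hXdvd : X - Polynomial.C (0:ℂ) ∣ m := Polynomial.dvd_iff_isRoot.mpr h
      rw [Polynomial.C_0, sub_zero] at hXdvd
      obtain ⟨g, hg⟩ := hXdvd
      have hg0 : g ≠ 0 := by
        rintro rfl
        rw [mul_zero] at hg
        exact hm.ne_zero hg
      have hgM : aeval M g = 0 := by
        have h9 := hmaeval
        rw [hg, Polynomial.aeval_mul, aeval_X] at h9
        have hM1 : ((M⁻¹ : Matrix (Fin n) (Fin n) ℂ)) * (M * aeval M g) = M⁻¹ * 0 := by rw [h9]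
        rwa [← mul_assoc, Matrix.nonsing_inv_mul M hMdet, one_mul, mul_zero] at hM1
      have hle : m.degree ≤ g.degree := minpoly.degree_le_of_ne_zero ℂ M hg0 hgM
      have hlt : g.degree < m.degree := by
        rw [hg, mul_comm]
        exact Polynomial.degree_lt_degree_mul_X hg0
      exact absurd hle (not_le.mpr hlt)
    obtain ⟨q, hq⟩ := exists_sqrt_mod m hm h00
    have hm1 : m.eval 1 = 0 := by
      have h1 : (aeval M m) * C = (m.eval 1) • C := aeval_mul_fix hMC m
      rw [hmaeval, zero_mul] at h1
      rcases smul_eq_zero.mp h1.symm with h | h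
      · exact h
      · exact absurd h hC0
    obtain ⟨h1, hh1⟩ := hq
    have hq1sq : (q.eval 1 - 1) * (q.eval 1 + 1) = 0 := by
      have h2 := congrArg (Polynomial.eval 1) hh1
      simp only [eval_sub, eval_pow, eval_X, eval_mul, hm1, zero_mul] at h2
      linear_combination h2
    obtain ⟨q2, hq2d, hq2e⟩ : ∃ q2 : ℂ[X], m ∣ q2 ^ 2 - X ∧ q2.eval 1 = 1 := by
      rcases mul_eq_zero.mp hq1sq with h | h
      · exact ⟨q, ⟨h1, hh1⟩, sub_eq_zero.mp h⟩
      · refine ⟨-q, ?_, ?_⟩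
        · rw [neg_sq]; exact ⟨h1, hh1⟩
        · have h7 : q.eval 1 = -1 := eq_neg_of_add_eq_zero_left h
          simp [h7]
    obtain ⟨g2, hg2⟩ := hq2d
    set S : Matrix (Fin n) (Fin n) ℂ := aeval M q2 with hS
    have hSS : S * S = M := by
      have h5 : aeval M (q2 ^ 2) = aeval M (X + m * g2) := by
        congr 1; linear_combination hg2
      rw [map_add, _root_.map_mul, hmaeval, zero_mul, add_zero, aeval_X, _root_.map_pow] at h5
      rw [← pow_two]
      exact h5
    have hSC : S * C = C := by rw [hS, aeval_mul_fix hMC, hq2e, one_smul]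
    have hSsymm : Sᵀ = S := by rw [hS, aeval_transpose_eq, hMsymm]
    have hSdet : IsUnit S.det := by
      have h6 : S.det * S.det = M.det := by rw [← det_mul, hSS]
      exact isUnit_of_mul_isUnit_left (h6 ▸ hMdet)
    have hSiC : S⁻¹ * C = C := by
      conv_lhs => rw [← hSC]
      rw [← mul_assoc, Matrix.nonsing_inv_mul S hSdet, one_mul]
    have hCS : C * S = C := by
      have h4 := congrArg Matrix.transpose hSC
      rw [transpose_mul, hSsymm, hC, neg_mul] at h4
      exact neg_injective h4
    refine ⟨P * S⁻¹, lam, ?_, hlam, ?_⟩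
    · rw [transpose_mul, Matrix.transpose_nonsing_inv, hSsymm, mul_assoc,
        ← mul_assoc Pᵀ P S⁻¹, ← hM, ← hSS, mul_assoc S S S⁻¹,
        Matrix.mul_nonsing_inv S hSdet, mul_one, Matrix.nonsing_inv_mul S hSdet]
    · rw [hC'eq, Matrix.mul_inv_rev, Matrix.nonsing_inv_nonsing_inv S hSdet]
      congr 1
      rw [mul_assoc P S⁻¹ C, hSiC, ← mul_assoc (P * C) S P⁻¹, mul_assoc P C S, hCS]
  · rintro ⟨U, mu, hU, hmu, hC'eq⟩
    have hUdet : IsUnit U.det := by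
      have : U.det * U.det = 1 := by
        have := congrArg Matrix.det hU
        rwa [det_mul, det_transpose, det_one] at this
      exact IsUnit.of_mul_eq_one _ this
    exact ⟨U, mu, (Matrix.isUnit_iff_isUnit_det U).mpr hUdet, hmu, hC'eq,
      by rw [hU, one_mul]⟩
end

section
/- Let C and C' be invertible complex n×n matrices with Cᵀ = −C and C'ᵀ = −C'. Then C and C' are O(n,ℂ)-conjugate if and only if they are similar, i.e. there exists an invertible complex n×n matrix P with C' = P·C·P⁻¹. -/
open Matrix


private lemma hensel_sqrt {R : Type*} [CommRing R] (h2 : IsUnit (2 : R)) :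
    ∀ (k : ℕ) (x a : R), IsUnit x → (a - x * x) ^ k = 0 → IsSquare a := by
  intro k
  induction k using Nat.strong_induction_on with
  | _ k ih =>
    match k with
    | 0 =>
      intro x a _ hd
      rw [pow_zero] at hd
      haveI : Subsingleton R := subsingleton_of_zero_eq_one hd.symm
      exact ⟨x, Subsingleton.elim _ _⟩
    | 1 =>
      intro x a _ hd
      rw [pow_one, sub_eq_zero] at hd
      exact ⟨x, hd⟩
    | (k + 2) =>
      intro x a hx hd
      set d : R := a - x * x with hddef
      set u : R := ↑h2.unit⁻¹ * ↑hx.unit⁻¹ with hudef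
      have hu : 2 * x * u = 1 := by
        rw [hudef]
        calc 2 * x * (↑h2.unit⁻¹ * ↑hx.unit⁻¹)
            = (2 * ↑h2.unit⁻¹) * (x * ↑hx.unit⁻¹) := by ring
          _ = 1 := by rw [IsUnit.mul_val_inv, IsUnit.mul_val_inv, one_mul]
      set x' : R := x + d * u with hx'def
      have hnil : IsNilpotent (d * u) := ⟨k + 2, by rw [mul_pow, hd, zero_mul]⟩
      have hx' : IsUnit x' := by
        rw [hx'def, add_comm]
        exact hnil.isUnit_add_right_of_commute hx (Commute.all _ _)
      have hdef2 : a - x' * x' = -(d * d * (u * u)) := by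
        rw [hx'def]
        linear_combination (-(d : R)) * hu
      have hpow : (a - x' * x') ^ (k + 1) = 0 := by
        rw [hdef2, neg_pow, mul_pow, mul_pow]
        have : d ^ (k + 1) * d ^ (k + 1) = 0 := by
          rcases Nat.exists_eq_add_of_le (by omega : k + 2 ≤ k + 1 + (k + 1)) with ⟨c, hc⟩
          rw [← pow_add, hc, pow_add, hd, zero_mul]
        rw [this, zero_mul, mul_zero]
      exact ih (k + 1) (by omega) x' a hx' hpow
open Polynomial in

private lemma exists_poly_sqrt {n : ℕ} (S : Matrix (Fin n) (Fin n) ℂ) (hS : IsUnit S) :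
    ∃ q : ℂ[X], Polynomial.aeval S q * Polynomial.aeval S q = S := by
  classical
  have hint : IsIntegral ℂ S := IsIntegral.of_finite ℂ S
  set m : ℂ[X] := minpoly ℂ S with hmdef
  have hmonic : m.Monic := minpoly.monic hint
  have hmne : m ≠ 0 := hmonic.ne_zero
  have hmS : Polynomial.aeval S m = 0 := minpoly.aeval ℂ S
  -- 0 is not a root of m
  have h0 : ¬ m.IsRoot 0 := by
    intro h
    obtain ⟨g, hg⟩ := (dvd_iff_isRoot.mpr h : (X - Polynomial.C (0 : ℂ)) ∣ m)
    rw [map_zero, sub_zero] at hg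
    have hg0 : g ≠ 0 := by rintro rfl; rw [mul_zero] at hg; exact hmne hg
    have hgS : Polynomial.aeval S g = 0 := by
      have hSg : S * Polynomial.aeval S g = 0 := by
        have := hmS
        rw [hg, _root_.map_mul, Polynomial.aeval_X] at this
        exact this
      exact (IsUnit.mul_right_eq_zero hS).mp hSg
    have hdvd : m ∣ g := minpoly.dvd ℂ S hgS
    have h1 : m.degree ≤ g.degree := Polynomial.degree_le_of_dvd hdvd hg0
    have h2 : g.degree < m.degree := by
      rw [hg, mul_comm]
      exact Polynomial.degree_lt_degree_mul_X hg0
    exact absurd h1 (not_le_of_gt h2)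
  -- choose square roots
  choose sq hsq using fun z : ℂ => IsAlgClosed.exists_pow_nat_eq z (n := 2) (by norm_num)
  set s : Finset ℂ := m.roots.toFinset with hsdef
  set p : ℂ[X] := Lagrange.interpolate s id sq with hpdef
  have hpval : ∀ z ∈ s, p.eval z = sq z := fun z hz =>
    Lagrange.eval_interpolate_at_node sq (Set.injOn_id _) hz
  -- roots of m are nonzero
  have hroot_ne : ∀ z ∈ s, z ≠ 0 := by
    rintro z hz rfl
    exact h0 ((Polynomial.mem_roots'.mp (Multiset.mem_toFinset.mp hz)).2)
  set N : ℕ := Multiset.card m.roots with hNdef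
  set r : ℂ[X] := ∏ a ∈ s, (X - Polynomial.C a) with hrdef
  -- m ∣ r ^ N
  have hm_dvd_rN : m ∣ r ^ N := by
    have hfact : m = (m.roots.map fun a => X - Polynomial.C a).prod :=
      (IsAlgClosed.splits m).eq_prod_roots_of_monic hmonic
    rw [hfact, Finset.prod_multiset_map_count, hrdef, ← Finset.prod_pow]
    exact Finset.prod_dvd_prod_of_dvd _ _ fun a _ =>
      pow_dvd_pow _ (Multiset.count_le_card a _)
  -- r ∣ X - p * p
  have hr_dvd : r ∣ X - p * p := by
    rw [hrdef]
    refine Finset.prod_dvd_of_coprime ?_ fun a ha => ?_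
    · intro i hi j hj hij
      exact Polynomial.isCoprime_X_sub_C_of_isUnit_sub (sub_ne_zero_of_ne hij).isUnit
    · rw [Polynomial.dvd_iff_isRoot]
      simp only [Polynomial.IsRoot, Polynomial.eval_sub, Polynomial.eval_X, Polynomial.eval_mul]
      rw [hpval a ha]
      have := hsq a
      rw [pow_two] at this
      rw [this, sub_self]
  have hm_dvd : m ∣ (X - p * p) ^ N := hm_dvd_rN.trans (pow_dvd_pow_of_dvd hr_dvd N)
  -- coprimality of p and m
  have hcop : IsCoprime p m := by
    rw [← EuclideanDomain.gcd_isUnit_iff]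
    by_contra hne
    have hg0 : EuclideanDomain.gcd p m ≠ 0 := fun h =>
      hmne (EuclideanDomain.gcd_eq_zero_iff.mp h).2
    have hdeg : (EuclideanDomain.gcd p m).degree ≠ 0 := fun h =>
      hne (Polynomial.isUnit_iff_degree_eq_zero.mpr h)
    obtain ⟨z, hz⟩ := IsAlgClosed.exists_root _ hdeg
    have hzm : m.IsRoot z :=
      Polynomial.eval_eq_zero_of_dvd_of_eval_eq_zero (EuclideanDomain.gcd_dvd_right p m) hz
    have hzp : p.eval z = 0 :=
      Polynomial.eval_eq_zero_of_dvd_of_eval_eq_zero (EuclideanDomain.gcd_dvd_left p m) hz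
    have hzs : z ∈ s := Multiset.mem_toFinset.mpr (Polynomial.mem_roots'.mpr ⟨hmne, hzm⟩)
    have : z = 0 := by
      have := hsq z
      rw [← hpval z hzs, hzp] at this
      simpa using this.symm
    exact hroot_ne z hzs this
  -- move to the quotient ring
  set I : Ideal ℂ[X] := Ideal.span {m} with hIdef
  set mk : ℂ[X] →+* (ℂ[X] ⧸ I) := Ideal.Quotient.mk I with hmkdef
  have hmzero : mk m = 0 := Ideal.Quotient.eq_zero_iff_mem.mpr (Ideal.subset_span rfl)
  have h2A : IsUnit (2 : ℂ[X] ⧸ I) := by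
    have h2c : IsUnit (2 : ℂ) := IsUnit.of_mul_eq_one (a := (2 : ℂ)) (1/2) (by norm_num)
    simpa [map_ofNat] using h2c.map (algebraMap ℂ (ℂ[X] ⧸ I))
  have hxp : IsUnit (mk p) := by
    obtain ⟨u, v, huv⟩ := hcop
    refine IsUnit.of_mul_eq_one (mk u) ?_
    have : mk (u * p + v * m) = 1 := by rw [huv, _root_.map_one]
    rw [_root_.map_add, _root_.map_mul, _root_.map_mul, hmzero, mul_zero, add_zero] at this
    rw [mul_comm]; exact this
  have hdefN : ((mk X) - (mk p) * (mk p)) ^ N = 0 := by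
    rw [← _root_.map_mul, ← _root_.map_sub, ← _root_.map_pow]
    exact Ideal.Quotient.eq_zero_iff_mem.mpr (Ideal.mem_span_singleton.mpr hm_dvd)
  obtain ⟨y, hy⟩ := hensel_sqrt h2A N (mk p) (mk X) hxp hdefN
  obtain ⟨q, rfl⟩ := Ideal.Quotient.mk_surjective y
  have : mk (q * q - X) = 0 := by
    rw [_root_.map_sub, _root_.map_mul, ← hy, sub_self]
  obtain ⟨c, hc⟩ := Ideal.mem_span_singleton.mp (Ideal.Quotient.eq_zero_iff_mem.mp this)
  refine ⟨q, ?_⟩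
  have := congrArg (Polynomial.aeval S) hc
  rw [_root_.map_sub, _root_.map_mul, _root_.map_mul, hmS, zero_mul, Polynomial.aeval_X, sub_eq_zero] at this
  exact this
private lemma aeval_transpose_s15 {n : ℕ} (M : Matrix (Fin n) (Fin n) ℂ) (q : Polynomial ℂ) :
    (Polynomial.aeval M q)ᵀ = Polynomial.aeval Mᵀ q := by
  induction q using Polynomial.induction_on' with
  | add p r hp hr => rw [_root_.map_add, _root_.map_add, Matrix.transpose_add, hp, hr]
  | monomial k c =>
      rw [Polynomial.aeval_monomial, Polynomial.aeval_monomial,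
        Algebra.algebraMap_eq_smul_one, Matrix.transpose_mul, Matrix.transpose_smul,
        Matrix.transpose_one, Matrix.transpose_pow]
      simp [mul_smul_comm, smul_mul_assoc]

private lemma aeval_commute_s15 {n : ℕ} {M B : Matrix (Fin n) (Fin n) ℂ}
    (h : M * B = B * M) (q : Polynomial ℂ) :
    Polynomial.aeval M q * B = B * Polynomial.aeval M q := by
  induction q using Polynomial.induction_on' with
  | add p r hp hr => rw [_root_.map_add, add_mul, mul_add, hp, hr]
  | monomial k c =>
      rw [Polynomial.aeval_monomial]
      have h1 : Commute B (M ^ k) := (Commute.symm h).pow_right k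
      have h2 : Commute B (algebraMap ℂ _ c) := (Algebra.commutes c B).symm
      exact ((h2.mul_right h1).symm).eq

/-- Two invertible skew-symmetric complex matrices are
`O(n,ℂ)`-conjugate if and only if they are similar. -/
theorem invertible_skew_orthogonally_conjugate_iff_similar (n : ℕ)
    (C C' : Matrix (Fin n) (Fin n) ℂ) (hC : Cᵀ = -C) (hC' : C'ᵀ = -C')
    (hCunit : IsUnit C) (hC'unit : IsUnit C') :
    (∃ U : Matrix (Fin n) (Fin n) ℂ, Uᵀ * U = 1 ∧ C' = U * C * U⁻¹) ↔
      (∃ P : Matrix (Fin n) (Fin n) ℂ, IsUnit P ∧ C' = P * C * P⁻¹) := by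
  constructor
  · rintro ⟨U, hU, hUC⟩
    refine ⟨U, ?_, hUC⟩
    have hdet : IsUnit U.det := by
      have := congrArg Matrix.det hU
      rw [Matrix.det_mul, Matrix.det_transpose, Matrix.det_one] at this
      exact IsUnit.of_mul_eq_one _ this
    exact (Matrix.isUnit_iff_isUnit_det U).mpr hdet
  · rintro ⟨P, hP, hPC⟩
    have hPdet : IsUnit P.det := (Matrix.isUnit_iff_isUnit_det P).mp hP
    have hPtdet : IsUnit Pᵀ.det := by rwa [Matrix.det_transpose]
    have hPinv : P * P⁻¹ = 1 := Matrix.mul_nonsing_inv P hPdet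
    have hPinv' : P⁻¹ * P = 1 := Matrix.nonsing_inv_mul P hPdet
    set S : Matrix (Fin n) (Fin n) ℂ := Pᵀ * P with hSdef
    have hSsym : Sᵀ = S := by rw [hSdef, Matrix.transpose_mul, Matrix.transpose_transpose]
    have hSunit : IsUnit S := by
      refine (Matrix.isUnit_iff_isUnit_det S).mpr ?_
      rw [hSdef, Matrix.det_mul, Matrix.det_transpose]
      exact hPdet.mul hPdet
    -- S commutes with C
    have hkey : (Pᵀ)⁻¹ * (C * Pᵀ) = P * C * P⁻¹ := by
      have h1 := hC'
      rw [hPC, Matrix.transpose_mul, Matrix.transpose_mul, Matrix.transpose_nonsing_inv,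
        hC] at h1
      have h1' : -((Pᵀ)⁻¹ * (C * Pᵀ)) = -(P * C * P⁻¹) := by
        rw [← h1, neg_mul, Matrix.mul_neg]
      exact neg_injective h1'
    have hcomm : S * C = C * S := by
      have h2 : Pᵀ * ((Pᵀ)⁻¹ * (C * Pᵀ)) * P = Pᵀ * (P * C * P⁻¹) * P := by rw [hkey]
      rw [← Matrix.mul_assoc, ← Matrix.mul_assoc, Matrix.mul_nonsing_inv _ hPtdet,
        Matrix.one_mul] at h2
      -- h2 : C * Pᵀ * P = Pᵀ * (P * C * P⁻¹) * P
      have h4 : P * C * P⁻¹ * P = P * C := by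
        rw [Matrix.mul_assoc, hPinv', Matrix.mul_one]
      have h3 : Pᵀ * (P * C * P⁻¹) * P = Pᵀ * P * C := by
        calc Pᵀ * (P * C * P⁻¹) * P = Pᵀ * (P * C * P⁻¹ * P) := by rw [Matrix.mul_assoc]
          _ = Pᵀ * (P * C) := by rw [h4]
          _ = Pᵀ * P * C := by rw [Matrix.mul_assoc]
      rw [h3] at h2
      rw [hSdef, ← h2, Matrix.mul_assoc]
    obtain ⟨q, hq⟩ := exists_poly_sqrt S hSunit
    set T : Matrix (Fin n) (Fin n) ℂ := Polynomial.aeval S q with hTdef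
    have hTsym : Tᵀ = T := by rw [hTdef, aeval_transpose_s15, hSsym]
    have hTC : T * C = C * T := aeval_commute_s15 hcomm q
    have hTdet : IsUnit T.det := by
      have : T.det * T.det = S.det := by rw [← Matrix.det_mul, hq]
      have hSdet : IsUnit S.det := (Matrix.isUnit_iff_isUnit_det S).mp hSunit
      rw [← this] at hSdet
      exact isUnit_of_mul_isUnit_left hSdet
    have hTinv : T * T⁻¹ = 1 := Matrix.mul_nonsing_inv T hTdet
    have hTinv' : T⁻¹ * T = 1 := Matrix.nonsing_inv_mul T hTdet
    refine ⟨P * T⁻¹, ?_, ?_⟩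
    · rw [Matrix.transpose_mul, Matrix.transpose_nonsing_inv, hTsym]
      calc T⁻¹ * Pᵀ * (P * T⁻¹) = T⁻¹ * (Pᵀ * P) * T⁻¹ := by
            rw [Matrix.mul_assoc, Matrix.mul_assoc, Matrix.mul_assoc]
        _ = T⁻¹ * (T * T) * T⁻¹ := by rw [← hSdef, ← hq]
        _ = 1 := by rw [← Matrix.mul_assoc, hTinv', Matrix.one_mul, hTinv]
    · rw [Matrix.mul_inv_rev, Matrix.nonsing_inv_nonsing_inv T hTdet]
      have hTCinv : T⁻¹ * C = C * T⁻¹ := by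
        calc T⁻¹ * C = T⁻¹ * C * (T * T⁻¹) := by rw [hTinv, Matrix.mul_one]
          _ = T⁻¹ * (C * T) * T⁻¹ := by
              rw [Matrix.mul_assoc, Matrix.mul_assoc, Matrix.mul_assoc]
          _ = T⁻¹ * (T * C) * T⁻¹ := by rw [hTC]
          _ = C * T⁻¹ := by rw [← Matrix.mul_assoc, hTinv', Matrix.one_mul]
      calc C' = P * C * P⁻¹ := hPC
        _ = P * (C * (T⁻¹ * T)) * P⁻¹ := by rw [hTinv', Matrix.mul_one]
        _ = P * T⁻¹ * C * (T * P⁻¹) := by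
            rw [← Matrix.mul_assoc C T⁻¹ T, ← hTCinv]
            simp only [Matrix.mul_assoc]
end

section
/- Let (g,B) be a reduced singular quadratic Lie algebra and let D : g → g be a B-symmetric linear map, i.e. B(D(x),y) = B(x,D(y)) for all x,y in g. Then D is a centromorphism, i.e. D([X,Y]) = [D(X),Y] = [X,D(Y)] for all X,Y in g, if and only if there exist μ in ℂ and a B-symmetric linear map Z : g → g whose image is contained in the center Z(g) and which vanishes on [g,g], such that D = μ·id + Z. Moreover, such a D is invertible if and only if μ ≠ 0. -/
open Module

set_option linter.unusedSectionVars false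
set_option linter.unusedVariables false
set_option maxHeartbeats 1000000

section Aux

variable {g : Type*} [LieRing g] [LieAlgebra ℂ g] [Module.Finite ℂ g]

lemma derived_one_coe' :
    ((LieAlgebra.derivedSeries ℂ g 1 : LieSubmodule ℂ g g) : Submodule ℂ g)
      = Submodule.span ℂ {m : g | ∃ a b : g, ⁅a, b⁆ = m} := by
  rw [LieAlgebra.derivedSeries_def, LieAlgebra.derivedSeriesOfIdeal_succ,
    LieAlgebra.derivedSeriesOfIdeal_zero, LieIdeal.toLieSubalgebra_toSubmodule,
    LieSubmodule.lieIdeal_oper_eq_linear_span']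
  congr 1
  ext m
  simp

lemma mem_derived_iff' (x : g) :
    x ∈ LieAlgebra.derivedSeries ℂ g 1
      ↔ x ∈ Submodule.span ℂ {m : g | ∃ a b : g, ⁅a, b⁆ = m} := by
  rw [← LieSubmodule.mem_toSubmodule, ← derived_one_coe',
    LieIdeal.toLieSubalgebra_toSubmodule]

lemma abelian_of_codim_le_one' (C : Submodule ℂ g)
    (hC : ∀ x ∈ C, ∀ y : g, ⁅x, y⁆ = 0)
    (hdim : finrank ℂ g ≤ finrank ℂ C + 1) :
    ∀ x y : g, ⁅x, y⁆ = 0 := by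
  intro x y
  by_cases hx : x ∈ C
  · exact hC x hx y
  · have hlt : C < C ⊔ Submodule.span ℂ {x} := by
      refine lt_of_le_of_ne le_sup_left (fun h => hx ?_)
      rw [h]
      exact Submodule.mem_sup_right (Submodule.mem_span_singleton_self x)
    have h1 : finrank ℂ C < finrank ℂ (C ⊔ Submodule.span ℂ {x} : Submodule ℂ g) :=
      Submodule.finrank_lt_finrank_of_lt hlt
    have h2 : finrank ℂ (C ⊔ Submodule.span ℂ {x} : Submodule ℂ g) ≤ finrank ℂ g :=
      Submodule.finrank_le _
    have htop : C ⊔ Submodule.span ℂ {x} = ⊤ :=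
      Submodule.eq_top_of_finrank_eq (le_antisymm h2 (by omega))
    have hy : y ∈ C ⊔ Submodule.span ℂ {x} := htop ▸ Submodule.mem_top
    rw [Submodule.mem_sup] at hy
    obtain ⟨c, hc, r, hr, rfl⟩ := hy
    rw [Submodule.mem_span_singleton] at hr
    obtain ⟨s, rfl⟩ := hr
    have hxc : ⁅x, c⁆ = 0 := by
      rw [← lie_skew, hC c hc x, neg_zero]
    rw [lie_add, hxc, lie_smul, lie_self, smul_zero, add_zero]

lemma bracket_in_line' (C : Submodule ℂ g)
    (hC : ∀ x ∈ C, ∀ y : g, ⁅x, y⁆ = 0)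
    (hdim : finrank ℂ g ≤ finrank ℂ C + 2) :
    ∃ w : g, ∀ x y : g, ⁅x, y⁆ ∈ Submodule.span ℂ {w} := by
  by_cases habel : ∀ x y : g, ⁅x, y⁆ = 0
  · exact ⟨0, fun x y => by rw [habel]; exact Submodule.zero_mem _⟩
  by_cases hdim1 : finrank ℂ g ≤ finrank ℂ C + 1
  · exact absurd (abelian_of_codim_le_one' C hC hdim1) habel
  push_neg at hdim1
  have hCne : C ≠ ⊤ := by
    intro h
    have : finrank ℂ C = finrank ℂ g := by rw [h]; exact finrank_top ℂ g
    omega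
  obtain ⟨a, ha⟩ : ∃ a : g, a ∉ C := by
    by_contra h; push_neg at h
    exact hCne (Submodule.eq_top_iff'.2 h)
  set C1 := C ⊔ Submodule.span ℂ {a} with hC1def
  have hlt1 : C < C1 := by
    refine lt_of_le_of_ne le_sup_left (fun h => ha ?_)
    rw [h]; exact Submodule.mem_sup_right (Submodule.mem_span_singleton_self a)
  have hfr1 : finrank ℂ C < finrank ℂ C1 := Submodule.finrank_lt_finrank_of_lt hlt1
  by_cases hC1top : C1 = ⊤
  · exfalso
    apply habel
    intro x y
    have hx : x ∈ C1 := hC1top ▸ Submodule.mem_top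
    have hy : y ∈ C1 := hC1top ▸ Submodule.mem_top
    rw [hC1def, Submodule.mem_sup] at hx hy
    obtain ⟨c, hc, r, hr, rfl⟩ := hx
    obtain ⟨c', hc', r', hr', rfl⟩ := hy
    rw [Submodule.mem_span_singleton] at hr hr'
    obtain ⟨s, rfl⟩ := hr
    obtain ⟨s', rfl⟩ := hr'
    have h1 : ∀ z : g, ⁅c, z⁆ = 0 := hC c hc
    have h2 : ∀ z : g, ⁅z, c'⁆ = 0 := fun z => by rw [← lie_skew, hC c' hc' z, neg_zero]
    simp [lie_add, add_lie, lie_smul, smul_lie, h1, h2, lie_self]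
  obtain ⟨b, hb⟩ : ∃ b : g, b ∉ C1 := by
    by_contra h; push_neg at h
    exact hC1top (Submodule.eq_top_iff'.2 h)
  set C2 := C1 ⊔ Submodule.span ℂ {b} with hC2def
  have hlt2 : C1 < C2 := by
    refine lt_of_le_of_ne le_sup_left (fun h => hb ?_)
    rw [h]; exact Submodule.mem_sup_right (Submodule.mem_span_singleton_self b)
  have hfr2 : finrank ℂ C1 < finrank ℂ C2 := Submodule.finrank_lt_finrank_of_lt hlt2
  have hC2top : C2 = ⊤ := by
    have := Submodule.finrank_le C2
    exact Submodule.eq_top_of_finrank_eq (le_antisymm this (by omega))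
  refine ⟨⁅a, b⁆, fun x y => ?_⟩
  have hx : x ∈ C2 := hC2top ▸ Submodule.mem_top
  have hy : y ∈ C2 := hC2top ▸ Submodule.mem_top
  rw [hC2def, Submodule.mem_sup] at hx hy
  obtain ⟨p, hp, r, hr, rfl⟩ := hx
  obtain ⟨p', hp', r', hr', rfl⟩ := hy
  rw [Submodule.mem_span_singleton] at hr hr'
  obtain ⟨t, rfl⟩ := hr
  obtain ⟨t', rfl⟩ := hr'
  rw [hC1def, Submodule.mem_sup] at hp hp'
  obtain ⟨c, hc, q, hq, rfl⟩ := hp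
  obtain ⟨c', hc', q', hq', rfl⟩ := hp'
  rw [Submodule.mem_span_singleton] at hq hq'
  obtain ⟨s, rfl⟩ := hq
  obtain ⟨s', rfl⟩ := hq'
  have h1 : ∀ z : g, ⁅c, z⁆ = 0 := hC c hc
  have h2 : ∀ z : g, ⁅z, c'⁆ = 0 := fun z => by rw [← lie_skew, hC c' hc' z, neg_zero]
  have hexp : ⁅c + s • a + t • b, c' + s' • a + t' • b⁆ = (s * t' - t * s') • ⁅a, b⁆ := by
    simp only [lie_add, add_lie, lie_smul, smul_lie, h1, h2, lie_self, smul_zero, zero_add,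
      add_zero]
    rw [← lie_skew a b]
    module
  rw [hexp]
  exact Submodule.smul_mem _ _ (Submodule.mem_span_singleton_self _)

end Aux




/-- Let `(g,B)` be a reduced singular quadratic Lie algebra and `D` a
`B`-symmetric linear map. Then `D` is a centromorphism if and only if `D = μ·id + Z` for
some `μ ∈ ℂ` and some `B`-symmetric `Z` with image in the center and vanishing on
`[g,g]`; moreover such a `D` is invertible if and only if `μ ≠ 0`. -/
theorem centromorphism_characterization
    {g : Type*} [LieRing g] [LieAlgebra ℂ g] [Module.Finite ℂ g]
    (B : LinearMap.BilinForm ℂ g)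
    (hsymm : ∀ x y : g, B x y = B y x)
    (hnondeg : B.Nondegenerate)
    (hinv : ∀ x y z : g, B ⁅x, y⁆ z = B x ⁅y, z⁆)
    (hnonabelian : ¬ ∀ x y : g, ⁅x, y⁆ = 0)
    (hsingular : 1 ≤ dup B)
    (hreduced : ∀ x ∈ LieAlgebra.center ℂ g, ∀ y ∈ LieAlgebra.center ℂ g, B x y = 0)
    [Nontrivial g]
    (D : g →ₗ[ℂ] g)
    (hDsymm : ∀ x y : g, B (D x) y = B x (D y)) :
    ((∀ X Y : g, D ⁅X, Y⁆ = ⁅D X, Y⁆ ∧ D ⁅X, Y⁆ = ⁅X, D Y⁆) ↔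
      ∃ (mu : ℂ) (Z : g →ₗ[ℂ] g),
        (∀ x y : g, B (Z x) y = B x (Z y)) ∧
        (∀ x : g, Z x ∈ LieAlgebra.center ℂ g) ∧
        (∀ x ∈ LieAlgebra.derivedSeries ℂ g 1, Z x = 0) ∧
        D = mu • LinearMap.id + Z) ∧
    (∀ (mu : ℂ) (Z : g →ₗ[ℂ] g),
        (∀ x y : g, B (Z x) y = B x (Z y)) →
        (∀ x : g, Z x ∈ LieAlgebra.center ℂ g) →
        (∀ x ∈ LieAlgebra.derivedSeries ℂ g 1, Z x = 0) →
        D = mu • LinearMap.id + Z →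
        (Function.Bijective D ↔ mu ≠ 0)) := by
  classical
  have hrefl : B.IsRefl := fun x y h => by rw [hsymm]; exact h
  have hcancel : ∀ v w : g, (∀ T, B v T = B w T) → v = w := by
    intro v w h
    have h0 : ∀ T, B (v - w) T = 0 := by
      intro T; rw [map_sub, LinearMap.sub_apply, h T, sub_self]
    exact sub_eq_zero.mp (hnondeg.1 (v - w) h0)
  have hzero : ∀ v : g, (∀ T, B v T = 0) → v = 0 := fun v h => hnondeg.1 v h
  set Wsp : Submodule ℂ g := Submodule.span ℂ {m : g | ∃ a b : g, ⁅a, b⁆ = m} with hWsp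
  have hcent : ∀ x : g, x ∈ LieAlgebra.center ℂ g ↔ ∀ y : g, ⁅x, y⁆ = 0 := by
    intro x
    rw [LieAlgebra.center, LieModule.mem_maxTrivSubmodule]
    constructor
    · intro h y; rw [← lie_skew, h y, neg_zero]
    · intro h y; rw [← lie_skew, h y, neg_zero]
  have horthW : ∀ x : g, x ∈ B.orthogonal Wsp ↔ ∀ y : g, ⁅x, y⁆ = 0 := by
    intro x
    constructor
    · intro h y
      apply hzero
      intro T
      have hb : ⁅y, T⁆ ∈ Wsp := Submodule.subset_span ⟨y, T, rfl⟩
      have := h ⁅y, T⁆ hb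
      rw [hsymm, ← hinv, hsymm, ← hinv, this]
    · intro h n hn
      revert n
      suffices hle : Wsp ≤ LinearMap.ker (B.flip x) by
        intro n hn; exact hle hn
      rw [hWsp, Submodule.span_le]
      rintro m ⟨a, b, rfl⟩
      simp only [SetLike.mem_coe, LinearMap.mem_ker]
      show B ⁅a, b⁆ x = 0
      rw [hinv]
      have : ⁅b, x⁆ = 0 := by rw [← lie_skew, h b, neg_zero]
      rw [this, map_zero]
  have hcentW : ∀ x ∈ LieAlgebra.center ℂ g, x ∈ Wsp := by
    intro z hz
    rw [← LinearMap.BilinForm.orthogonal_orthogonal hnondeg hrefl Wsp]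
    intro k hk
    have hkc : k ∈ LieAlgebra.center ℂ g := (hcent k).mpr ((horthW k).mp hk)
    exact hreduced k hkc z hz
  have hlie_mem : ∀ a b : g, ⁅a, b⁆ ∈ LieAlgebra.derivedSeries ℂ g 1 := by
    intro a b
    rw [mem_derived_iff']
    exact Submodule.subset_span ⟨a, b, rfl⟩
  constructor
  · -- the characterization
    constructor
    · -- forward direction
      intro hD
      -- extract α
      obtain ⟨αs, hαs⟩ : ∃ αs : dupSubmodule B, αs ≠ 0 := by
        have hpos : 0 < finrank ℂ (dupSubmodule B) := hsingular
        have : Nontrivial (dupSubmodule B) := finrank_pos_iff.mp hpos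
        exact exists_ne 0
      set α : Module.Dual ℂ g := (αs : Module.Dual ℂ g) with hαdef
      have hα : ∀ X Y Z T : g,
          α X * B ⁅Y, Z⁆ T - α Y * B ⁅X, Z⁆ T + α Z * B ⁅X, Y⁆ T - α T * B ⁅X, Y⁆ Z = 0 :=
        αs.2
      have hαne : α ≠ 0 := fun h => hαs (Subtype.ext h)
      obtain ⟨u, hu⟩ : ∃ u : g, α u ≠ 0 := by
        by_contra h; push_neg at h
        exact hαne (LinearMap.ext fun x => h x)
      set X₀ : g := (B.toDual hnondeg).symm α with hX₀def
      have hX₀ : ∀ T, B X₀ T = α T := fun T =>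
        LinearMap.BilinForm.apply_toDual_symm_apply α T
      have hX₀ne : X₀ ≠ 0 := by
        intro h
        apply hu
        rw [← hX₀ u, h, map_zero, LinearMap.zero_apply]
      have star : ∀ X Y Z : g,
          α X • ⁅Y, Z⁆ - α Y • ⁅X, Z⁆ + α Z • ⁅X, Y⁆ = (B ⁅X, Y⁆ Z) • X₀ := by
        intro X Y Z
        apply hcancel
        intro T
        have hd := hα X Y Z T
        simp only [map_add, map_sub, map_smul, LinearMap.add_apply, LinearMap.sub_apply,
          LinearMap.smul_apply, smul_eq_mul]
        rw [hX₀ T]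
        linear_combination hd
      -- existence of the eigenvalue
      have hmuex : ∃ mu : ℂ, D X₀ = mu • X₀ := by
        by_contra hne
        push_neg at hne
        -- any X in ker α ∩ ker (α ∘ D) is central
        have hK : ∀ X : g, α X = 0 → α (D X) = 0 → ∀ Y : g, ⁅X, Y⁆ = 0 := by
          intro X h1 h2 Y
          apply hzero
          intro Z
          by_contra hbz
          have e1 := congrArg D (star X Y Z)
          simp only [map_add, map_sub, map_smul] at e1
          rw [(hD Y Z).1, (hD X Z).1, (hD X Y).1] at e1
          have e2 := star (D X) Y Z
          rw [h2] at e2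
          rw [h1] at e1
          simp only [zero_smul, zero_sub, neg_add_eq_iff_eq_add] at e1 e2
          -- e1 : B ⁅X,Y⁆ Z • D X₀ = α Y • ⁅D X, Z⁆ - α Z • ⁅D X, Y⁆  (roughly)
          -- combine
          have e3 : (B ⁅X, Y⁆ Z) • D X₀ = (B ⁅D X, Y⁆ Z) • X₀ := by
            have l1 := star (D X) Y Z
            rw [h2, zero_smul] at l1
            have l2 := congrArg D (star X Y Z)
            simp only [map_add, map_sub, map_smul] at l2
            rw [(hD Y Z).1, (hD X Z).1, (hD X Y).1, h1, zero_smul] at l2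
            calc (B ⁅X, Y⁆ Z) • D X₀ = 0 - α Y • ⁅D X, Z⁆ + α Z • ⁅D X, Y⁆ := l2.symm
            _ = (B ⁅D X, Y⁆ Z) • X₀ := l1
          apply hne ((B ⁅X, Y⁆ Z)⁻¹ * (B ⁅D X, Y⁆ Z))
          rw [mul_smul, ← e3, smul_smul, inv_mul_cancel₀ hbz, one_smul]
        -- dimension count
        set K : Submodule ℂ g := LinearMap.ker α ⊓ LinearMap.ker (α ∘ₗ D) with hKdef
        have hKc : ∀ x ∈ K, ∀ y : g, ⁅x, y⁆ = 0 := by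
          intro x hx y
          rw [hKdef, Submodule.mem_inf] at hx
          exact hK x hx.1 hx.2 y
        have hKdim : finrank ℂ g ≤ finrank ℂ K + 2 := by
          have r1 : finrank ℂ (LinearMap.range α) + finrank ℂ (LinearMap.ker α) = finrank ℂ g :=
            LinearMap.finrank_range_add_finrank_ker α
          have r2 : finrank ℂ (LinearMap.range (α ∘ₗ D))
              + finrank ℂ (LinearMap.ker (α ∘ₗ D)) = finrank ℂ g :=
            LinearMap.finrank_range_add_finrank_ker (α ∘ₗ D)
          have b1 : finrank ℂ (LinearMap.range α) ≤ 1 := by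
            have := Submodule.finrank_le (LinearMap.range α)
            simpa using this
          have b2 : finrank ℂ (LinearMap.range (α ∘ₗ D)) ≤ 1 := by
            have := Submodule.finrank_le (LinearMap.range (α ∘ₗ D))
            simpa using this
          have s1 : finrank ℂ (LinearMap.ker α ⊔ LinearMap.ker (α ∘ₗ D) : Submodule ℂ g)
              + finrank ℂ K
              = finrank ℂ (LinearMap.ker α) + finrank ℂ (LinearMap.ker (α ∘ₗ D)) :=
            Submodule.finrank_sup_add_finrank_inf_eq _ _
          have s2 : finrank ℂ (LinearMap.ker α ⊔ LinearMap.ker (α ∘ₗ D) : Submodule ℂ g)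
              ≤ finrank ℂ g := Submodule.finrank_le _
          omega
        obtain ⟨w, hw⟩ := bracket_in_line' K hKc hKdim
        have hWle : Wsp ≤ Submodule.span ℂ {w} := by
          rw [hWsp, Submodule.span_le]
          rintro m ⟨a, b, rfl⟩
          exact hw a b
        have hWfr : finrank ℂ Wsp ≤ 1 := by
          calc finrank ℂ Wsp ≤ finrank ℂ (Submodule.span ℂ {w}) :=
                Submodule.finrank_mono hWle
          _ ≤ 1 := by
                by_cases hw0 : w = 0
                · rw [hw0, Submodule.span_zero_singleton]
                  rw [finrank_bot]
                  omega
                · rw [finrank_span_singleton hw0]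
        have hofr : finrank ℂ (B.orthogonal Wsp) = finrank ℂ g - finrank ℂ Wsp :=
          LinearMap.BilinForm.finrank_orthogonal hnondeg Wsp
        have hWle2 : finrank ℂ Wsp ≤ finrank ℂ g := Submodule.finrank_le _
        have habel := abelian_of_codim_le_one' (B.orthogonal Wsp)
          (fun x hx y => (horthW x).mp hx y) (by omega)
        exact hnonabelian habel
      obtain ⟨mu, hmu⟩ := hmuex
      have hphi : ∀ X, α (D X) = mu * α X := by
        intro X
        rw [← hX₀ (D X), hsymm, hDsymm, hmu, map_smul, smul_eq_mul, hsymm, hX₀ X]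
      -- normalize
      set X₁ : g := (α u)⁻¹ • u with hX₁def
      have hX₁ : α X₁ = 1 := by
        rw [hX₁def, map_smul, smul_eq_mul, inv_mul_cancel₀ hu]
      have key : ∀ X Y Z : g,
          α X • (⁅D Y, Z⁆ - mu • ⁅Y, Z⁆)
            = (mu * B ⁅X, Y⁆ Z - B ⁅D X, Y⁆ Z) • X₀ := by
        intro X Y Z
        have e1 := congrArg D (star X Y Z)
        simp only [map_add, map_sub, map_smul] at e1
        rw [(hD Y Z).1, (hD X Z).1, (hD X Y).1, hmu] at e1
        have e2 := star (D X) Y Z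
        rw [hphi X] at e2
        linear_combination (norm := module) e1 - e2
      have h1 : ∀ Y : g, ⁅D X₁, Y⁆ = mu • ⁅X₁, Y⁆ := by
        intro Y
        have hk := key X₁ X₁ Y
        rw [hX₁, one_smul] at hk
        have hz1 : ⁅X₁, X₁⁆ = (0 : g) := lie_self X₁
        have hz2 : ⁅D X₁, X₁⁆ = (0 : g) := by
          rw [← (hD X₁ X₁).1, hz1, map_zero]
        rw [hz1, hz2] at hk
        simp only [map_zero, LinearMap.zero_apply, mul_zero, sub_zero, zero_smul] at hk
        exact sub_eq_zero.mp hk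
      have hbr : ∀ Y Z : g, ⁅D Y, Z⁆ = mu • ⁅Y, Z⁆ := by
        intro Y Z
        have hk := key X₁ Y Z
        rw [hX₁, one_smul] at hk
        have hrw : B ⁅D X₁, Y⁆ Z = mu * B ⁅X₁, Y⁆ Z := by
          rw [h1 Y, map_smul, LinearMap.smul_apply, smul_eq_mul]
        rw [hrw, sub_self, zero_smul] at hk
        exact sub_eq_zero.mp hk
      refine ⟨mu, D - mu • LinearMap.id, ?_, ?_, ?_, ?_⟩
      · intro x y
        simp only [LinearMap.sub_apply, LinearMap.smul_apply, LinearMap.id_coe, id_eq,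
          map_sub, map_smul, smul_eq_mul]
        rw [hDsymm x y]
      · intro x
        rw [hcent]
        intro y
        simp only [LinearMap.sub_apply, LinearMap.smul_apply, LinearMap.id_coe, id_eq]
        rw [sub_lie, smul_lie, hbr x y, sub_self]
      · intro x hx
        rw [mem_derived_iff'] at hx
        have hle : Submodule.span ℂ {m : g | ∃ a b : g, ⁅a, b⁆ = m}
            ≤ LinearMap.ker (D - mu • LinearMap.id) := by
          rw [Submodule.span_le]
          rintro m ⟨a, b, rfl⟩
          simp only [SetLike.mem_coe, LinearMap.mem_ker, LinearMap.sub_apply,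
            LinearMap.smul_apply, LinearMap.id_coe, id_eq]
          rw [(hD a b).1, hbr a b, sub_self]
        exact LinearMap.mem_ker.mp (hle hx)
      · ext x
        simp
    · rintro ⟨mu, Zm, hZsymm, hZcent, hZker, rfl⟩
      intro X Y
      have hZb : ∀ a b : g, Zm ⁅a, b⁆ = 0 := fun a b => hZker _ (hlie_mem a b)
      have hZc : ∀ x y : g, ⁅Zm x, y⁆ = 0 := fun x y => (hcent _).mp (hZcent x) y
      constructor
      · simp only [LinearMap.add_apply, LinearMap.smul_apply, LinearMap.id_coe, id_eq]
        rw [hZb X Y, add_zero, add_lie, smul_lie, hZc X Y, add_zero]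
      · simp only [LinearMap.add_apply, LinearMap.smul_apply, LinearMap.id_coe, id_eq]
        have : ⁅X, Zm Y⁆ = 0 := by rw [← lie_skew, hZc Y X, neg_zero]
        rw [hZb X Y, add_zero, lie_add, lie_smul, this, add_zero]
  · intro mu Zm hZsymm hZcent hZker hDeq
    have hZb : ∀ a b : g, Zm ⁅a, b⁆ = 0 := fun a b => hZker _ (hlie_mem a b)
    have hDx : ∀ x, D x = mu • x + Zm x := by
      intro x; rw [hDeq]; simp
    constructor
    · intro hbij hmu0
      obtain ⟨x, y, hxy⟩ : ∃ x y : g, ⁅x, y⁆ ≠ 0 := by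
        push_neg at hnonabelian
        exact hnonabelian
      have hd0 : D ⁅x, y⁆ = 0 := by
        rw [hDx, hZb, hmu0, zero_smul, add_zero]
      exact hxy (hbij.injective (by rw [hd0, map_zero]))
    · intro hmu
      have hZZ : ∀ x, Zm (Zm x) = 0 := by
        intro x
        apply hZker
        rw [mem_derived_iff']
        have := hcentW _ (hZcent x)
        rw [hWsp] at this
        exact this
      constructor
      · intro a b hab
        rw [hDx, hDx] at hab
        have h2 := congrArg Zm hab
        simp only [map_add, map_smul, hZZ, add_zero] at h2
        have h3 : Zm a = Zm b := smul_right_injective g hmu h2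
        rw [h3] at hab
        have h4 : mu • a = mu • b := by
          exact add_right_cancel hab
        exact smul_right_injective g hmu h4
      · intro y
        refine ⟨mu⁻¹ • y - (mu⁻¹ * mu⁻¹) • Zm y, ?_⟩
        rw [hDx]
        simp only [map_sub, map_smul, hZZ, smul_zero, sub_zero]
        match_scalars
        · field_simp
        · field_simp; ring
end
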